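/- arXiv:2102.09100 — 2 statements merged into one kernel-verified Lean document; each statement's English description precedes it below -/
import Mathlib

section
/- There exist absolute constants C₀, c₀ > 0 such that the following holds for every integer Δ ≥ 1, every κ, ε > 0, every n and every p ∈ (n^{−2}, 1) satisfying n p^{Δ+1} ≥ C₀ log n / (ε² log(1/p)). There is a (possibly empty) exceptional set E⋆(κ,ε) ⊆ A_{n,2} with μ_p(E⋆(κ,ε)) ≤ p^{c₀ κ n²} such that every A ∈ A_{n,2} \ E⋆(κ,ε) admits a decomposition A = A_str + A_rand, where A_str = p J_{n,2} + Σ_{i=1}^k α_i T_i for some k ≥ 0, real numbers α_1, …, α_k and cut matrices T_1, …, T_k with Σ_{i=1}^k ‖T_i‖_{Δ,2} ≤ κ ε^{−2} p^{−2} n², and ‖A_rand‖*_{Δ,2} ≤ ε p. -/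
open scoped Classical
open Finset

/-! ### Tensors -/

/-- Order-`r` tensors of size `n`. -/
abbrev Tensor (n r : ℕ) : Type := (Fin r → Fin n) → ℝ

/-- `r`-element subsets of `[n]`. -/
abbrev Idx (n r : ℕ) := {I : Finset (Fin n) // I.card = r}

/-- Evaluation of a tensor at an `r`-element subset, via the monotone enumeration. -/
noncomputable def setEval {n r : ℕ} (Z : Tensor n r) (I : Idx n r) : ℝ :=
  Z fun k => ((I.1.orderIsoOfFin I.2) k).1

/-- Symmetric Boolean tensors supported on injective tuples (adjacency tensors). -/
def adjSet (n r : ℕ) : Set (Tensor n r) :=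
  {A | (∀ (σ : Equiv.Perm (Fin r)) (x : Fin r → Fin n), A (x ∘ σ) = A x) ∧
    (∀ x, A x = 0 ∨ A x = 1) ∧ ∀ x, ¬Function.Injective x → A x = 0}

/-- Symmetric `[0,1]`-valued tensors supported on injective tuples. -/
def wtSet (n r : ℕ) : Set (Tensor n r) :=
  {Q | (∀ (σ : Equiv.Perm (Fin r)) (x : Fin r → Fin n), Q (x ∘ σ) = Q x) ∧
    (∀ x, 0 ≤ Q x ∧ Q x ≤ 1) ∧ ∀ x, ¬Function.Injective x → Q x = 0}

/-- The tensor equal to `1` whenever all coordinates are distinct and `0` otherwise. -/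
noncomputable def Jten (n r : ℕ) : Tensor n r := fun x => if Function.Injective x then 1 else 0

/-! ### Random hypergraphs -/

/-- A selection of hyperedges: a Boolean function on `r`-element subsets of `[n]`. -/
abbrev EdgeSel (n r : ℕ) := Idx n r → Bool

/-- The adjacency tensor of a hyperedge selection. -/
noncomputable def adjOf {n r : ℕ} (ω : EdgeSel n r) : Tensor n r := fun x =>
  if h : Function.Injective x then
    (if ω ⟨Finset.image x Finset.univ, by
        rw [Finset.card_image_of_injective _ h, Finset.card_univ, Fintype.card_fin]⟩
      then 1 else 0)
  else 0

/-- The product-Bernoulli weight of a hyperedge selection, with success probability `Q(I)`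
for the edge `I`. -/
noncomputable def wWeight {n r : ℕ} (Q : Tensor n r) (ω : EdgeSel n r) : ℝ :=
  ∏ I : Idx n r, if ω I then setEval Q I else 1 - setEval Q I

/-- Probability of a set of tensors under the inhomogeneous Erdős–Rényi measure `μ_Q`. -/
noncomputable def muQ (n r : ℕ) (Q : Tensor n r) (E : Set (Tensor n r)) : ℝ :=
  ∑ ω : EdgeSel n r, if adjOf ω ∈ E then wWeight Q ω else 0

/-- Probability of a set of tensors under the Erdős–Rényi measure `μ_p`. -/
noncomputable def muP (n r : ℕ) (p : ℝ) : Set (Tensor n r) → ℝ := muQ n r fun _ => p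

/-- Expectation of a functional of the adjacency tensor under `μ_Q`. -/
noncomputable def expQ (n r : ℕ) (Q : Tensor n r) (f : Tensor n r → ℝ) : ℝ :=
  ∑ ω : EdgeSel n r, wWeight Q ω * f (adjOf ω)

/-- Variance of a functional of the adjacency tensor under `μ_Q`. -/
noncomputable def varQ (n r : ℕ) (Q : Tensor n r) (f : Tensor n r → ℝ) : ℝ :=
  expQ n r Q fun A => (f A - expQ n r Q f) ^ 2

/-! ### Relative entropy -/

/-- Relative entropy of Bernoulli(x) with respect to Bernoulli(p). -/
noncomputable def entBer (p x : ℝ) : ℝ :=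
  x * Real.log (x / p) + (1 - x) * Real.log ((1 - x) / (1 - p))

/-- `I_p(Q)`, the relative entropy of `μ_Q` with respect to `μ_p`. -/
noncomputable def entRate (n r : ℕ) (p : ℝ) (Q : Tensor n r) : ℝ :=
  ∑ I : Idx n r, entBer p (setEval Q I)

/-! ### Weighted bases and test tensors -/

/-- The data of a weighted base over an `r`-element set (identified with `Fin r` via the
bijection `ι`). -/
structure WBase (r : ℕ) where
  B : Finset (Finset (Fin r))
  dstar : ℕ
  d : Finset (Fin r) → ℕ

/-- The axioms of a weighted base: `∅ ∈ B`, members are proper subsets, nonempty members are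
pairwise incomparable, and the weights satisfy `d_b ≤ d_*`, `d_∅ = 0`. -/
def WBase.Valid {r : ℕ} (Bw : WBase r) : Prop :=
  ∅ ∈ Bw.B ∧ (∀ b ∈ Bw.B, b ≠ Finset.univ) ∧
    (∀ b₁ ∈ Bw.B, ∀ b₂ ∈ Bw.B, b₁.Nonempty → b₂.Nonempty → b₁ ≠ b₂ → ¬b₁ ⊆ b₂) ∧
    (∀ b ∈ Bw.B, Bw.d b ≤ Bw.dstar) ∧ Bw.d ∅ = 0

/-- A system of Boolean factors, one for each subset of coordinates. -/
abbrev Factors (n r : ℕ) := (b : Finset (Fin r)) → ({v : Fin r // v ∈ b} → Fin n) → Bool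

/-- The test tensor with factor system `f`: the entrywise product over `b ∈ B` of the Boolean
tensors `t_b ∘ π_b`. -/
noncomputable def testFun {n r : ℕ} (Bw : WBase r) (f : Factors n r) : Tensor n r := fun x =>
  ∏ b ∈ Bw.B, if f b (fun v => x v.1) then (1 : ℝ) else 0

/-- `‖t_b‖₁`, the number of inputs on which the factor `t_b` equals one. -/
noncomputable def facNorm1 {n r : ℕ} (f : Factors n r) (b : Finset (Fin r)) : ℝ :=
  ((Finset.univ.filter fun y : {v : Fin r // v ∈ b} → Fin n => f b y = true).card : ℝ)

/-- The norm `‖T‖_Bw` of a test tensor, presented by its factor system. -/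
noncomputable def testNorm {n r : ℕ} (p : ℝ) (Bw : WBase r) (f : Factors n r) : ℝ :=
  max (∑ x : Fin r → Fin n, |testFun Bw f x|)
    (⨆ b ∈ Bw.B, (n : ℝ) ^ (r - b.card) * p ^ (Bw.dstar - Bw.d b) * facNorm1 f b)

/-- The dual seminorm `‖Z‖*_Bw = max_{T ∈ T_Bw} |⟨Z,T⟩| / ‖T‖_Bw`. -/
noncomputable def dualNorm {r : ℕ} (n : ℕ) (p : ℝ) (Bw : WBase r) (Z : Tensor n r) : ℝ :=
  ⨆ f : Factors n r,
    if ∃ x, testFun Bw f x ≠ 0 then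
      |∑ x : Fin r → Fin n, Z x * testFun Bw f x| / testNorm p Bw f
    else 0

/-- `W_{n,p}(Bw) = min_{b ∈ B} n^{r-|b|} p^{d_* - d_b + 2}`. -/
noncomputable def Wnp (n : ℕ) {r : ℕ} (p : ℝ) (Bw : WBase r) : ℝ :=
  sInf ((fun b => (n : ℝ) ^ (r - b.card) * p ^ (Bw.dstar - Bw.d b + 2)) '' ↑Bw.B)

/-! ### Families of weighted bases -/

/-- `‖Z‖*_BB = max_e ‖Z‖*_{Bw(e)}` for a finite family of weighted bases. -/
noncomputable def famDual {r m : ℕ} (n : ℕ) (p : ℝ) (BB : Fin m → WBase r)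
    (Z : Tensor n r) : ℝ :=
  ⨆ i, dualNorm n p (BB i) Z

/-- `W_{n,p}(BB) = min_e W_{n,p}(Bw(e))` for a finite family of weighted bases. -/
noncomputable def famW {r m : ℕ} (n : ℕ) (p : ℝ) (BB : Fin m → WBase r) : ℝ :=
  ⨅ i, Wnp n p (BB i)

/-- `U_BB(Q, δ)`, the `δ`-neighborhood of `Q` in `A_{n,r}` under `‖·‖*_BB`. -/
def nbhdFam {r m n : ℕ} (p δ : ℝ) (BB : Fin m → WBase r) (Q : Tensor n r) :
    Set (Tensor n r) :=
  {A | A ∈ adjSet n r ∧ famDual n p BB (fun x => Q x - A x) ≤ δ}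

/-- The outer approximation `(E)_{BB,δ} = ⋃_{A ∈ E} conv(U_BB(A,δ))`. -/
def outerFam {r m n : ℕ} (p δ : ℝ) (BB : Fin m → WBase r) (E : Set (Tensor n r)) :
    Set (Tensor n r) :=
  ⋃ A ∈ E, convexHull ℝ (nbhdFam p δ BB A)

/-- The inner approximation `(E)°_{BB,δ} = {Q ∈ Q_{n,r} : U_BB(Q,δ) ⊆ E}`. -/
def innerFam {r m n : ℕ} (p δ : ℝ) (BB : Fin m → WBase r) (E : Set (Tensor n r)) :
    Set (Tensor n r) :=
  {Q | Q ∈ wtSet n r ∧ nbhdFam p δ BB Q ⊆ E}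

/-! ### Hypergraphs -/

/-- An `r`-uniform hypergraph: a finite vertex type and a finite set of `r`-element edges. -/
structure RGraph (r : ℕ) where
  V : Type
  [fV : Fintype V]
  [dV : DecidableEq V]
  E : Finset (Finset V)
  card_edge : ∀ e ∈ E, e.card = r

attribute [instance] RGraph.fV RGraph.dV

/-- Evaluation `S(φ(e))` of a tensor at the image of an edge (zero if `φ` is not injective
on the edge). -/
noncomputable def edgeEval {n r : ℕ} {V : Type} [DecidableEq V] (Z : Tensor n r)
    (φ : V → Fin n) (e : Finset V) : ℝ :=
  if h : (e.image φ).card = r then setEval Z ⟨e.image φ, h⟩ else 0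

/-- Homomorphism count of the subgraph of `H` with edge set `E₀` (on the full vertex set). -/
noncomputable def homE {n r : ℕ} (H : RGraph r) (E₀ : Finset (Finset H.V))
    (Q : Tensor n r) : ℝ :=
  ∑ φ : H.V → Fin n, ∏ e ∈ E₀, edgeEval Q φ e

/-- `hom(H, Q)`. -/
noncomputable def homR {n r : ℕ} (H : RGraph r) (Q : Tensor n r) : ℝ := homE H H.E Q

/-- `t(H, Q) = hom(H,Q) / n^{v(H)}`. -/
noncomputable def tR {n r : ℕ} (H : RGraph r) (Q : Tensor n r) : ℝ :=
  homR H Q / (n : ℝ) ^ Fintype.card H.V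

/-- `t_p(H, Q) = hom(H,Q) / (n^{v(H)} p^{e(H)})`. -/
noncomputable def tp {n r : ℕ} (H : RGraph r) (p : ℝ) (Q : Tensor n r) : ℝ :=
  homR H Q / ((n : ℝ) ^ Fintype.card H.V * p ^ H.E.card)

/-- Multilinear homomorphism count for a collection of tensors indexed by the edges. -/
noncomputable def homColl {n r : ℕ} (H : RGraph r) (S : {e // e ∈ H.E} → Tensor n r) : ℝ :=
  ∑ φ : H.V → Fin n, ∏ e : {e // e ∈ H.E}, edgeEval (S e) φ e.1

/-- Normalized multilinear homomorphism count. -/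
noncomputable def tpColl {n r : ℕ} (H : RGraph r) (p : ℝ)
    (S : {e // e ∈ H.E} → Tensor n r) : ℝ :=
  homColl H S / ((n : ℝ) ^ Fintype.card H.V * p ^ H.E.card)

/-- Signed multilinear homomorphism count: positive edges contribute `S^e(φ(e))`,
negative edges contribute `1 - S^e(φ(e))`. -/
noncomputable def shomColl {n r : ℕ} (H : RGraph r) (sgn : Finset H.V → Bool)
    (S : {e // e ∈ H.E} → Tensor n r) : ℝ :=
  ∑ φ : H.V → Fin n, ∏ e : {e // e ∈ H.E},
    if sgn e.1 then edgeEval (S e) φ e.1 else 1 - edgeEval (S e) φ e.1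

/-- Signed homomorphism count of the subgraph with edge set `E₀`, with a single tensor. -/
noncomputable def shomE {n r : ℕ} (H : RGraph r) (sgn : Finset H.V → Bool)
    (E₀ : Finset (Finset H.V)) (Q : Tensor n r) : ℝ :=
  ∑ φ : H.V → Fin n, ∏ e ∈ E₀, (if sgn e then edgeEval Q φ e else 1 - edgeEval Q φ e)

/-! ### Degrees -/

/-- Degree of a vertex. -/
def vdeg {r : ℕ} (H : RGraph r) (v : H.V) : ℕ := (H.E.filter fun e => v ∈ e).card

/-- Maximum degree `Δ(H)`. -/
def maxDeg {r : ℕ} (H : RGraph r) : ℕ := Finset.univ.sup fun v => vdeg H v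

/-- Maximum degree with respect to a subset of the edges. -/
def maxDegOn {r : ℕ} (H : RGraph r) (E₀ : Finset (Finset H.V)) : ℕ :=
  Finset.univ.sup fun v : H.V => (E₀.filter fun e => v ∈ e).card

/-- `d^H(U)`: the number of edges `e' ≠ U` meeting `U`. -/
def edeg {V : Type} [DecidableEq V] (E₀ : Finset (Finset V)) (U : Finset V) : ℕ :=
  (E₀.filter fun e' => e' ≠ U ∧ (e' ∩ U).Nonempty).card

/-- `d^H_b(U)`: the number of edges `e'` with `∅ ≠ e' ∩ U ⊆ b`. -/
def edegSub {V : Type} [DecidableEq V] (E₀ : Finset (Finset V)) (b U : Finset V) : ℕ :=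
  (E₀.filter fun e' => (e' ∩ U).Nonempty ∧ e' ∩ U ⊆ b).card

/-! ### Base systems over a hypergraph -/

/-- The data of a base system over `H`: for each edge, an identification of `Fin r` with the
edge and a base of subsets of `Fin r`. -/
structure BaseSystem {r : ℕ} (H : RGraph r) where
  emb : (e : {e // e ∈ H.E}) → Fin r → H.V
  emb_inj : ∀ e, Function.Injective (emb e)
  emb_mem : ∀ e (k : Fin r), emb e k ∈ e.1
  B : (e : {e // e ∈ H.E}) → Finset (Finset (Fin r))

/-- The image in the vertex set of a subset of coordinates. -/
def BaseSystem.vimage {r : ℕ} {H : RGraph r} (S : BaseSystem H) (e : {e // e ∈ H.E})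
    (b : Finset (Fin r)) : Finset H.V :=
  b.image (S.emb e)

/-- Validity plus `H`-domination of a base system: each base satisfies the base axioms and
every overlap `e ∩ e'` is contained in (the image of) some member of the base. -/
def BaseSystem.Good {r : ℕ} {H : RGraph r} (S : BaseSystem H) : Prop :=
  ∀ e : {e // e ∈ H.E},
    ∅ ∈ S.B e ∧ (∀ b ∈ S.B e, b ≠ Finset.univ) ∧
      (∀ b₁ ∈ S.B e, ∀ b₂ ∈ S.B e, b₁.Nonempty → b₂.Nonempty → b₁ ≠ b₂ → ¬b₁ ⊆ b₂) ∧
      (∀ e' ∈ H.E, e' ≠ e.1 → ∃ b ∈ S.B e, e' ∩ e.1 ⊆ S.vimage e b)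

/-- The weighted base at an edge `e`, with weights given by the degree counts of `E₀`
(`d_* = d^{E₀}(e)`, `d_b = d^{E₀}_b(e)`). -/
def BaseSystem.wb {r : ℕ} {H : RGraph r} (S : BaseSystem H) (E₀ : Finset (Finset H.V))
    (e : {e // e ∈ H.E}) : WBase r :=
  { B := S.B e
    dstar := edeg E₀ e.1
    d := fun b => edegSub E₀ (S.vimage e b) e.1 }

/-- The seminorm `‖Z‖*_BB = max_{e ∈ E(H)} ‖Z‖*_{Bw(e)}` of a base system with weights
from `E₀`. -/
noncomputable def bsDualNorm {n r : ℕ} {H : RGraph r} (S : BaseSystem H)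
    (E₀ : Finset (Finset H.V)) (p : ℝ) (Z : Tensor n r) : ℝ :=
  ⨆ e : {e // e ∈ H.E}, dualNorm n p (S.wb E₀ e) Z

/-- `W_{n,p}(BB) = min_{e ∈ E(H)} W_{n,p}(Bw(e))` for a base system. -/
noncomputable def bsW {r : ℕ} {H : RGraph r} (S : BaseSystem H)
    (E₀ : Finset (Finset H.V)) (n : ℕ) (p : ℝ) : ℝ :=
  ⨅ e : {e // e ∈ H.E}, Wnp n p (S.wb E₀ e)

/-! ### Variational problems -/

/-- The upper-tail variational problem `Φ_{n,p}(H, u)`. -/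
noncomputable def Phi {r : ℕ} (H : RGraph r) (n : ℕ) (p u : ℝ) : ℝ :=
  sInf {x : ℝ | ∃ Q ∈ wtSet n r, tR H Q ≥ (1 + u) * p ^ H.E.card ∧ x = entRate n r p Q}

/-- The lower-tail variational problem `Ψ_{n,p}(H, u)`. -/
noncomputable def Psi {r : ℕ} (H : RGraph r) (n : ℕ) (p u : ℝ) : ℝ :=
  sInf {x : ℝ | ∃ Q ∈ wtSet n r, tR H Q ≤ (1 - u) * p ^ H.E.card ∧ x = entRate n r p Q}

/-! ### The parameter Δ'(H) -/

/-- A dominating base for the edge `e` of `H`, as a collection of vertex subsets. -/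
def IsDomBase {r : ℕ} (H : RGraph r) (e : Finset H.V) (B : Finset (Finset H.V)) : Prop :=
  ∅ ∈ B ∧ (∀ b ∈ B, b ⊆ e ∧ b ≠ e) ∧
    (∀ b₁ ∈ B, ∀ b₂ ∈ B, b₁.Nonempty → b₂.Nonempty → b₁ ≠ b₂ → ¬b₁ ⊆ b₂) ∧
    ∀ e' ∈ H.E, e' ≠ e → ∃ b ∈ B, e' ∩ e ⊆ b

/-- `d'_b(e)`. -/
noncomputable def dpb {r : ℕ} (H : RGraph r) (e b : Finset H.V) : ℝ :=
  if b = ∅ then ((edeg H.E e : ℝ) + 2) / (r : ℝ)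
  else ((edeg H.E (e \ b) : ℝ) + 1) / ((e \ b).card : ℝ)

/-- `d'_B(e) = max_{b ∈ B} d'_b(e)`. -/
noncomputable def dpBase {r : ℕ} (H : RGraph r) (e : Finset H.V)
    (B : Finset (Finset H.V)) : ℝ :=
  sSup (dpb H e '' ↑B)

/-- `d'(e)`: minimum over dominating bases. -/
noncomputable def dprime {r : ℕ} (H : RGraph r) (e : Finset H.V) : ℝ :=
  sInf {x : ℝ | ∃ B, IsDomBase H e B ∧ x = dpBase H e B}

/-- `Δ'(H) = max_{e ∈ E(H)} d'(e)`. -/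
noncomputable def DeltaPrime {r : ℕ} (H : RGraph r) : ℝ :=
  sSup (dprime H '' ↑H.E)

/-! ### Cut matrices (the case r = 2) -/

/-- The cut matrix `1_I ⊗ 1_J`, as a 2-tensor. -/
noncomputable def cut2 {n : ℕ} (I J : Finset (Fin n)) : Tensor n 2 := fun x =>
  if x 0 ∈ I ∧ x 1 ∈ J then 1 else 0

/-- `‖1_I ⊗ 1_J‖_{Δ,2} = (|I| ∨ n₀)(|J| ∨ n₀)` with `n₀ = n p^{Δ-1}`. -/
noncomputable def cutNormIJ (n : ℕ) (p : ℝ) (Δ : ℕ) (I J : Finset (Fin n)) : ℝ :=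
  max (I.card : ℝ) ((n : ℝ) * p ^ (Δ - 1)) * max (J.card : ℝ) ((n : ℝ) * p ^ (Δ - 1))

/-- The dual norm `‖M‖*_{Δ,2}`. -/
noncomputable def cutDual (n : ℕ) (p : ℝ) (Δ : ℕ) (M : Tensor n 2) : ℝ :=
  ⨆ I : Finset (Fin n), ⨆ J : Finset (Fin n),
    |∑ x : Fin 2 → Fin n, M x * cut2 I J x| / cutNormIJ n p Δ I J

/-! ### The class S(G) -/

/-- `G' ∈ S(G)`: there is a surjection from `V(G)` onto `V(G')`, injective on each edge,
mapping the edge set of `G` onto that of `G'`. -/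
def InSclass {r : ℕ} (G G' : RGraph r) : Prop :=
  ∃ Ψ : G.V → G'.V, Function.Surjective Ψ ∧ (∀ e ∈ G.E, Set.InjOn Ψ ↑e) ∧
    G'.E = G.E.image fun e => e.image Ψ

/-- The maximum degree of the positive part `H₊` of a signed hypergraph. -/
def posDeg {r : ℕ} (H : RGraph r) (sgn : Finset H.V → Bool) : ℕ :=
  maxDegOn H (H.E.filter fun e => sgn e = true)

namespace SRG

/-! ### Matrices, inner product, cut matrices -/

abbrev Mat (n : ℕ) := Fin n → Fin n → ℝ

abbrev Cutp (n : ℕ) := Finset (Fin n) × Finset (Fin n) × Bool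

noncomputable def ip {n : ℕ} (M N : Mat n) : ℝ := ∑ i, ∑ j, M i j * N i j

noncomputable def Tm {n : ℕ} (I J : Finset (Fin n)) : Mat n :=
  fun i j => if i ∈ I ∧ j ∈ J then (1 : ℝ) else 0

noncomputable def sg (b : Bool) : ℝ := if b then 1 else -1

noncomputable def Tc {n : ℕ} (c : Cutp n) : Mat n := sg c.2.2 • Tm c.1 c.2.1

def adm {n : ℕ} (c : Cutp n) : Prop :=
  c.1.Nonempty ∧ c.2.1.Nonempty ∧ Disjoint c.1 c.2.1

noncomputable def nrm (n : ℕ) (p : ℝ) (Δ : ℕ) (c : Cutp n) : ℝ := cutNormIJ n p Δ c.1 c.2.1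

noncomputable def Wl (n : ℕ) (p : ℝ) (Δ : ℕ) (ℓ : List (Cutp n)) : ℝ :=
  (ℓ.map (nrm n p Δ)).sum

noncomputable def Bm {n : ℕ} (ℓ : List (Cutp n)) : Mat n := (ℓ.map Tc).sum

def certL (n : ℕ) (p : ℝ) (Δ : ℕ) (τ : ℝ) : Mat n → List (Cutp n) → Prop
  | _, [] => True
  | X, c :: ℓ => adm c ∧ τ * nrm n p Δ c < ip X (Tc c) ∧
      certL n p Δ τ (X - (τ/2) • Tc c) ℓ

lemma Wl_nil {n : ℕ} (p : ℝ) (Δ : ℕ) : Wl n p Δ [] = 0 := rfl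

lemma Wl_cons {n : ℕ} (p : ℝ) (Δ : ℕ) (c : Cutp n) (ℓ : List (Cutp n)) :
    Wl n p Δ (c :: ℓ) = nrm n p Δ c + Wl n p Δ ℓ := by simp [Wl]

lemma Bm_nil {n : ℕ} : Bm ([] : List (Cutp n)) = 0 := rfl

lemma Bm_cons {n : ℕ} (c : Cutp n) (ℓ : List (Cutp n)) : Bm (c :: ℓ) = Tc c + Bm ℓ := by
  simp [Bm]

lemma ip_comm {n} (M N : Mat n) : ip M N = ip N M := by
  unfold ip; exact Finset.sum_congr rfl fun i _ => Finset.sum_congr rfl fun j _ => mul_comm _ _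

lemma ip_add_right {n} (M N P : Mat n) : ip M (N + P) = ip M N + ip M P := by
  unfold ip
  rw [← Finset.sum_add_distrib]
  refine Finset.sum_congr rfl fun i _ => ?_
  rw [← Finset.sum_add_distrib]
  refine Finset.sum_congr rfl fun j _ => ?_
  simp [Pi.add_apply]; ring

lemma ip_smul_right {n} (r : ℝ) (M N : Mat n) : ip M (r • N) = r * ip M N := by
  unfold ip
  rw [Finset.mul_sum]
  refine Finset.sum_congr rfl fun i _ => ?_
  rw [Finset.mul_sum]
  refine Finset.sum_congr rfl fun j _ => ?_
  simp [Pi.smul_apply, smul_eq_mul]; ring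

lemma ip_add_left {n} (M N P : Mat n) : ip (M + N) P = ip M P + ip N P := by
  rw [ip_comm, ip_add_right, ip_comm P M, ip_comm P N]

lemma ip_smul_left {n} (r : ℝ) (M N : Mat n) : ip (r • M) N = r * ip M N := by
  rw [ip_comm, ip_smul_right, ip_comm]

lemma ip_sub_right {n} (M N P : Mat n) : ip M (N - P) = ip M N - ip M P := by
  have h : N - P = N + (-1 : ℝ) • P := by
    funext i j; simp [Pi.sub_apply, Pi.add_apply, Pi.smul_apply]; ring
  rw [h, ip_add_right, ip_smul_right]; ring

lemma ip_sub_left {n} (M N P : Mat n) : ip (M - N) P = ip M P - ip N P := by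
  rw [ip_comm, ip_sub_right, ip_comm P M, ip_comm P N]

lemma ip_self_nonneg {n} (M : Mat n) : 0 ≤ ip M M :=
  Finset.sum_nonneg fun i _ => Finset.sum_nonneg fun j _ => mul_self_nonneg _

lemma abs_ip_le {n} (M N : Mat n) : |ip M N| ≤ ∑ i, ∑ j, |M i j| * |N i j| := by
  refine (Finset.abs_sum_le_sum_abs _ _).trans ?_
  refine Finset.sum_le_sum fun i _ => ?_
  refine (Finset.abs_sum_le_sum_abs _ _).trans ?_
  exact Finset.sum_le_sum fun j _ => by rw [abs_mul]

lemma ip_Tm {n} (M : Mat n) (I J : Finset (Fin n)) :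
    ip M (Tm I J) = ∑ i ∈ I, ∑ j ∈ J, M i j := by
  unfold ip Tm
  have h1 : ∀ i : Fin n, (∑ j, M i j * (if i ∈ I ∧ j ∈ J then (1:ℝ) else 0))
      = if i ∈ I then ∑ j ∈ J, M i j else 0 := by
    intro i
    by_cases hi : i ∈ I
    · simp only [hi, true_and, mul_ite, mul_one, mul_zero, if_true]
      rw [Finset.sum_ite_mem, Finset.univ_inter]
    · simp [hi]
  simp only [h1]
  rw [Finset.sum_ite_mem, Finset.univ_inter]

lemma ipTmTm {n} (I J : Finset (Fin n)) :
    ip (Tm I J) (Tm I J) = (I.card : ℝ) * J.card := by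
  rw [ip_Tm]
  have h : ∀ i ∈ I, ∀ j ∈ J, Tm I J i j = 1 := by
    intro i hi j hj; simp [Tm, hi, hj]
  calc (∑ i ∈ I, ∑ j ∈ J, Tm I J i j) = ∑ _i ∈ I, ∑ _j ∈ J, (1:ℝ) := by
        refine Finset.sum_congr rfl fun i hi => Finset.sum_congr rfl fun j hj => h i hi j hj
    _ = (I.card : ℝ) * J.card := by simp [mul_comm]

lemma nrm_nonneg {n : ℕ} {p : ℝ} {Δ : ℕ} (c : Cutp n) : 0 ≤ nrm n p Δ c := by
  unfold nrm cutNormIJ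
  have h1 : (0:ℝ) ≤ max (c.1.card : ℝ) ((n : ℝ) * p ^ (Δ - 1)) :=
    le_trans (Nat.cast_nonneg _) (le_max_left _ _)
  have h2 : (0:ℝ) ≤ max (c.2.1.card : ℝ) ((n : ℝ) * p ^ (Δ - 1)) :=
    le_trans (Nat.cast_nonneg _) (le_max_left _ _)
  exact mul_nonneg h1 h2

lemma ipTcTc_le_nrm {n : ℕ} {p : ℝ} {Δ : ℕ} (c : Cutp n) :
    ip (Tc c) (Tc c) ≤ nrm n p Δ c := by
  unfold Tc
  rw [ip_smul_left, ip_smul_right, ipTmTm]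
  have hsg : sg c.2.2 * (sg c.2.2 * ((c.1.card:ℝ) * c.2.1.card)) = (c.1.card:ℝ) * c.2.1.card := by
    unfold sg; cases c.2.2 <;> simp
  rw [hsg]
  unfold nrm cutNormIJ
  exact mul_le_mul (le_max_left _ _) (le_max_left _ _) (Nat.cast_nonneg _)
    (le_trans (Nat.cast_nonneg _) (le_max_left _ _))

lemma one_le_nrm {n : ℕ} {p : ℝ} {Δ : ℕ} {c : Cutp n} (h : adm c) : 1 ≤ nrm n p Δ c := by
  unfold nrm cutNormIJ
  have h1 : (1:ℝ) ≤ max (c.1.card : ℝ) ((n : ℝ) * p ^ (Δ - 1)) := by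
    refine le_trans ?_ (le_max_left _ _)
    exact_mod_cast Nat.one_le_iff_ne_zero.mpr (Finset.card_ne_zero_of_mem h.1.choose_spec)
  have h2 : (1:ℝ) ≤ max (c.2.1.card : ℝ) ((n : ℝ) * p ^ (Δ - 1)) := by
    refine le_trans ?_ (le_max_left _ _)
    exact_mod_cast Nat.one_le_iff_ne_zero.mpr (Finset.card_ne_zero_of_mem h.2.1.choose_spec)
  nlinarith

lemma certL_adm {n : ℕ} {p : ℝ} {Δ : ℕ} {τ : ℝ} :
    ∀ (ℓ : List (Cutp n)) (X : Mat n), certL n p Δ τ X ℓ → ∀ c ∈ ℓ, adm c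
  | [], _, _, c, hc => absurd hc List.not_mem_nil
  | c' :: ℓ, X, h, c, hc => by
      rcases List.mem_cons.mp hc with rfl | hc'
      · exact h.1
      · exact certL_adm ℓ _ h.2.2 c hc'

lemma certL_energy {n : ℕ} {p : ℝ} {Δ : ℕ} {τ : ℝ} (hτ : 0 < τ) :
    ∀ (ℓ : List (Cutp n)) (X : Mat n), certL n p Δ τ X ℓ →
      3/4 * τ^2 * Wl n p Δ ℓ ≤ ip X X
  | [], X, _ => by
      rw [Wl_nil]; simpa using ip_self_nonneg X
  | c :: ℓ, X, h => by
      obtain ⟨ha, hc, ht⟩ := h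
      have hrec := certL_energy hτ ℓ _ ht
      have hTT : ip (Tc c) (Tc c) ≤ nrm n p Δ c := ipTcTc_le_nrm c
      have hTT0 : 0 ≤ ip (Tc c) (Tc c) := ip_self_nonneg _
      have hexp : ip (X - (τ/2) • Tc c) (X - (τ/2) • Tc c)
          = ip X X - τ * ip X (Tc c) + (τ/2)^2 * ip (Tc c) (Tc c) := by
        simp only [ip_sub_left, ip_sub_right, ip_smul_left, ip_smul_right, ip_comm (Tc c) X]
        ring
      rw [Wl_cons]
      nlinarith [hrec, ip_self_nonneg (X - (τ/2) • Tc c),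
        mul_lt_mul_of_pos_left hc hτ,
        mul_le_mul_of_nonneg_left hTT (by positivity : (0:ℝ) ≤ τ^2/4)]

lemma certL_aggregate {n : ℕ} {p : ℝ} {Δ : ℕ} {τ : ℝ} (hτ : 0 < τ) :
    ∀ (ℓ : List (Cutp n)) (X : Mat n), certL n p Δ τ X ℓ →
      3*τ/4 * Wl n p Δ ℓ + τ/4 * ip (Bm ℓ) (Bm ℓ) ≤ ip X (Bm ℓ)
  | [], X, _ => by
      rw [Wl_nil, Bm_nil]
      have : ip X (0 : Mat n) = 0 := by unfold ip; simp
      have h0 : ip (0 : Mat n) (0 : Mat n) = 0 := by unfold ip; simp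
      rw [this, h0]; ring_nf; exact le_refl 0
  | c :: ℓ, X, h => by
      obtain ⟨ha, hc, ht⟩ := h
      have hrec := certL_aggregate hτ ℓ _ ht
      have hTT : ip (Tc c) (Tc c) ≤ nrm n p Δ c := ipTcTc_le_nrm c
      rw [Wl_cons, Bm_cons]
      have h1 : ip X (Tc c + Bm ℓ) = ip X (Tc c) + ip X (Bm ℓ) := ip_add_right _ _ _
      have h2 : ip X (Bm ℓ) = ip (X - (τ/2) • Tc c) (Bm ℓ) + (τ/2) * ip (Tc c) (Bm ℓ) := by
        rw [ip_sub_left, ip_smul_left]; ring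
      have h3 : ip (Tc c + Bm ℓ) (Tc c + Bm ℓ)
          = ip (Tc c) (Tc c) + 2 * ip (Tc c) (Bm ℓ) + ip (Bm ℓ) (Bm ℓ) := by
        rw [ip_add_left, ip_add_right, ip_add_right, ip_comm (Bm ℓ) (Tc c)]; ring
      nlinarith [hrec, hc]

lemma certL_append {n : ℕ} {p : ℝ} {Δ : ℕ} {τ : ℝ} :
    ∀ (ℓ : List (Cutp n)) (X : Mat n) (c : Cutp n), certL n p Δ τ X ℓ →
      adm c → τ * nrm n p Δ c < ip (X - (τ/2) • Bm ℓ) (Tc c) →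
      certL n p Δ τ X (ℓ ++ [c])
  | [], X, c, _, ha, hcert => by
      refine ⟨ha, ?_, trivial⟩
      rwa [Bm_nil, smul_zero, sub_zero] at hcert
  | c' :: ℓ, X, c, h, ha, hcert => by
      obtain ⟨ha', hc', ht'⟩ := h
      refine ⟨ha', hc', certL_append ℓ _ c ht' ha ?_⟩
      have heq : X - (τ/2) • Bm (c' :: ℓ) = (X - (τ/2) • Tc c') - (τ/2) • Bm ℓ := by
        rw [Bm_cons, smul_add]; abel
      rwa [heq] at hcert

lemma length_le_Wl {n : ℕ} (p : ℝ) (Δ : ℕ) :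
    ∀ (ℓ : List (Cutp n)), (∀ c ∈ ℓ, adm c) → (ℓ.length : ℝ) ≤ Wl n p Δ ℓ
  | [], _ => by simp [Wl_nil]
  | c :: ℓ, h => by
      have hrec := length_le_Wl p Δ ℓ (fun c' hc' => h c' (List.mem_cons_of_mem _ hc'))
      have h1 : (1:ℝ) ≤ nrm n p Δ c := one_le_nrm (h c List.mem_cons_self)
      rw [Wl_cons, List.length_cons]
      push_cast
      linarith

lemma Wl_nonneg {n : ℕ} {p : ℝ} {Δ : ℕ} (ℓ : List (Cutp n)) : 0 ≤ Wl n p Δ ℓ := by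
  induction ℓ with
  | nil => simp [Wl_nil]
  | cons c ℓ ih => rw [Wl_cons]; have := nrm_nonneg (n := n) (p := p) (Δ := Δ) c; linarith

end SRG
namespace SRG

/-! ### Tensor/matrix bridging and edge sums -/

lemma fin2_eta {n : ℕ} (x : Fin 2 → Fin n) : ![x 0, x 1] = x := by
  funext i
  fin_cases i <;> simp

lemma inj_fin2 {n : ℕ} (x : Fin 2 → Fin n) : Function.Injective x ↔ x 0 ≠ x 1 := by
  constructor
  · intro h he
    exact (by decide : ¬((0 : Fin 2) = 1)) (h he)
  · intro h a b hab
    fin_cases a <;> fin_cases b <;> simp_all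

lemma image_fin2 {n : ℕ} (x : Fin 2 → Fin n) :
    Finset.image x Finset.univ = {x 0, x 1} := by
  ext a
  simp [Fin.exists_fin_two, eq_comm]

lemma sum_fin2 {n : ℕ} (f : (Fin 2 → Fin n) → ℝ) :
    ∑ x : Fin 2 → Fin n, f x = ∑ i : Fin n, ∑ j : Fin n, f ![i, j] := by
  have hps : ∑ q : Fin n × Fin n, f ![q.1, q.2] = ∑ i : Fin n, ∑ j : Fin n, f ![i, j] :=
    Fintype.sum_prod_type (fun q => f ![q.1, q.2])
  rw [← hps]
  exact Fintype.sum_equiv (finTwoArrowEquiv (Fin n)) f (fun q => f ![q.1, q.2])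
    (fun x => by
      show f x = f ![x 0, x 1]
      rw [fin2_eta])

lemma Jten_val {n : ℕ} (i j : Fin n) : Jten n 2 ![i, j] = if i = j then 0 else 1 := by
  unfold Jten
  by_cases h : i = j
  · rw [if_pos h, if_neg]
    rw [inj_fin2]; simp [h]
  · rw [if_neg h, if_pos]
    rw [inj_fin2]; simp [h]

lemma cut2_val {n : ℕ} (I J : Finset (Fin n)) (i j : Fin n) :
    cut2 I J ![i, j] = Tm I J i j := by
  unfold cut2 Tm; simp

lemma ite_omega_eq {n : ℕ} (ω : EdgeSel n 2) {s t : Finset (Fin n)} (hs : s.card = 2)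
    (ht : t.card = 2) (hst : s = t) :
    (if ω ⟨s, hs⟩ then (1:ℝ) else 0) = if ω ⟨t, ht⟩ then 1 else 0 := by
  subst hst; rfl

lemma adjOf_val {n : ℕ} (ω : EdgeSel n 2) (i j : Fin n) (hij : i ≠ j) (e : Idx n 2)
    (he : e.1 = {i, j}) : adjOf ω ![i, j] = if ω e then 1 else 0 := by
  have hinj : Function.Injective ![i, j] := by
    rw [inj_fin2]; simpa using hij
  unfold adjOf
  rw [dif_pos hinj]
  exact ite_omega_eq ω _ e.2 (by rw [image_fin2]; simpa using he.symm)

noncomputable def XM (n : ℕ) (p : ℝ) (A : Tensor n 2) : Mat n :=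
  fun i j => A ![i, j] - p * (if i = j then 0 else 1)

lemma XM_diag {n : ℕ} (p : ℝ) (A : Tensor n 2) (hA : A ∈ adjSet n 2) (i : Fin n) :
    XM n p A i i = 0 := by
  unfold XM
  rw [if_pos rfl, mul_zero, sub_zero]
  apply hA.2.2
  rw [inj_fin2]; simp

lemma XM_abs_le {n : ℕ} {p : ℝ} (hp0 : 0 ≤ p) (hp1 : p ≤ 1) (A : Tensor n 2)
    (hA : A ∈ adjSet n 2) (i j : Fin n) : |XM n p A i j| ≤ 1 := by
  by_cases h : i = j
  · subst h; rw [XM_diag p A hA i]; simp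
  · unfold XM
    rw [if_neg h, mul_one]
    rcases hA.2.1 ![i, j] with h0 | h1
    · rw [h0]; rw [abs_of_nonpos (by linarith)]; linarith
    · rw [h1]; rw [abs_of_nonneg (by linarith)]; linarith

lemma adjOf_mem_adjSet {n : ℕ} (ω : EdgeSel n 2) : adjOf ω ∈ adjSet n 2 := by
  refine ⟨?_, ?_, ?_⟩
  · intro σ x
    unfold adjOf
    by_cases h : Function.Injective x
    · have h2 : Function.Injective (x ∘ σ) := h.comp σ.injective
      have himg : Finset.image (x ∘ σ) Finset.univ = Finset.image x Finset.univ := by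
        rw [← Finset.image_image, Finset.image_univ_equiv]
      rw [dif_pos h2, dif_pos h]
      exact ite_omega_eq ω _ _ himg
    · have h2 : ¬Function.Injective (x ∘ σ) := by
        intro hinj
        apply h
        have : (x ∘ σ) ∘ σ.symm = x := by
          funext a; simp
        rw [← this]
        exact hinj.comp σ.symm.injective
      rw [dif_neg h2, dif_neg h]
  · intro x
    unfold adjOf
    by_cases h : Function.Injective x
    · rw [dif_pos h]
      split
      · exact Or.inr rfl
      · exact Or.inl rfl
    · rw [dif_neg h]; exact Or.inl rfl
  · intro x hx
    unfold adjOf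
    rw [dif_neg hx]

noncomputable def ec {n : ℕ} (C : Mat n) (e : Idx n 2) : ℝ :=
  ∑ i ∈ e.1, ∑ j ∈ e.1.erase i, C i j

lemma pairsum {n : ℕ} (G : Mat n) (hd : ∀ i, G i i = 0) :
    ∑ e : Idx n 2, (∑ i ∈ e.1, ∑ j ∈ e.1.erase i, G i j) = ∑ i, ∑ j, G i j := by
  have h1 : ∀ e : Idx n 2, (∑ i ∈ e.1, ∑ j ∈ e.1.erase i, G i j)
      = ∑ i, ∑ j, (if i ∈ e.1 ∧ (j ∈ e.1 ∧ j ≠ i) then G i j else 0) := by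
    intro e
    rw [← Fintype.sum_ite_mem e.1 (fun i => ∑ j ∈ e.1.erase i, G i j)]
    refine Fintype.sum_congr _ _ fun i => ?_
    by_cases hi : i ∈ e.1
    · rw [if_pos hi]
      rw [← Fintype.sum_ite_mem (e.1.erase i) (fun j => G i j)]
      refine Fintype.sum_congr _ _ fun j => ?_
      by_cases hj : j ∈ e.1.erase i
      · rw [if_pos hj, if_pos ⟨hi, Finset.mem_of_mem_erase hj, Finset.ne_of_mem_erase hj⟩]
      · rw [if_neg hj, if_neg]
        intro hcon
        exact hj (Finset.mem_erase.mpr ⟨hcon.2.2, hcon.2.1⟩)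
    · rw [if_neg hi]
      symm
      refine Finset.sum_eq_zero fun j _ => ?_
      rw [if_neg (fun hcon => hi hcon.1)]
  calc ∑ e : Idx n 2, (∑ i ∈ e.1, ∑ j ∈ e.1.erase i, G i j)
      = ∑ e : Idx n 2, ∑ i, ∑ j, (if i ∈ e.1 ∧ (j ∈ e.1 ∧ j ≠ i) then G i j else 0) :=
        Fintype.sum_congr _ _ h1
    _ = ∑ i, ∑ j, ∑ e : Idx n 2, (if i ∈ e.1 ∧ (j ∈ e.1 ∧ j ≠ i) then G i j else 0) := by
        rw [Finset.sum_comm]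
        refine Fintype.sum_congr _ _ fun i => ?_
        rw [Finset.sum_comm]
    _ = ∑ i, ∑ j, G i j := by
        refine Fintype.sum_congr _ _ fun i => Fintype.sum_congr _ _ fun j => ?_
        by_cases hij : j = i
        · subst hij
          rw [hd j]
          exact Finset.sum_eq_zero fun e _ => if_neg (fun hcon => hcon.2.2 rfl)
        · have hij' : i ≠ j := fun hcon => hij hcon.symm
          have hcard : ({i, j} : Finset (Fin n)).card = 2 := Finset.card_pair hij'
          rw [Fintype.sum_eq_single (⟨{i, j}, hcard⟩ : Idx n 2)]
          · rw [if_pos]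
            exact ⟨by simp, by simp, hij⟩
          · intro e he
            rw [if_neg]
            intro hcon
            apply he
            apply Subtype.ext
            symm
            apply Finset.eq_of_subset_of_card_le
            · exact Finset.insert_subset hcon.1 (Finset.singleton_subset_iff.mpr hcon.2.1)
            · rw [e.2, hcard]
  
lemma ip_XM_adjOf {n : ℕ} (p : ℝ) (ω : EdgeSel n 2) (C : Mat n) :
    ip (XM n p (adjOf ω)) C
      = ∑ e : Idx n 2, ((if ω e then (1:ℝ) else 0) - p) * ec C e := by
  have hd : ∀ i, XM n p (adjOf ω) i i * C i i = 0 := fun i => by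
    rw [XM_diag p _ (adjOf_mem_adjSet ω) i, zero_mul]
  unfold ip
  rw [← pairsum (fun i j => XM n p (adjOf ω) i j * C i j) hd]
  refine Fintype.sum_congr _ _ fun e => ?_
  unfold ec
  rw [Finset.mul_sum]
  refine Finset.sum_congr rfl fun i hi => ?_
  rw [Finset.mul_sum]
  refine Finset.sum_congr rfl fun j hj => ?_
  have hji : j ≠ i := Finset.ne_of_mem_erase hj
  have hij : i ≠ j := hji.symm
  have hmem_j : j ∈ e.1 := Finset.mem_of_mem_erase hj
  have he : e.1 = {i, j} := by
    symm
    apply Finset.eq_of_subset_of_card_le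
    · exact Finset.insert_subset hi (Finset.singleton_subset_iff.mpr hmem_j)
    · rw [e.2, Finset.card_pair hij]
  have hXij : XM n p (adjOf ω) i j = (if ω e then (1:ℝ) else 0) - p := by
    unfold XM
    rw [if_neg hij, mul_one, adjOf_val ω i j hij e he]
  rw [hXij]

lemma abs_ec_le {n : ℕ} (C : Mat n) (h : ℝ) (hC : ∀ i j, |C i j| ≤ h) (e : Idx n 2) :
    |ec C e| ≤ 2 * h := by
  have hstep : ∀ i ∈ e.1, |∑ j ∈ e.1.erase i, C i j| ≤ h := by
    intro i hi
    refine (Finset.abs_sum_le_sum_abs _ _).trans ?_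
    have hcard : (e.1.erase i).card = 1 := by rw [Finset.card_erase_of_mem hi, e.2]
    calc (∑ j ∈ e.1.erase i, |C i j|) ≤ ∑ _j ∈ e.1.erase i, h :=
          Finset.sum_le_sum fun j _ => hC i j
      _ = h := by rw [Finset.sum_const, hcard, one_nsmul]
  refine (Finset.abs_sum_le_sum_abs _ _).trans ?_
  calc (∑ i ∈ e.1, |∑ j ∈ e.1.erase i, C i j|) ≤ ∑ _i ∈ e.1, h := Finset.sum_le_sum hstep
    _ = 2 * h := by rw [Finset.sum_const, e.2, nsmul_eq_mul]; norm_num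

lemma sum_ec_sq_le {n : ℕ} (C : Mat n) :
    ∑ e : Idx n 2, (ec C e) ^ 2 ≤ 2 * ip C C := by
  have key : ∀ e : Idx n 2, (ec C e) ^ 2 ≤ 2 * ∑ i ∈ e.1, ∑ j ∈ e.1.erase i, (C i j) ^ 2 := by
    intro e
    have hec : ec C e = ∑ x ∈ e.1.sigma (fun i => e.1.erase i), C x.1 x.2 := by
      rw [Finset.sum_sigma]; rfl
    have hsq : ∑ i ∈ e.1, ∑ j ∈ e.1.erase i, (C i j) ^ 2
        = ∑ x ∈ e.1.sigma (fun i => e.1.erase i), (C x.1 x.2) ^ 2 := by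
      rw [Finset.sum_sigma]
    have hcard : (e.1.sigma (fun i => e.1.erase i)).card = 2 := by
      rw [Finset.card_sigma]
      calc (∑ i ∈ e.1, (e.1.erase i).card) = ∑ i ∈ e.1, 1 :=
            Finset.sum_congr rfl fun i hi => by rw [Finset.card_erase_of_mem hi, e.2]
        _ = 2 := by rw [Finset.sum_const, e.2, smul_eq_mul]
    rw [hec, hsq]
    have := sq_sum_le_card_mul_sum_sq (s := e.1.sigma (fun i => e.1.erase i))
      (f := fun x => C x.1 x.2)
    rw [hcard] at this
    exact_mod_cast this
  calc ∑ e : Idx n 2, (ec C e) ^ 2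
      ≤ ∑ e : Idx n 2, 2 * ∑ i ∈ e.1, ∑ j ∈ e.1.erase i, (C i j) ^ 2 :=
        Finset.sum_le_sum fun e _ => key e
    _ = 2 * ∑ e : Idx n 2, ∑ i ∈ e.1, ∑ j ∈ e.1.erase i, (C i j) ^ 2 := by
        rw [Finset.mul_sum]
    _ = 2 * ∑ e : Idx n 2, ∑ i ∈ e.1, ∑ j ∈ e.1.erase i,
          (fun i j => if i = j then 0 else (C i j) ^ 2) i j := by
        congr 1
        refine Fintype.sum_congr _ _ fun e => ?_
        refine Finset.sum_congr rfl fun i _ => Finset.sum_congr rfl fun j hj => ?_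
        show _ = if i = j then 0 else C i j ^ 2
        rw [if_neg (Finset.ne_of_mem_erase hj).symm]
    _ = 2 * ∑ i, ∑ j, (if i = j then 0 else (C i j) ^ 2) := by
        rw [pairsum (fun i j => if i = j then 0 else (C i j) ^ 2) (fun i => if_pos rfl)]
    _ ≤ 2 * ip C C := by
        have hle : ∑ i, ∑ j, (if i = j then 0 else (C i j) ^ 2) ≤ ip C C := by
          unfold ip
          refine Finset.sum_le_sum fun i _ => Finset.sum_le_sum fun j _ => ?_
          by_cases hij : i = j
          · rw [if_pos hij]; exact mul_self_nonneg _
          · rw [if_neg hij, pow_two]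
        linarith

end SRG
namespace SRG

/-! ### Clamping -/

noncomputable def clampM {n : ℕ} (h : ℝ) (M : Mat n) : Mat n :=
  fun i j => max (-h) (min h (M i j))

lemma clamp_abs_le {n : ℕ} {h : ℝ} (hh : 0 ≤ h) (M : Mat n) (i j : Fin n) :
    |clampM h M i j| ≤ h := by
  rw [abs_le]
  exact ⟨le_max_left _ _, max_le (by linarith) (min_le_left _ _)⟩

lemma clamp_sq_le {n : ℕ} {h : ℝ} (hh : 0 ≤ h) (M : Mat n) (i j : Fin n) :
    clampM h M i j * clampM h M i j ≤ M i j * M i j := by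
  have habs : |clampM h M i j| ≤ |M i j| := by
    unfold clampM
    rcases le_total (M i j) h with h1 | h1
    · rw [min_eq_right h1]
      rcases le_total (M i j) (-h) with h2 | h2
      · rw [max_eq_left h2, abs_neg, abs_of_nonneg hh]
        have hM0 : M i j ≤ 0 := by linarith
        rw [abs_of_nonpos hM0]; linarith
      · rw [max_eq_right h2]
    · rw [min_eq_left h1, max_eq_right (by linarith : -h ≤ h), abs_of_nonneg hh]
      calc h ≤ M i j := h1
        _ ≤ |M i j| := le_abs_self _
  calc clampM h M i j * clampM h M i j = |clampM h M i j| * |clampM h M i j| :=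
        (abs_mul_abs_self _).symm
    _ ≤ |M i j| * |M i j| := by nlinarith [abs_nonneg (clampM h M i j), abs_nonneg (M i j)]
    _ = M i j * M i j := abs_mul_abs_self _

lemma clamp_diff_le {n : ℕ} {h : ℝ} (hh : 0 < h) (M : Mat n) (i j : Fin n) :
    |M i j - clampM h M i j| ≤ M i j * M i j / h := by
  rw [le_div_iff₀ hh]
  unfold clampM
  rcases le_total (M i j) h with h1 | h1
  · rw [min_eq_right h1]
    rcases le_total (M i j) (-h) with h2 | h2
    · rw [max_eq_left h2, abs_of_nonpos (by linarith)]
      nlinarith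
    · rw [max_eq_right h2, sub_self, abs_zero, zero_mul]
      nlinarith [mul_self_nonneg (M i j)]
  · rw [min_eq_left h1, max_eq_right (by linarith : -h ≤ h),
      abs_of_nonneg (by linarith)]
    nlinarith

lemma certL_clamp {n : ℕ} {p : ℝ} {Δ : ℕ} {τ : ℝ} (hτ : 0 < τ) (X : Mat n)
    (hX : ∀ i j, |X i j| ≤ 1) (ℓ : List (Cutp n)) (h : certL n p Δ τ X ℓ) :
    3*τ/4 * Wl n p Δ ℓ + τ/8 * ip (clampM (8/τ) (Bm ℓ)) (clampM (8/τ) (Bm ℓ))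
      ≤ ip X (clampM (8/τ) (Bm ℓ)) := by
  have hh : (0:ℝ) < 8/τ := by positivity
  set B := Bm ℓ with hB
  set C := clampM (8/τ) B with hC
  have hagg := certL_aggregate hτ ℓ X h
  have h1 : |ip X (B - C)| ≤ τ/8 * ip B B := by
    refine (abs_ip_le X (B - C)).trans ?_
    have hpt : ∀ i j : Fin n, |X i j| * |(B - C) i j| ≤ τ/8 * (B i j * B i j) := by
      intro i j
      have e1 : |B i j - C i j| ≤ B i j * B i j / (8/τ) := clamp_diff_le hh B i j
      have e2 : B i j * B i j / (8/τ) = τ/8 * (B i j * B i j) := by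
        field_simp
      have e3 : |(B - C) i j| = |B i j - C i j| := rfl
      calc |X i j| * |(B - C) i j| ≤ 1 * |(B - C) i j| :=
            mul_le_mul_of_nonneg_right (hX i j) (abs_nonneg _)
        _ = |B i j - C i j| := by rw [one_mul, e3]
        _ ≤ τ/8 * (B i j * B i j) := by rw [← e2]; exact e1
    calc (∑ i, ∑ j, |X i j| * |(B - C) i j|) ≤ ∑ i, ∑ j, τ/8 * (B i j * B i j) :=
          Finset.sum_le_sum fun i _ => Finset.sum_le_sum fun j _ => hpt i j
      _ = τ/8 * ip B B := by
          unfold ip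
          rw [Finset.mul_sum]
          exact Finset.sum_congr rfl fun i _ => (Finset.mul_sum _ _ _).symm
  have h2 : ip C C ≤ ip B B :=
    Finset.sum_le_sum fun i _ => Finset.sum_le_sum fun j _ => clamp_sq_le hh.le B i j
  have h3 : ip X C = ip X B - ip X (B - C) := by rw [ip_sub_right]; ring
  have h4 := abs_le.mp h1
  rw [h3]
  nlinarith [hagg]

/-! ### Exponential quadratic bounds and the Bernoulli MGF -/

lemma exp_quad_neg {u : ℝ} (hu : u ≤ 0) : Real.exp u - 1 - u ≤ u ^ 2 / 2 := by
  have hInt1 : IntervalIntegrable (fun v => -(Real.exp v - 1)) MeasureTheory.volume u 0 :=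
    ((Real.continuous_exp.sub continuous_const).neg).intervalIntegrable _ _
  have hInt2 : IntervalIntegrable (fun v : ℝ => -v) MeasureTheory.volume u 0 :=
    (continuous_id.neg).intervalIntegrable _ _
  have h1 : Real.exp u - 1 - u = ∫ v in u..(0:ℝ), -(Real.exp v - 1) := by
    rw [intervalIntegral.integral_neg, intervalIntegral.integral_sub
      (Real.continuous_exp.intervalIntegrable _ _) (intervalIntegrable_const),
      integral_exp, intervalIntegral.integral_const]
    simp
    ring
  have h2 : (∫ v in u..(0:ℝ), -v) = u ^ 2 / 2 := by
    rw [intervalIntegral.integral_neg, integral_id]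
    ring
  rw [h1, ← h2]
  refine intervalIntegral.integral_mono_on hu hInt1 hInt2 fun v _ => ?_
  have := Real.add_one_le_exp v
  linarith

lemma exp_quad_pos {u : ℝ} (hu : 0 ≤ u) : Real.exp u - 1 - u ≤ u ^ 2 / 2 * Real.exp u := by
  have hInt1 : IntervalIntegrable (fun v => Real.exp v - 1) MeasureTheory.volume 0 u :=
    (Real.continuous_exp.sub continuous_const).intervalIntegrable _ _
  have hInt2 : IntervalIntegrable (fun v : ℝ => v * Real.exp u) MeasureTheory.volume 0 u :=
    (continuous_id.mul continuous_const).intervalIntegrable _ _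
  have h1 : Real.exp u - 1 - u = ∫ v in (0:ℝ)..u, (Real.exp v - 1) := by
    rw [intervalIntegral.integral_sub (Real.continuous_exp.intervalIntegrable _ _)
      (intervalIntegrable_const), integral_exp, intervalIntegral.integral_const]
    simp
  have h2 : (∫ v in (0:ℝ)..u, v * Real.exp u) = u ^ 2 / 2 * Real.exp u := by
    rw [intervalIntegral.integral_mul_const, integral_id]
    ring
  rw [h1, ← h2]
  refine intervalIntegral.integral_mono_on hu hInt1 hInt2 fun v hv => ?_
  have hv0 : 0 ≤ v := hv.1
  have hvu : v ≤ u := hv.2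
  have hkey : Real.exp v - 1 ≤ v * Real.exp v := by
    have h := Real.add_one_le_exp (-v)
    have hpos := Real.exp_pos v
    have hprod : Real.exp (-v) * Real.exp v = 1 := by
      rw [← Real.exp_add]; simp
    nlinarith
  have hmono : Real.exp v ≤ Real.exp u := Real.exp_le_exp.mpr hvu
  calc Real.exp v - 1 ≤ v * Real.exp v := hkey
    _ ≤ v * Real.exp u := mul_le_mul_of_nonneg_left hmono hv0
  
lemma bern_mgf {p : ℝ} (hp : 0 < p) (hp1 : p < 1) {t : ℝ}
    (ht : |t| ≤ Real.log (1 / p) / 2) :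
    p * Real.exp ((1 - p) * t) + (1 - p) * Real.exp ((0 - p) * t)
      ≤ Real.exp (p * Real.exp (Real.log (1 / p) / 2) * t ^ 2 / 2) := by
  set L := Real.log (1 / p) with hLdef
  set s := Real.exp (L / 2) with hsdef
  have hL0 : 0 ≤ L := Real.log_nonneg (by rw [le_div_iff₀ hp]; linarith)
  have hs1 : 1 ≤ s := Real.one_le_exp (by linarith)
  have h1 : p * Real.exp ((1 - p) * t) + (1 - p) * Real.exp ((0 - p) * t)
      = Real.exp (-(p * t)) * (1 + p * (Real.exp t - 1)) := by
    rw [show (1 - p) * t = t + -(p * t) by ring, show (0 - p) * t = -(p * t) by ring,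
      Real.exp_add]
    ring
  have h2 : 1 + p * (Real.exp t - 1) ≤ Real.exp (p * (Real.exp t - 1)) := by
    linarith [Real.add_one_le_exp (p * (Real.exp t - 1))]
  have h3 : Real.exp t - 1 - t ≤ s * t ^ 2 / 2 := by
    rcases le_total t 0 with htn | htp
    · have hq := exp_quad_neg htn
      nlinarith [sq_nonneg t]
    · have hq := exp_quad_pos htp
      have hts : Real.exp t ≤ s := by
        rw [hsdef]
        apply Real.exp_le_exp.mpr
        calc t ≤ |t| := le_abs_self t
          _ ≤ L / 2 := ht
      nlinarith [sq_nonneg t, Real.exp_pos t]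
  rw [h1]
  have step1 : Real.exp (-(p * t)) * (1 + p * (Real.exp t - 1))
      ≤ Real.exp (-(p * t)) * Real.exp (p * (Real.exp t - 1)) :=
    mul_le_mul_of_nonneg_left h2 (Real.exp_pos _).le
  have step2 : Real.exp (-(p * t)) * Real.exp (p * (Real.exp t - 1))
      = Real.exp (p * (Real.exp t - 1 - t)) := by
    rw [← Real.exp_add]; congr 1; ring
  have step3 : Real.exp (p * (Real.exp t - 1 - t)) ≤ Real.exp (p * s * t ^ 2 / 2) := by
    apply Real.exp_le_exp.mpr
    nlinarith [h3, hp.le]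
  linarith

/-! ### Independence, Markov and the per-list probability bound -/

lemma wWeight_const {n : ℕ} (p : ℝ) (ω : EdgeSel n 2) :
    wWeight (fun _ => p) ω = ∏ e : Idx n 2, (if ω e then p else 1 - p) := rfl

lemma wWeight_nonneg {n : ℕ} {p : ℝ} (hp : 0 ≤ p) (hp1 : p ≤ 1) (ω : EdgeSel n 2) :
    0 ≤ wWeight (fun _ => p) ω := by
  rw [wWeight_const]
  exact Finset.prod_nonneg fun e _ => by split <;> linarith

set_option maxHeartbeats 1000000 in
lemma list_prob_bound {n : ℕ} {p : ℝ} (hp : 0 < p) (hp1 : p < 1) {Δ : ℕ} {τ : ℝ}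
    (hτ : 0 < τ) (hpls : p * Real.log (1/p) * Real.exp (Real.log (1/p) / 2) ≤ 2)
    (ℓ : List (Cutp n)) :
    (∑ ω : EdgeSel n 2,
        if certL n p Δ τ (XM n p (adjOf ω)) ℓ then wWeight (fun _ => p) ω else 0)
      ≤ Real.exp (-(3 * τ^2 / 128 * Real.log (1/p) * Wl n p Δ ℓ)) := by
  set L := Real.log (1/p) with hLdef
  set s := Real.exp (L / 2) with hsdef
  have hL0 : 0 ≤ L := Real.log_nonneg (by rw [le_div_iff₀ hp]; linarith)
  set lam := τ * L / 32 with hlam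
  set C := clampM (8/τ) (Bm ℓ) with hCdef
  set u := 3*τ/4 * Wl n p Δ ℓ + τ/8 * ip C C with hudef
  have hlam0 : 0 ≤ lam := by positivity
  have hCabs : ∀ i j, |C i j| ≤ 8/τ := fun i j => clamp_abs_le (by positivity) (Bm ℓ) i j
  set g : Idx n 2 → Bool → ℝ := fun e b => (if b then p else 1 - p) *
      Real.exp (((if b then (1:ℝ) else 0) - p) * (lam * ec C e)) with hg
  have hpt : ∀ ω : EdgeSel n 2,
      (if certL n p Δ τ (XM n p (adjOf ω)) ℓ then wWeight (fun _ => p) ω else 0)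
        ≤ wWeight (fun _ => p) ω * Real.exp (lam * (ip (XM n p (adjOf ω)) C - u)) := by
    intro ω
    have hw := wWeight_nonneg hp.le hp1.le ω
    by_cases hcond : certL n p Δ τ (XM n p (adjOf ω)) ℓ
    · rw [if_pos hcond]
      have himp : u ≤ ip (XM n p (adjOf ω)) C :=
        certL_clamp hτ _ (fun i j => XM_abs_le hp.le hp1.le _ (adjOf_mem_adjSet ω) i j) ℓ hcond
      have hexp1 : (1:ℝ) ≤ Real.exp (lam * (ip (XM n p (adjOf ω)) C - u)) :=
        Real.one_le_exp (by nlinarith)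
      nlinarith
    · rw [if_neg hcond]
      positivity
  have hsum1 := Finset.sum_le_sum (fun ω (_ : ω ∈ Finset.univ) => hpt ω)
  have hfact : (∑ ω : EdgeSel n 2,
      wWeight (fun _ => p) ω * Real.exp (lam * ip (XM n p (adjOf ω)) C))
      = ∏ e : Idx n 2, (g e true + g e false) := by
    have hterm : ∀ ω : EdgeSel n 2,
        wWeight (fun _ => p) ω * Real.exp (lam * ip (XM n p (adjOf ω)) C)
        = ∏ e : Idx n 2, g e (ω e) := by
      intro ω
      rw [wWeight_const, ip_XM_adjOf, Finset.mul_sum]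
      rw [show (∑ e : Idx n 2, lam * (((if ω e then (1:ℝ) else 0) - p) * ec C e))
          = ∑ e : Idx n 2, ((if ω e then (1:ℝ) else 0) - p) * (lam * ec C e) from
        Finset.sum_congr rfl fun e _ => by ring]
      rw [Real.exp_sum, ← Finset.prod_mul_distrib]
    rw [Finset.sum_congr rfl fun ω _ => hterm ω, ← Fintype.prod_sum g]
    exact Fintype.prod_congr _ _ fun e => Fintype.sum_bool _
  have hedge : ∀ e : Idx n 2,
      g e true + g e false ≤ Real.exp (p * s * (lam * ec C e) ^ 2 / 2) := by
    intro e
    have hte : |lam * ec C e| ≤ L / 2 := by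
      rw [abs_mul, abs_of_nonneg hlam0]
      have h1 : |ec C e| ≤ 2 * (8/τ) := abs_ec_le C _ hCabs e
      calc lam * |ec C e| ≤ lam * (2 * (8/τ)) :=
            mul_le_mul_of_nonneg_left h1 hlam0
        _ = L / 2 := by rw [hlam]; field_simp; ring
    have hb := bern_mgf hp hp1 hte
    rw [← hLdef, ← hsdef] at hb
    calc g e true + g e false
        = p * Real.exp ((1 - p) * (lam * ec C e))
          + (1 - p) * Real.exp ((0 - p) * (lam * ec C e)) := by
          simp only [hg]; norm_num
      _ ≤ Real.exp (p * s * (lam * ec C e) ^ 2 / 2) := hb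
  have hgnn : ∀ e : Idx n 2, 0 ≤ g e true + g e false := by
    intro e
    have h1 : 0 ≤ g e true := by
      have he : g e true = p * Real.exp ((1 - p) * (lam * ec C e)) := by
        simp only [hg]; norm_num
      rw [he]; exact mul_nonneg hp.le (Real.exp_pos _).le
    have h2 : 0 ≤ g e false := by
      have he : g e false = (1 - p) * Real.exp ((0 - p) * (lam * ec C e)) := by
        simp only [hg]; norm_num
      rw [he]; exact mul_nonneg (by linarith) (Real.exp_pos _).le
    linarith
  have hprodle : (∏ e : Idx n 2, (g e true + g e false))
      ≤ Real.exp (p * s * lam ^ 2 * (2 * ip C C) / 2) := by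
    calc (∏ e : Idx n 2, (g e true + g e false))
        ≤ ∏ e : Idx n 2, Real.exp (p * s * (lam * ec C e) ^ 2 / 2) :=
          Finset.prod_le_prod (fun e _ => hgnn e) (fun e _ => hedge e)
      _ = Real.exp (∑ e : Idx n 2, p * s * (lam * ec C e) ^ 2 / 2) :=
          (Real.exp_sum _ _).symm
      _ ≤ Real.exp (p * s * lam ^ 2 * (2 * ip C C) / 2) := by
          apply Real.exp_le_exp.mpr
          have hsq := sum_ec_sq_le C
          have hre : (∑ e : Idx n 2, p * s * (lam * ec C e) ^ 2 / 2)
              = p * s * lam ^ 2 * (∑ e : Idx n 2, (ec C e) ^ 2) / 2 := by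
            rw [Finset.mul_sum, Finset.sum_div]
            exact Finset.sum_congr rfl fun e _ => by ring
          rw [hre]
          have hps : 0 ≤ p * s * lam ^ 2 / 2 := by positivity
          nlinarith
  have hchain : (∑ ω : EdgeSel n 2,
        if certL n p Δ τ (XM n p (adjOf ω)) ℓ then wWeight (fun _ => p) ω else 0)
      ≤ Real.exp (-(lam * u)) * Real.exp (p * s * lam ^ 2 * (2 * ip C C) / 2) := by
    calc (∑ ω : EdgeSel n 2,
        if certL n p Δ τ (XM n p (adjOf ω)) ℓ then wWeight (fun _ => p) ω else 0)
        ≤ ∑ ω : EdgeSel n 2,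
            wWeight (fun _ => p) ω * Real.exp (lam * (ip (XM n p (adjOf ω)) C - u)) := hsum1
      _ = Real.exp (-(lam * u)) * ∑ ω : EdgeSel n 2,
            wWeight (fun _ => p) ω * Real.exp (lam * ip (XM n p (adjOf ω)) C) := by
          rw [Finset.mul_sum]
          refine Finset.sum_congr rfl fun ω _ => ?_
          rw [show lam * (ip (XM n p (adjOf ω)) C - u)
              = -(lam * u) + lam * ip (XM n p (adjOf ω)) C by ring, Real.exp_add]
          ring
      _ ≤ Real.exp (-(lam * u)) * Real.exp (p * s * lam ^ 2 * (2 * ip C C) / 2) := by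
          rw [hfact]
          exact mul_le_mul_of_nonneg_left hprodle (Real.exp_pos _).le
  refine hchain.trans ?_
  rw [← Real.exp_add]
  apply Real.exp_le_exp.mpr
  have hipCC : 0 ≤ ip C C := ip_self_nonneg C
  have hkey : p * s * lam ≤ τ / 8 := by
    rw [hlam]
    calc p * s * (τ * L / 32) = τ / 32 * (p * L * s) := by ring
      _ ≤ τ / 32 * 2 := mul_le_mul_of_nonneg_left hpls (by positivity)
      _ ≤ τ / 8 := by linarith
  have habs : p * s * lam ^ 2 * (2 * ip C C) / 2 ≤ lam * (τ/8 * ip C C) := by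
    have h5 := mul_le_mul_of_nonneg_right hkey (mul_nonneg hlam0 hipCC)
    nlinarith
  have hfinal : lam * (3*τ/4 * Wl n p Δ ℓ) = 3 * τ^2 / 128 * L * Wl n p Δ ℓ := by
    rw [hlam]; ring
  rw [hudef]
  nlinarith [habs, hfinal]

end SRG
namespace SRG

/-! ### Counting lemmas -/

lemma pow_one_add_le {x : ℝ} (hx : 0 ≤ x) :
    ∀ k : ℕ, (k : ℝ) * x ≤ 1/2 → (1 + x) ^ k ≤ 1 + 2 * k * x := by
  intro k
  induction k with
  | zero => intro _; norm_num
  | succ m ih =>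
      intro hk
      have hm : (m : ℝ) * x ≤ 1/2 := by
        have h1 : (m : ℝ) ≤ (m + 1 : ℕ) := by push_cast; linarith
        have := mul_le_mul_of_nonneg_right h1 hx
        push_cast at hk ⊢
        nlinarith
      have h2 := ih hm
      have h3 : (0:ℝ) ≤ (1 + x) := by linarith
      have hmx : 2 * (m : ℝ) * x ≤ 1 := by linarith [hm]
      calc (1 + x) ^ (m + 1) = (1 + x) ^ m * (1 + x) := by ring
        _ ≤ (1 + 2 * m * x) * (1 + x) := by
            refine mul_le_mul_of_nonneg_right h2 h3
        _ ≤ 1 + 2 * (m + 1 : ℕ) * x := by push_cast; nlinarith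
  
lemma sum_pow_card {n : ℕ} (x : ℝ) :
    ∑ I : Finset (Fin n), x ^ I.card = (x + 1) ^ n := by
  have h := Fintype.prod_add (fun _ : Fin n => x) (fun _ : Fin n => (1:ℝ))
  rw [Finset.prod_const, Finset.card_univ, Fintype.card_fin] at h
  rw [h]
  refine Fintype.sum_congr _ _ fun I => ?_
  rw [Finset.prod_const, Finset.prod_const, one_pow, mul_one]

lemma sum_nonempty_pow_card_le {n : ℕ} (x : ℝ) (hx : 0 ≤ x) (hnx : (n:ℝ) * x ≤ 1/2) :
    ∑ I : Finset (Fin n), (if I.Nonempty then x ^ I.card else 0) ≤ 2 * n * x := by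
  have hterm : ∀ I : Finset (Fin n),
      (if I.Nonempty then x ^ I.card else 0) = x ^ I.card - (if I = ∅ then 1 else 0) := by
    intro I
    rcases Finset.eq_empty_or_nonempty I with rfl | hne
    · simp
    · rw [if_pos hne, if_neg (Finset.nonempty_iff_ne_empty.mp hne)]
      ring
  rw [Finset.sum_congr rfl fun I _ => hterm I, Finset.sum_sub_distrib, sum_pow_card]
  have hempty : (∑ I : Finset (Fin n), (if I = ∅ then (1:ℝ) else 0)) = 1 := by
    rw [Finset.sum_ite_eq' Finset.univ (∅ : Finset (Fin n)) (fun _ => (1:ℝ))]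
    simp
  rw [hempty]
  have := pow_one_add_le hx n hnx
  have hcomm : (x + 1) ^ n = (1 + x) ^ n := by ring
  rw [hcomm]
  linarith

lemma geom_tail_le {S : ℝ} (h0 : 0 ≤ S) (h1 : S ≤ 1/2) (K : ℕ) :
    ∑ k ∈ Finset.Icc 1 K, S ^ k ≤ 2 * S := by
  have hIco : Finset.Icc 1 K = Finset.Ico 1 (K + 1) := by
    ext x; simp only [Finset.mem_Icc, Finset.mem_Ico]; omega
  rw [hIco, Finset.sum_Ico_eq_sum_range]
  have hre : ∀ i ∈ Finset.range (K + 1 - 1), S ^ (1 + i) = S * S ^ i := fun i _ => by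
    rw [pow_add, pow_one]
  rw [Finset.sum_congr rfl hre, ← Finset.mul_sum]
  have hgeom : (∑ i ∈ Finset.range (K + 1 - 1), S ^ i) * (S - 1) = S ^ (K + 1 - 1) - 1 :=
    geom_sum_mul S (K + 1 - 1)
  have hSK : 0 ≤ S ^ (K + 1 - 1) := pow_nonneg h0 _
  have hsum0 : 0 ≤ ∑ i ∈ Finset.range (K + 1 - 1), S ^ i :=
    Finset.sum_nonneg fun i _ => pow_nonneg h0 _
  have hsum2 : (∑ i ∈ Finset.range (K + 1 - 1), S ^ i) ≤ 2 := by nlinarith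
  nlinarith

/-! ### Subset-splitting (disjointification) -/

lemma count_subsets {n : ℕ} (K : Finset (Fin n)) {i j : Fin n} (hi : i ∈ K) (hj : j ∈ K)
    (hij : i ≠ j) :
    (K.powerset.filter fun S => i ∈ S ∧ j ∉ S).card = 2 ^ (K.card - 2) := by
  have hcard : ((K.erase i).erase j).card = K.card - 2 := by
    rw [Finset.card_erase_of_mem (Finset.mem_erase.mpr ⟨fun h => hij h.symm, hj⟩),
      Finset.card_erase_of_mem hi]
    omega
  rw [← hcard, ← Finset.card_powerset]
  refine Finset.card_bij' (fun S _ => S.erase i) (fun S _ => insert i S) ?_ ?_ ?_ ?_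
  case refine_1 =>
    intro S hS
    rw [Finset.mem_filter, Finset.mem_powerset] at hS
    obtain ⟨hSK, hiS, hjS⟩ := hS
    rw [Finset.mem_powerset]
    intro x hx
    rw [Finset.mem_erase] at hx
    exact Finset.mem_erase.mpr ⟨fun h => hjS (h ▸ hx.2), Finset.mem_erase.mpr ⟨hx.1, hSK hx.2⟩⟩
  case refine_2 =>
    intro S hS
    rw [Finset.mem_powerset] at hS
    rw [Finset.mem_filter, Finset.mem_powerset]
    have hjS : j ∉ S := fun h => (Finset.mem_erase.mp (hS h)).1 rfl
    refine ⟨?_, Finset.mem_insert_self _ _, ?_⟩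
    · intro x hx
      rcases Finset.mem_insert.mp hx with rfl | hx'
      · exact hi
      · exact Finset.mem_of_mem_erase (Finset.mem_of_mem_erase (hS hx'))
    · intro hcon
      rcases Finset.mem_insert.mp hcon with h | h
      · exact hij h.symm
      · exact hjS h
  case refine_3 =>
    intro S hS
    rw [Finset.mem_filter] at hS
    exact Finset.insert_erase hS.2.1
  case refine_4 =>
    intro S hS
    rw [Finset.mem_powerset] at hS
    apply Finset.erase_insert
    intro h
    exact (Finset.mem_erase.mp (Finset.mem_of_mem_erase (hS h))).1 rfl

lemma ipTmKK_zero {n : ℕ} (M : Mat n) (hd : ∀ i, M i i = 0) (K : Finset (Fin n))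
    (hK : K.card ≤ 1) : ip M (Tm K K) = 0 := by
  rw [ip_Tm]
  refine Finset.sum_eq_zero fun i hi => Finset.sum_eq_zero fun j hj => ?_
  have : i = j := Finset.card_le_one.mp hK i hi j hj
  rw [← this, hd]

lemma avg_split {n : ℕ} (M : Mat n) (K : Finset (Fin n)) (hK : 2 ≤ K.card) :
    ∑ S ∈ K.powerset, ip M (Tm S (K \ S))
      = (2:ℝ) ^ (K.card - 2) * ∑ i ∈ K, ∑ j ∈ K, (if i = j then 0 else M i j) := by
  have hSform : ∀ S ∈ K.powerset, ip M (Tm S (K \ S))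
      = ∑ i ∈ K, ∑ j ∈ K, (if i ∈ S ∧ j ∉ S then M i j else 0) := by
    intro S hS
    rw [Finset.mem_powerset] at hS
    rw [ip_Tm]
    have houter : ∑ i ∈ S, ∑ j ∈ K \ S, M i j
        = ∑ i ∈ K, (if i ∈ S then ∑ j ∈ K \ S, M i j else 0) := by
      rw [← Finset.sum_filter]
      congr 1
      rw [Finset.filter_mem_eq_inter, Finset.inter_eq_right.mpr hS]
    rw [houter]
    refine Finset.sum_congr rfl fun i _ => ?_
    by_cases hiS : i ∈ S
    · rw [if_pos hiS]
      rw [Finset.sdiff_eq_filter, Finset.sum_filter]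
      exact Finset.sum_congr rfl fun j _ => by
        by_cases hjS : j ∈ S
        · rw [if_neg (by simp [hjS]), if_neg (fun hcon => hcon.2 hjS)]
        · rw [if_pos (by simp [hjS]), if_pos ⟨hiS, hjS⟩]
    · rw [if_neg hiS]
      symm
      exact Finset.sum_eq_zero fun j _ => if_neg (fun hcon => hiS hcon.1)
  rw [Finset.sum_congr rfl hSform, Finset.sum_comm]
  rw [Finset.mul_sum]
  refine Finset.sum_congr rfl fun i hi => ?_
  rw [Finset.sum_comm, Finset.mul_sum]
  refine Finset.sum_congr rfl fun j hj => ?_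
  by_cases hij : i = j
  · rw [if_pos hij, mul_zero]
    refine Finset.sum_eq_zero fun S _ => if_neg (fun hcon => hcon.2 (hij ▸ hcon.1))
  · rw [if_neg hij]
    rw [Finset.sum_ite, Finset.sum_const_zero, add_zero, Finset.sum_const,
      count_subsets K hi hj hij, nsmul_eq_mul]
    push_cast
    ring
  
end SRG
namespace SRG

lemma cutNorm_nonneg {n : ℕ} (p : ℝ) (Δ : ℕ) (I J : Finset (Fin n)) :
    0 ≤ cutNormIJ n p Δ I J := by
  unfold cutNormIJ
  have h1 : (0:ℝ) ≤ max (I.card : ℝ) ((n : ℝ) * p ^ (Δ - 1)) :=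
    le_trans (Nat.cast_nonneg _) (le_max_left _ _)
  have h2 : (0:ℝ) ≤ max (J.card : ℝ) ((n : ℝ) * p ^ (Δ - 1)) :=
    le_trans (Nat.cast_nonneg _) (le_max_left _ _)
  exact mul_nonneg h1 h2

lemma exists_good_split {n : ℕ} (M : Mat n) (hd : ∀ i, M i i = 0) (K : Finset (Fin n))
    (hne : ip M (Tm K K) ≠ 0) :
    ∃ S, S ⊆ K ∧ |ip M (Tm K K)| ≤ 4 * |ip M (Tm S (K \ S))| := by
  have hK : 2 ≤ K.card := by
    by_contra hcon
    exact hne (ipTmKK_zero M hd K (by omega))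
  have hKK : ip M (Tm K K) = ∑ i ∈ K, ∑ j ∈ K, (if i = j then 0 else M i j) := by
    rw [ip_Tm]
    refine Finset.sum_congr rfl fun i _ => Finset.sum_congr rfl fun j _ => ?_
    by_cases hij : i = j
    · rw [if_pos hij, ← hij, hd]
    · rw [if_neg hij]
  have havg := avg_split M K hK
  rw [← hKK] at havg
  by_contra hcon
  push_neg at hcon
  have habs : |∑ S ∈ K.powerset, ip M (Tm S (K \ S))|
      ≤ ∑ S ∈ K.powerset, |ip M (Tm S (K \ S))| := Finset.abs_sum_le_sum_abs _ _
  have hlt : ∑ S ∈ K.powerset, |ip M (Tm S (K \ S))|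
      < ∑ _S ∈ K.powerset, |ip M (Tm K K)| / 4 := by
    refine Finset.sum_lt_sum_of_nonempty ⟨∅, Finset.empty_mem_powerset K⟩ fun S hS => ?_
    have := hcon S (Finset.mem_powerset.mp hS)
    linarith
  rw [Finset.sum_const, Finset.card_powerset, nsmul_eq_mul] at hlt
  rw [havg, abs_mul, abs_of_nonneg (by positivity : (0:ℝ) ≤ (2:ℝ)^(K.card-2))] at habs
  have h2 : (((2:ℕ)^K.card : ℕ) : ℝ) = 4 * (2:ℝ)^(K.card - 2) := by
    push_cast
    rw [show K.card = (K.card - 2) + 2 by omega, pow_add]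
    have : (K.card - 2 + 2) - 2 = K.card - 2 := by omega
    rw [this]
    ring
  rw [h2] at hlt
  nlinarith [habs, hlt]

lemma Tm_split {n : ℕ} (I J : Finset (Fin n)) :
    Tm I J = Tm (I \ J) J + Tm (I ∩ J) (J \ I) + Tm (I ∩ J) (I ∩ J) := by
  funext i j
  simp only [Tm, Pi.add_apply, Finset.mem_sdiff, Finset.mem_inter]
  by_cases hiI : i ∈ I <;> by_cases hjJ : j ∈ J <;> by_cases hiJ : i ∈ J <;>
      by_cases hjI : j ∈ I <;> simp [hiI, hjJ, hiJ, hjI] <;> norm_num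

lemma cutNorm_mono {n : ℕ} {p : ℝ} {Δ : ℕ} (h0 : 0 ≤ (n:ℝ) * p ^ (Δ - 1))
    {I J K L : Finset (Fin n)} (hIK : I ⊆ K) (hJL : J ⊆ L) :
    cutNormIJ n p Δ I J ≤ cutNormIJ n p Δ K L := by
  unfold cutNormIJ
  have h1 : max (I.card : ℝ) ((n:ℝ)*p^(Δ-1)) ≤ max (K.card : ℝ) ((n:ℝ)*p^(Δ-1)) :=
    max_le_max (by exact_mod_cast Finset.card_le_card hIK) (le_refl _)
  have h2 : max (J.card : ℝ) ((n:ℝ)*p^(Δ-1)) ≤ max (L.card : ℝ) ((n:ℝ)*p^(Δ-1)) :=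
    max_le_max (by exact_mod_cast Finset.card_le_card hJL) (le_refl _)
  have hnn1 : (0:ℝ) ≤ max (J.card : ℝ) ((n:ℝ)*p^(Δ-1)) :=
    le_trans (Nat.cast_nonneg _) (le_max_left _ _)
  have hnn2 : (0:ℝ) ≤ max (K.card : ℝ) ((n:ℝ)*p^(Δ-1)) :=
    le_trans (Nat.cast_nonneg _) (le_max_left _ _)
  exact mul_le_mul h1 h2 hnn1 hnn2

lemma dual_bound_of_disj {n : ℕ} {p : ℝ} {Δ : ℕ} {τ : ℝ} (hτ : 0 ≤ τ)
    (h0 : 0 ≤ (n:ℝ) * p ^ (Δ - 1)) (M : Mat n) (hd : ∀ i, M i i = 0)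
    (H : ∀ I J : Finset (Fin n), Disjoint I J → |ip M (Tm I J)| ≤ τ * cutNormIJ n p Δ I J) :
    ∀ I J : Finset (Fin n), |ip M (Tm I J)| ≤ 6 * τ * cutNormIJ n p Δ I J := by
  intro I J
  have hsplit : ip M (Tm I J) = ip M (Tm (I \ J) J) + ip M (Tm (I ∩ J) (J \ I))
      + ip M (Tm (I ∩ J) (I ∩ J)) := by
    rw [Tm_split I J, ip_add_right, ip_add_right]
  have h1 : |ip M (Tm (I \ J) J)| ≤ τ * cutNormIJ n p Δ I J := by
    refine (H _ _ Finset.sdiff_disjoint).trans ?_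
    exact mul_le_mul_of_nonneg_left (cutNorm_mono h0 Finset.sdiff_subset (Finset.Subset.refl J)) hτ
  have h2 : |ip M (Tm (I ∩ J) (J \ I))| ≤ τ * cutNormIJ n p Δ I J := by
    have hdisj : Disjoint (I ∩ J) (J \ I) :=
      Finset.disjoint_left.mpr fun x hx hx' =>
        (Finset.mem_sdiff.mp hx').2 (Finset.mem_inter.mp hx).1
    refine (H _ _ hdisj).trans (mul_le_mul_of_nonneg_left
      (cutNorm_mono h0 Finset.inter_subset_left Finset.sdiff_subset) hτ)
  have h3 : |ip M (Tm (I ∩ J) (I ∩ J))| ≤ 4 * τ * cutNormIJ n p Δ I J := by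
    by_cases hz : ip M (Tm (I ∩ J) (I ∩ J)) = 0
    · rw [hz, abs_zero]
      have hnn := cutNorm_nonneg (n := n) p Δ I J
      positivity
    · obtain ⟨S, hSK, hle⟩ := exists_good_split M hd (I ∩ J) hz
      have hQ := H S ((I ∩ J) \ S) Finset.disjoint_sdiff
      have hmono : cutNormIJ n p Δ S ((I ∩ J) \ S) ≤ cutNormIJ n p Δ I J :=
        cutNorm_mono h0 (hSK.trans Finset.inter_subset_left)
          (Finset.sdiff_subset.trans Finset.inter_subset_right)
      calc |ip M (Tm (I ∩ J) (I ∩ J))| ≤ 4 * |ip M (Tm S ((I ∩ J) \ S))| := hle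
        _ ≤ 4 * (τ * cutNormIJ n p Δ S ((I ∩ J) \ S)) := by linarith [hQ]
        _ ≤ 4 * τ * cutNormIJ n p Δ I J := by
            have := mul_le_mul_of_nonneg_left hmono hτ
            linarith
  calc |ip M (Tm I J)| = |ip M (Tm (I \ J) J) + ip M (Tm (I ∩ J) (J \ I))
        + ip M (Tm (I ∩ J) (I ∩ J))| := by rw [hsplit]
    _ ≤ |ip M (Tm (I \ J) J)| + |ip M (Tm (I ∩ J) (J \ I))|
        + |ip M (Tm (I ∩ J) (I ∩ J))| := abs_add_three _ _ _
    _ ≤ 6 * τ * cutNormIJ n p Δ I J := by linarith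

end SRG
namespace SRG

lemma cutDual_le {n : ℕ} {p : ℝ} {Δ : ℕ}
    (hpos : ∀ I J : Finset (Fin n), 0 < cutNormIJ n p Δ I J)
    (M : Tensor n 2) (c : ℝ)
    (h : ∀ I J : Finset (Fin n),
      |∑ x : Fin 2 → Fin n, M x * cut2 I J x| ≤ c * cutNormIJ n p Δ I J) :
    cutDual n p Δ M ≤ c := by
  unfold cutDual
  refine ciSup_le fun I => ciSup_le fun J => ?_
  rw [div_le_iff₀ (hpos I J)]
  calc |∑ x : Fin 2 → Fin n, M x * cut2 I J x| ≤ c * cutNormIJ n p Δ I J := h I J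
    _ = c * cutNormIJ n p Δ I J := rfl

lemma tensor_cut_sum {n : ℕ} (M : Tensor n 2) (I J : Finset (Fin n)) :
    ∑ x : Fin 2 → Fin n, M x * cut2 I J x = ∑ i, ∑ j, M ![i, j] * Tm I J i j := by
  rw [sum_fin2 (fun x => M x * cut2 I J x)]
  refine Fintype.sum_congr _ _ fun i => Fintype.sum_congr _ _ fun j => ?_
  rw [cut2_val]

lemma Bm_diag {n : ℕ} : ∀ (ℓ : List (Cutp n)), (∀ c ∈ ℓ, adm c) → ∀ i : Fin n, Bm ℓ i i = 0
  | [], _, i => rfl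
  | c :: ℓ, h, i => by
      have hc := h c List.mem_cons_self
      have hrec := Bm_diag ℓ (fun c' hc' => h c' (List.mem_cons_of_mem _ hc')) i
      rw [Bm_cons]
      have h1 : Tc c i i = 0 := by
        unfold Tc Tm
        have : ¬(i ∈ c.1 ∧ i ∈ c.2.1) := fun hcon =>
          Finset.disjoint_left.mp hc.2.2 hcon.1 hcon.2
        simp [this]
      show Tc c i i + Bm ℓ i i = 0
      rw [h1, hrec, add_zero]

lemma Wl_ofFn {n : ℕ} (p : ℝ) (Δ : ℕ) {k : ℕ} (v : Fin k → Cutp n) :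
    Wl n p Δ (List.ofFn v) = ∑ i, nrm n p Δ (v i) := by
  unfold Wl
  rw [List.map_ofFn, List.sum_ofFn]
  rfl

lemma Bm_ofFn {n : ℕ} {k : ℕ} (v : Fin k → Cutp n) :
    Bm (List.ofFn v) = ∑ i, Tc (v i) := by
  unfold Bm
  rw [List.map_ofFn, List.sum_ofFn]
  rfl

lemma nrm_ge_avg {n : ℕ} {p : ℝ} {Δ : ℕ} (h0 : 0 ≤ (n:ℝ) * p ^ (Δ - 1)) (c : Cutp n) :
    (n:ℝ) * p ^ (Δ - 1) * ((c.1.card : ℝ) + (c.2.1.card : ℝ)) / 2 ≤ nrm n p Δ c := by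
  unfold nrm cutNormIJ
  set N0 := (n:ℝ) * p ^ (Δ - 1) with hN0
  have ha : (0:ℝ) ≤ (c.1.card : ℝ) := Nat.cast_nonneg _
  have hb : (0:ℝ) ≤ (c.2.1.card : ℝ) := Nat.cast_nonneg _
  have h1 : (c.1.card : ℝ) * N0 ≤ max (c.1.card : ℝ) N0 * max (c.2.1.card : ℝ) N0 :=
    mul_le_mul (le_max_left _ _) (le_max_right _ _) h0 (le_trans ha (le_max_left _ _))
  have h2 : N0 * (c.2.1.card : ℝ) ≤ max (c.1.card : ℝ) N0 * max (c.2.1.card : ℝ) N0 :=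
    mul_le_mul (le_max_right _ _) (le_max_left _ _) hb (le_trans ha (le_max_left _ _))
  linarith

lemma ipXX_le {n : ℕ} {p : ℝ} (hp0 : 0 ≤ p) (hp1 : p ≤ 1) (A : Tensor n 2)
    (hA : A ∈ adjSet n 2) : ip (XM n p A) (XM n p A) ≤ (n:ℝ)^2 := by
  have hpt : ∀ i j : Fin n, XM n p A i j * XM n p A i j ≤ 1 := by
    intro i j
    have := XM_abs_le hp0 hp1 A hA i j
    nlinarith [abs_nonneg (XM n p A i j), sq_abs (XM n p A i j)]
  calc ip (XM n p A) (XM n p A) ≤ ∑ _i : Fin n, ∑ _j : Fin n, (1:ℝ) :=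
        Finset.sum_le_sum fun i _ => Finset.sum_le_sum fun j _ => hpt i j
    _ = (n:ℝ)^2 := by simp [Finset.sum_const]; ring

end SRG
namespace SRG

lemma cutNorm_pos {n : ℕ} {p : ℝ} {Δ : ℕ} (hN0 : 0 < (n:ℝ) * p ^ (Δ - 1))
    (I J : Finset (Fin n)) : 0 < cutNormIJ n p Δ I J := by
  unfold cutNormIJ
  exact mul_pos (lt_of_lt_of_le hN0 (le_max_right _ _)) (lt_of_lt_of_le hN0 (le_max_right _ _))

lemma kv_bound {n : ℕ} {p : ℝ} (hp : 0 < p) (hp1 : p < 1) {Δ : ℕ} {τ : ℝ} (hτ : 0 < τ)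
    (hpls : p * Real.log (1/p) * Real.exp (Real.log (1/p)/2) ≤ 2)
    (bud : ℝ) (hbud : 0 ≤ bud) {k : ℕ} (v : Fin k → Cutp n) :
    (∑ ω : EdgeSel n 2, if (certL n p Δ τ (XM n p (adjOf ω)) (List.ofFn v)
        ∧ bud < Wl n p Δ (List.ofFn v)) then wWeight (fun _ => p) ω else 0)
      ≤ Real.exp (-(3*τ^2/128 * Real.log (1/p) / 2 * bud))
        * ∏ i, (if adm (v i) then
            Real.exp (-(3*τ^2/128 * Real.log (1/p) / 2 * nrm n p Δ (v i))) else 0) := by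
  set L := Real.log (1/p) with hLdef
  have hL0 : 0 ≤ L := Real.log_nonneg (by rw [le_div_iff₀ hp]; linarith)
  have hRHS : 0 ≤ Real.exp (-(3*τ^2/128 * L / 2 * bud))
      * ∏ i, (if adm (v i) then Real.exp (-(3*τ^2/128 * L / 2 * nrm n p Δ (v i))) else 0) := by
    refine mul_nonneg (Real.exp_pos _).le (Finset.prod_nonneg fun i _ => ?_)
    split
    · exact (Real.exp_pos _).le
    · exact le_refl 0
  by_cases hW : bud < Wl n p Δ (List.ofFn v)
  · by_cases hadm : ∀ i, adm (v i)
    · have hsum_eq : (∑ ω : EdgeSel n 2, if (certL n p Δ τ (XM n p (adjOf ω)) (List.ofFn v)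
          ∧ bud < Wl n p Δ (List.ofFn v)) then wWeight (fun _ => p) ω else 0)
          = ∑ ω : EdgeSel n 2, if certL n p Δ τ (XM n p (adjOf ω)) (List.ofFn v)
            then wWeight (fun _ => p) ω else 0 :=
        Finset.sum_congr rfl fun ω _ => by rw [if_congr (and_iff_left hW) rfl rfl]
      rw [hsum_eq]
      refine (list_prob_bound hp hp1 hτ hpls (List.ofFn v)).trans ?_
      have hprod : (∏ i, (if adm (v i) then
          Real.exp (-(3*τ^2/128 * L / 2 * nrm n p Δ (v i))) else 0))
          = Real.exp (-(3*τ^2/128 * L / 2 * Wl n p Δ (List.ofFn v))) := by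
        rw [Finset.prod_congr rfl fun i _ => if_pos (hadm i), ← Real.exp_sum]
        congr 1
        rw [Wl_ofFn, Finset.mul_sum, ← Finset.sum_neg_distrib]
      rw [hprod, ← Real.exp_add]
      apply Real.exp_le_exp.mpr
      have hWnn : 0 ≤ Wl n p Δ (List.ofFn v) := Wl_nonneg _
      nlinarith [hW, mul_nonneg (mul_nonneg (by positivity : (0:ℝ) ≤ 3*τ^2/128) hL0)
        hWnn]
    · push_neg at hadm
      obtain ⟨i0, hi0⟩ := hadm
      have hz : ∀ ω : EdgeSel n 2, (if (certL n p Δ τ (XM n p (adjOf ω)) (List.ofFn v)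
          ∧ bud < Wl n p Δ (List.ofFn v)) then wWeight (fun _ => p) ω else 0) = 0 := by
        intro ω
        rw [if_neg]
        intro hcon
        exact hi0 (certL_adm _ _ hcon.1 (v i0) (by
          rw [List.mem_ofFn]
          exact ⟨i0, rfl⟩))
      rw [Finset.sum_congr rfl fun ω _ => hz ω, Finset.sum_const, smul_zero]
      exact hRHS
  · have hz : ∀ ω : EdgeSel n 2, (if (certL n p Δ τ (XM n p (adjOf ω)) (List.ofFn v)
        ∧ bud < Wl n p Δ (List.ofFn v)) then wWeight (fun _ => p) ω else 0) = 0 := by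
      intro ω
      rw [if_neg]
      intro hcon
      exact hW hcon.2
    rw [Finset.sum_congr rfl fun ω _ => hz ω, Finset.sum_const, smul_zero]
    exact hRHS

end SRG
set_option maxHeartbeats 2000000 in
theorem statement0 :
    ∃ C₀ c₀ : ℝ, 0 < C₀ ∧ 0 < c₀ ∧
      ∀ Δ : ℕ, 1 ≤ Δ → ∀ κ ε : ℝ, 0 < κ → 0 < ε → ∀ n : ℕ, 1 ≤ n →
      ∀ p : ℝ, (n : ℝ) ^ (-2 : ℝ) < p → p < 1 →
      (n : ℝ) * p ^ (Δ + 1) ≥ C₀ * Real.log n / (ε ^ 2 * Real.log (1 / p)) →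
      ∃ Estar : Set (Tensor n 2), Estar ⊆ adjSet n 2 ∧
        muP n 2 p Estar ≤ p ^ (c₀ * κ * (n : ℝ) ^ 2) ∧
        ∀ A ∈ adjSet n 2, A ∉ Estar →
          ∃ (k : ℕ) (α : Fin k → ℝ) (I J : Fin k → Finset (Fin n)) (Arand : Tensor n 2),
            A = (fun x => p * Jten n 2 x + (∑ i, α i * cut2 (I i) (J i) x) + Arand x) ∧
            (∑ i, cutNormIJ n p Δ (I i) (J i)) ≤ κ / (ε ^ 2 * p ^ 2) * (n : ℝ) ^ 2 ∧
            cutDual n p Δ Arand ≤ ε * p := by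
  classical
  refine ⟨36864, 1/3072, by norm_num, by norm_num, ?_⟩
  intro Δ hΔ κ ε hκ hε n hn p hplow hp1 hmain
  have hnpos : (0:ℝ) < n := by exact_mod_cast hn
  have hp : 0 < p := lt_trans (Real.rpow_pos_of_pos hnpos _) hplow
  set L := Real.log (1/p) with hLdef
  have hL : 0 < L := Real.log_pos (by rw [lt_div_iff₀ hp]; linarith)
  set τ := ε * p / 6 with hτdef
  have hτ : 0 < τ := by positivity
  set N0 := (n:ℝ) * p ^ (Δ - 1) with hN0def
  have hN0 : 0 < N0 := by positivity
  set bud := κ / (ε^2 * p^2) * (n:ℝ)^2 with hbuddef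
  have hbud : 0 < bud := by positivity
  -- the MGF parameter inequality p·L·e^{L/2} ≤ 2
  have hpls : p * L * Real.exp (L/2) ≤ 2 := by
    have hs2 : Real.exp (L/2) * Real.exp (L/2) = Real.exp L := by
      rw [← Real.exp_add]; ring_nf
    have hexpL : Real.exp L = 1/p := by rw [hLdef, Real.exp_log (by positivity)]
    have h1 : p * Real.exp (L/2) * Real.exp (L/2) = 1 := by
      rw [mul_assoc, hs2, hexpL]; field_simp
    have h2 : L ≤ 2 * Real.exp (L/2) := by
      have := Real.add_one_le_exp (L/2); linarith
    nlinarith [Real.exp_pos (L/2), hp, hL]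
  -- the main hypothesis, in useful form
  have hC : 36864 * Real.log n ≤ ε^2 * p^2 * L * N0 := by
    rw [ge_iff_le, div_le_iff₀ (by positivity : (0:ℝ) < ε^2 * L)] at hmain
    have hps : (n:ℝ) * p^(Δ+1) = N0 * p^2 := by
      rw [hN0def, show Δ + 1 = (Δ - 1) + 2 by omega, pow_add]
      ring
    rw [hps] at hmain
    nlinarith [hmain]
  by_cases hn1 : n = 1
  · -- trivial case n = 1
    subst hn1
    refine ⟨∅, Set.empty_subset _, ?_, ?_⟩
    · have hmu : muP 1 2 p ∅ = 0 := by
        unfold muP muQ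
        simp
      rw [hmu]
      exact (Real.rpow_pos_of_pos hp _).le
    · intro A hA _
      refine ⟨0, Fin.elim0, Fin.elim0, Fin.elim0, fun x => A x - p * Jten 1 2 x, ?_, ?_, ?_⟩
      · funext x
        simp
      · simp
        positivity
      · have hz : ∀ x : Fin 2 → Fin 1, A x - p * Jten 1 2 x = 0 := by
          intro x
          have hni : ¬Function.Injective x := by
            rw [SRG.inj_fin2]
            simp [Subsingleton.elim (x 0) (x 1)]
          rw [hA.2.2 x hni]
          unfold Jten
          rw [if_neg hni]
          ring
        refine SRG.cutDual_le (SRG.cutNorm_pos hN0) _ _ (fun I J => ?_)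
        rw [show (∑ x : Fin 2 → Fin 1, (A x - p * Jten 1 2 x) * cut2 I J x) = 0 from
          Finset.sum_eq_zero fun x _ => by rw [hz x, zero_mul]]
        rw [abs_zero]
        exact mul_nonneg (by positivity) (SRG.cutNorm_nonneg p Δ I J)
  -- main case : n ≥ 2
  have hn2 : (2:ℕ) ≤ n := by omega
  have hlog2 : Real.log 2 ≤ Real.log n :=
    Real.log_le_log (by norm_num) (by exact_mod_cast hn2)
  have hlogn0 : 0 < Real.log n := lt_of_lt_of_le (Real.log_pos (by norm_num)) hlog2
  set β := 3 * τ^2 / 128 with hβdef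
  have hβ : 0 < β := by positivity
  set θ := β * L * N0 / 4 with hθdef
  have hθ6 : 6 * Real.log n ≤ θ := by
    rw [hθdef, hβdef, hτdef]
    have hθval : 3 * (ε*p/6)^2/128 * L * N0 / 4 = ε^2*p^2*L*N0/6144 := by ring
    rw [hθval]
    linarith
  have hθ0 : 0 < θ := lt_of_lt_of_le (by linarith) hθ6
  set x := Real.exp (-θ) with hxdef
  have hx0 : 0 < x := Real.exp_pos _
  have hx4n : (n:ℝ) * x ≤ 1/4 := by
    have h4n : Real.log (4*n) ≤ θ := by
      rw [Real.log_mul (by norm_num) (by positivity)]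
      have hl4 : Real.log 4 ≤ 2 * Real.log n := by
        rw [show (4:ℝ) = 2^2 by norm_num, Real.log_pow]
        push_cast
        linarith
      linarith
    have hxle : x ≤ 1/(4*n) := by
      rw [hxdef, show (1:ℝ)/(4*(n:ℝ)) = Real.exp (-(Real.log (4*n))) by
        rw [Real.exp_neg, Real.exp_log (by positivity), one_div]]
      exact Real.exp_le_exp.mpr (by linarith)
    calc (n:ℝ) * x ≤ (n:ℝ) * (1/(4*n)) := mul_le_mul_of_nonneg_left hxle (by positivity)
      _ = 1/4 := by field_simp
  set φ : SRG.Cutp n → ℝ := fun c => if SRG.adm c then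
      Real.exp (-(3*τ^2/128 * L / 2 * SRG.nrm n p Δ c)) else 0 with hφdef
  have hφ0 : ∀ c, 0 ≤ φ c := by
    intro c
    rw [hφdef]
    dsimp only
    split
    · exact (Real.exp_pos _).le
    · exact le_refl 0
  set S := ∑ c : SRG.Cutp n, φ c with hSdef
  have hS0 : 0 ≤ S := Finset.sum_nonneg fun c _ => hφ0 c
  -- the entropy bound S ≤ 1/2
  have hψsum : (∑ I : Finset (Fin n), (if I.Nonempty then x ^ I.card else 0)) ≤ 2*n*x :=
    SRG.sum_nonempty_pow_card_le x hx0.le (by linarith)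
  have hψ0 : (0:ℝ) ≤ ∑ I : Finset (Fin n), (if I.Nonempty then x ^ I.card else 0) := by
    refine Finset.sum_nonneg fun I _ => ?_
    split
    · positivity
    · exact le_refl 0
  have hS : S ≤ 1/2 := by
    have hφle : ∀ c : SRG.Cutp n, φ c ≤ (if c.1.Nonempty then x ^ c.1.card else 0) *
        (if c.2.1.Nonempty then x ^ c.2.1.card else 0) := by
      intro c
      rw [hφdef]
      dsimp only
      by_cases hadm : SRG.adm c
      · rw [if_pos hadm, if_pos hadm.1, if_pos hadm.2.1]
        have h2 := SRG.nrm_ge_avg (n := n) (p := p) (Δ := Δ) hN0.le c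
        have h3 : θ * ((c.1.card:ℝ) + c.2.1.card) ≤ 3*τ^2/128 * L / 2 * SRG.nrm n p Δ c := by
          have h4 : 3*τ^2/128 * L / 2 * (N0 * ((c.1.card:ℝ) + c.2.1.card) / 2)
              ≤ 3*τ^2/128 * L / 2 * SRG.nrm n p Δ c :=
            mul_le_mul_of_nonneg_left h2 (by positivity)
          have h5 : θ * ((c.1.card:ℝ) + c.2.1.card)
              = 3*τ^2/128 * L / 2 * (N0 * ((c.1.card:ℝ) + c.2.1.card) / 2) := by
            rw [hθdef, hβdef]
            ring
          linarith
        have hxpow : x ^ c.1.card * x ^ c.2.1.card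
            = Real.exp (-(θ * ((c.1.card:ℝ) + c.2.1.card))) := by
          rw [hxdef, ← Real.exp_nat_mul, ← Real.exp_nat_mul, ← Real.exp_add]
          congr 1
          ring
        rw [hxpow]
        exact Real.exp_le_exp.mpr (by linarith)
      · rw [if_neg hadm]
        have hnn : ∀ (s : Finset (Fin n)), (0:ℝ) ≤ (if s.Nonempty then x ^ s.card else 0) := by
          intro s
          split
          · positivity
          · exact le_refl 0
        exact mul_nonneg (hnn _) (hnn _)
    have hsplit : (∑ c : SRG.Cutp n, (if c.1.Nonempty then x ^ c.1.card else 0) *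
          (if c.2.1.Nonempty then x ^ c.2.1.card else 0))
        = (∑ I : Finset (Fin n), (if I.Nonempty then x ^ I.card else 0)) *
          (2 * ∑ J : Finset (Fin n), (if J.Nonempty then x ^ J.card else 0)) := by
      calc (∑ c : SRG.Cutp n, (if c.1.Nonempty then x ^ c.1.card else 0) *
            (if c.2.1.Nonempty then x ^ c.2.1.card else 0))
          = ∑ I : Finset (Fin n), ∑ q : Finset (Fin n) × Bool,
              (if I.Nonempty then x ^ I.card else 0) *
              (if q.1.Nonempty then x ^ q.1.card else 0) :=
            Fintype.sum_prod_type _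
        _ = ∑ I : Finset (Fin n), (if I.Nonempty then x ^ I.card else 0) *
              ∑ q : Finset (Fin n) × Bool, (if q.1.Nonempty then x ^ q.1.card else 0) := by
            refine Fintype.sum_congr _ _ fun I => ?_
            rw [Finset.mul_sum]
        _ = (∑ I : Finset (Fin n), (if I.Nonempty then x ^ I.card else 0)) *
              ∑ q : Finset (Fin n) × Bool, (if q.1.Nonempty then x ^ q.1.card else 0) := by
            rw [← Finset.sum_mul]
        _ = (∑ I : Finset (Fin n), (if I.Nonempty then x ^ I.card else 0)) *
          (2 * ∑ J : Finset (Fin n), (if J.Nonempty then x ^ J.card else 0)) := by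
            congr 1
            calc (∑ q : Finset (Fin n) × Bool, (if q.1.Nonempty then x ^ q.1.card else 0))
                = ∑ J : Finset (Fin n), ∑ _b : Bool,
                    (if J.Nonempty then x ^ J.card else 0) := Fintype.sum_prod_type _
              _ = ∑ J : Finset (Fin n), 2 * (if J.Nonempty then x ^ J.card else 0) := by
                  refine Fintype.sum_congr _ _ fun J => ?_
                  rw [Finset.sum_const]
                  simp only [Finset.card_univ, Fintype.card_bool, nsmul_eq_mul]
                  norm_num
              _ = 2 * ∑ J : Finset (Fin n), (if J.Nonempty then x ^ J.card else 0) := by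
                  rw [Finset.mul_sum]
    calc S ≤ ∑ c : SRG.Cutp n, (if c.1.Nonempty then x ^ c.1.card else 0) *
          (if c.2.1.Nonempty then x ^ c.2.1.card else 0) :=
        Finset.sum_le_sum fun c _ => hφle c
      _ = (∑ I : Finset (Fin n), (if I.Nonempty then x ^ I.card else 0)) *
          (2 * ∑ J : Finset (Fin n), (if J.Nonempty then x ^ J.card else 0)) := hsplit
      _ ≤ (2*n*x) * (2 * (2*n*x)) := by
          have h2nx : (0:ℝ) ≤ 2*n*x :=
            mul_nonneg (mul_nonneg (by norm_num) hnpos.le) hx0.le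
          refine mul_le_mul hψsum (mul_le_mul_of_nonneg_left hψsum (by norm_num))
            (by linarith) h2nx
      _ ≤ 1/2 := by
          have hnxsq : (n:ℝ)*x*((n:ℝ)*x) ≤ 1/4 * (1/4) :=
            mul_le_mul hx4n hx4n (mul_nonneg hnpos.le hx0.le) (by norm_num)
          nlinarith [hnxsq]
  -- length bound
  set KmaxR := 4/3 * (n:ℝ)^2 / τ^2 with hKmaxRdef
  set Kmax := Nat.ceil KmaxR with hKmaxdef
  have hlenb : ∀ (A' : Tensor n 2), A' ∈ adjSet n 2 → ∀ ℓ : List (SRG.Cutp n),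
      SRG.certL n p Δ τ (SRG.XM n p A') ℓ → ℓ.length ≤ Kmax := by
    intro A' hA' ℓ hcert
    have h1 := SRG.certL_energy hτ ℓ _ hcert
    have h2 := SRG.ipXX_le hp.le hp1.le A' hA'
    have h3 := SRG.length_le_Wl p Δ ℓ (SRG.certL_adm ℓ _ hcert)
    have h4 : (ℓ.length : ℝ) ≤ KmaxR := by
      rw [hKmaxRdef, le_div_iff₀ (by positivity : (0:ℝ) < τ^2)]
      nlinarith [mul_le_mul_of_nonneg_left h3 (by positivity : (0:ℝ) ≤ τ^2)]
    exact_mod_cast le_trans h4 (Nat.le_ceil KmaxR)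
  set Estar : Set (Tensor n 2) := {A | A ∈ adjSet n 2 ∧ ∃ ℓ : List (SRG.Cutp n),
      SRG.certL n p Δ τ (SRG.XM n p A) ℓ ∧ bud < SRG.Wl n p Δ ℓ} with hEdef
  refine ⟨Estar, fun A hA => hA.1, ?_, ?_⟩
  · -- measure bound
    have hpoint : ∀ ω : EdgeSel n 2,
        (if adjOf ω ∈ Estar then wWeight (fun _ => p) ω else 0)
        ≤ ∑ k ∈ Finset.Icc 1 Kmax, ∑ v : Fin k → SRG.Cutp n,
            (if (SRG.certL n p Δ τ (SRG.XM n p (adjOf ω)) (List.ofFn v)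
              ∧ bud < SRG.Wl n p Δ (List.ofFn v)) then wWeight (fun _ => p) ω else 0) := by
      intro ω
      have hw := SRG.wWeight_nonneg hp.le hp1.le ω
      have hnn : ∀ k (v : Fin k → SRG.Cutp n),
          0 ≤ (if (SRG.certL n p Δ τ (SRG.XM n p (adjOf ω)) (List.ofFn v)
            ∧ bud < SRG.Wl n p Δ (List.ofFn v)) then wWeight (fun _ => p) ω else 0) := by
        intro k v
        split
        · exact hw
        · exact le_refl 0
      by_cases hmem : adjOf ω ∈ Estar
      · rw [if_pos hmem]
        obtain ⟨hadj, ℓ, hcert, hWgt⟩ := hmem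
        have hk1 : 1 ≤ ℓ.length := by
          rcases ℓ with _ | ⟨c, ℓ'⟩
          · exfalso
            rw [SRG.Wl_nil] at hWgt
            linarith
          · simp
        have hkK : ℓ.length ≤ Kmax := hlenb _ hadj ℓ hcert
        have hofn : List.ofFn ℓ.get = ℓ := List.ofFn_get ℓ
        have hstep : wWeight (fun _ => p) ω
            ≤ ∑ v : Fin ℓ.length → SRG.Cutp n,
              (if (SRG.certL n p Δ τ (SRG.XM n p (adjOf ω)) (List.ofFn v)
                ∧ bud < SRG.Wl n p Δ (List.ofFn v)) then wWeight (fun _ => p) ω else 0) := by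
          have hterm : (if (SRG.certL n p Δ τ (SRG.XM n p (adjOf ω)) (List.ofFn ℓ.get)
              ∧ bud < SRG.Wl n p Δ (List.ofFn ℓ.get)) then wWeight (fun _ => p) ω else 0)
              = wWeight (fun _ => p) ω := by
            rw [hofn, if_pos ⟨hcert, hWgt⟩]
          have hsumle := Finset.single_le_sum (f := fun v : Fin ℓ.length → SRG.Cutp n =>
            (if (SRG.certL n p Δ τ (SRG.XM n p (adjOf ω)) (List.ofFn v)
              ∧ bud < SRG.Wl n p Δ (List.ofFn v)) then wWeight (fun _ => p) ω else 0))
            (fun v _ => hnn ℓ.length v) (Finset.mem_univ ℓ.get)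
          exact le_trans (le_of_eq hterm.symm) hsumle
        refine hstep.trans ?_
        refine Finset.single_le_sum (f := fun k => ∑ v : Fin k → SRG.Cutp n,
            (if (SRG.certL n p Δ τ (SRG.XM n p (adjOf ω)) (List.ofFn v)
              ∧ bud < SRG.Wl n p Δ (List.ofFn v)) then wWeight (fun _ => p) ω else 0))
          (fun k _ => Finset.sum_nonneg fun v _ => hnn k v) ?_
        exact Finset.mem_Icc.mpr ⟨hk1, hkK⟩
      · rw [if_neg hmem]
        exact Finset.sum_nonneg fun k _ => Finset.sum_nonneg fun v _ => hnn k v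
    have hstep1 : muP n 2 p Estar ≤ ∑ k ∈ Finset.Icc 1 Kmax, ∑ v : Fin k → SRG.Cutp n,
        ∑ ω : EdgeSel n 2, (if (SRG.certL n p Δ τ (SRG.XM n p (adjOf ω)) (List.ofFn v)
          ∧ bud < SRG.Wl n p Δ (List.ofFn v)) then wWeight (fun _ => p) ω else 0) := by
      have h0 : muP n 2 p Estar
          = ∑ ω : EdgeSel n 2, if adjOf ω ∈ Estar then wWeight (fun _ => p) ω else 0 := by
        unfold muP muQ
        exact Finset.sum_congr rfl fun ω _ => by split_ifs <;> rfl
      rw [h0]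
      refine le_trans (Finset.sum_le_sum fun ω _ => hpoint ω) ?_
      rw [Finset.sum_comm]
      refine le_of_eq (Finset.sum_congr rfl fun k _ => Finset.sum_comm)
    have hstep2 : (∑ k ∈ Finset.Icc 1 Kmax, ∑ v : Fin k → SRG.Cutp n,
        ∑ ω : EdgeSel n 2, (if (SRG.certL n p Δ τ (SRG.XM n p (adjOf ω)) (List.ofFn v)
          ∧ bud < SRG.Wl n p Δ (List.ofFn v)) then wWeight (fun _ => p) ω else 0))
        ≤ ∑ k ∈ Finset.Icc 1 Kmax, Real.exp (-(3*τ^2/128 * L / 2 * bud)) * S ^ k := by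
      refine Finset.sum_le_sum fun k _ => ?_
      have hkv : ∀ v : Fin k → SRG.Cutp n,
          (∑ ω : EdgeSel n 2, (if (SRG.certL n p Δ τ (SRG.XM n p (adjOf ω)) (List.ofFn v)
            ∧ bud < SRG.Wl n p Δ (List.ofFn v)) then wWeight (fun _ => p) ω else 0))
          ≤ Real.exp (-(3*τ^2/128 * L / 2 * bud)) * ∏ i, φ (v i) := by
        intro v
        refine (SRG.kv_bound hp hp1 hτ hpls bud hbud.le v).trans (le_of_eq ?_)
        congr 1
      calc (∑ v : Fin k → SRG.Cutp n, ∑ ω : EdgeSel n 2, _)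
          ≤ ∑ v : Fin k → SRG.Cutp n,
            Real.exp (-(3*τ^2/128 * L / 2 * bud)) * ∏ i, φ (v i) :=
            Finset.sum_le_sum fun v _ => hkv v
        _ = Real.exp (-(3*τ^2/128 * L / 2 * bud)) * ∑ v : Fin k → SRG.Cutp n, ∏ i, φ (v i) :=
            (Finset.mul_sum _ _ _).symm
        _ = Real.exp (-(3*τ^2/128 * L / 2 * bud)) * S ^ k := by
            rw [hSdef, Fintype.sum_pow]
    have hstep3 : (∑ k ∈ Finset.Icc 1 Kmax, Real.exp (-(3*τ^2/128 * L / 2 * bud)) * S ^ k)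
        ≤ Real.exp (-(3*τ^2/128 * L / 2 * bud)) := by
      rw [← Finset.mul_sum]
      have hgeo := SRG.geom_tail_le hS0 hS Kmax
      calc Real.exp (-(3*τ^2/128 * L / 2 * bud)) * ∑ k ∈ Finset.Icc 1 Kmax, S ^ k
          ≤ Real.exp (-(3*τ^2/128 * L / 2 * bud)) * 1 := by
            refine mul_le_mul_of_nonneg_left ?_ (Real.exp_pos _).le
            linarith
        _ = Real.exp (-(3*τ^2/128 * L / 2 * bud)) := mul_one _
    refine (hstep1.trans (hstep2.trans hstep3)).trans (le_of_eq ?_)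
    rw [Real.rpow_def_of_pos hp]
    have hlogp : Real.log p = -L := by
      rw [hLdef, one_div, Real.log_inv]
      ring
    rw [hlogp]
    congr 1
    rw [hbuddef, hτdef]
    field_simp
    ring
  · -- decomposition
    intro A hA hAE
    set X := SRG.XM n p A with hXdef
    set P : ℕ → Prop := fun k => ∃ ℓ : List (SRG.Cutp n),
        SRG.certL n p Δ τ X ℓ ∧ ℓ.length = k with hPdef
    have hP0 : P 0 := ⟨[], trivial, rfl⟩
    have hPbound : ∀ k, P k → k ≤ Kmax := by
      rintro k ⟨ℓ, hcert, rfl⟩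
      exact hlenb A hA ℓ hcert
    set K := Nat.findGreatest P Kmax with hKdef
    have hPK : P K := Nat.findGreatest_spec (Nat.zero_le _) hP0
    obtain ⟨ℓ, hcert, hlen⟩ := hPK
    have hWle : SRG.Wl n p Δ ℓ ≤ bud := by
      by_contra hcon
      exact hAE ⟨hA, ℓ, hcert, lt_of_not_ge hcon⟩
    have hmax : ∀ c : SRG.Cutp n, SRG.adm c →
        SRG.ip (X - (τ/2) • SRG.Bm ℓ) (SRG.Tc c) ≤ τ * SRG.nrm n p Δ c := by
      intro c hc
      by_contra hcon
      push_neg at hcon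
      have hext := SRG.certL_append ℓ X c hcert hc hcon
      have hPK1 : P (K + 1) := ⟨ℓ ++ [c], hext, by
        rw [List.length_append, hlen]
        rfl⟩
      have := Nat.le_findGreatest (hPbound _ hPK1) hPK1
      omega
    set M' := X - (τ/2) • SRG.Bm ℓ with hM'def
    have hadmall : ∀ c ∈ ℓ, SRG.adm c := SRG.certL_adm ℓ X hcert
    have hM'diag : ∀ i, M' i i = 0 := by
      intro i
      rw [hM'def]
      show X i i - (τ/2) * SRG.Bm ℓ i i = 0
      rw [hXdef, SRG.XM_diag p A hA i, SRG.Bm_diag ℓ hadmall i]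
      ring
    have hdisj : ∀ I J : Finset (Fin n), Disjoint I J →
        |SRG.ip M' (SRG.Tm I J)| ≤ τ * cutNormIJ n p Δ I J := by
      intro I J hIJ
      rcases Finset.eq_empty_or_nonempty I with rfl | hI
      · rw [show SRG.ip M' (SRG.Tm ∅ J) = 0 from by
          rw [SRG.ip_Tm]; exact Finset.sum_empty]
        rw [abs_zero]
        exact mul_nonneg hτ.le (SRG.cutNorm_nonneg p Δ _ _)
      rcases Finset.eq_empty_or_nonempty J with rfl | hJ
      · rw [show SRG.ip M' (SRG.Tm I ∅) = 0 from by
          rw [SRG.ip_Tm]; exact Finset.sum_eq_zero fun i _ => Finset.sum_empty]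
        rw [abs_zero]
        exact mul_nonneg hτ.le (SRG.cutNorm_nonneg p Δ _ _)
      have hct := hmax (I, J, true) ⟨hI, hJ, hIJ⟩
      have hcf := hmax (I, J, false) ⟨hI, hJ, hIJ⟩
      have het : SRG.ip M' (SRG.Tc (I, J, true)) = SRG.ip M' (SRG.Tm I J) := by
        unfold SRG.Tc SRG.sg
        rw [if_pos rfl, one_smul]
      have hef : SRG.ip M' (SRG.Tc (I, J, false)) = -SRG.ip M' (SRG.Tm I J) := by
        unfold SRG.Tc SRG.sg
        rw [if_neg (by simp), SRG.ip_smul_right]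
        ring
      rw [het] at hct
      rw [hef] at hcf
      rw [abs_le]
      constructor
      · have : (τ * SRG.nrm n p Δ (I, J, false)) = τ * cutNormIJ n p Δ I J := rfl
        linarith [hcf]
      · exact hct
    have hdual := SRG.dual_bound_of_disj hτ.le hN0.le M' hM'diag hdisj
    refine ⟨ℓ.length, fun i => (τ/2) * SRG.sg ((ℓ.get i).2.2),
      fun i => (ℓ.get i).1, fun i => (ℓ.get i).2.1,
      fun x => A x - p * Jten n 2 x
        - ∑ i, ((τ/2) * SRG.sg ((ℓ.get i).2.2)) * cut2 ((ℓ.get i).1) ((ℓ.get i).2.1) x,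
      ?_, ?_, ?_⟩
    · funext x
      dsimp only
      ring
    · have heq : (∑ i, cutNormIJ n p Δ ((ℓ.get i).1) ((ℓ.get i).2.1))
          = SRG.Wl n p Δ ℓ := by
        conv_rhs => rw [← List.ofFn_get ℓ]
        rw [SRG.Wl_ofFn]
        rfl
      rw [heq]
      exact hWle
    · have hbridge : ∀ i j : Fin n,
          (A ![i, j] - p * Jten n 2 ![i, j]
            - ∑ k, ((τ/2) * SRG.sg ((ℓ.get k).2.2))
                * cut2 ((ℓ.get k).1) ((ℓ.get k).2.1) ![i, j]) = M' i j := by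
        intro i j
        have h1 : (∑ k, ((τ/2) * SRG.sg ((ℓ.get k).2.2))
            * cut2 ((ℓ.get k).1) ((ℓ.get k).2.1) ![i, j])
            = (τ/2) * SRG.Bm ℓ i j := by
          rw [show SRG.Bm ℓ = SRG.Bm (List.ofFn ℓ.get) from by rw [List.ofFn_get],
            SRG.Bm_ofFn]
          rw [show (∑ k, SRG.Tc (ℓ.get k)) i j = ∑ k, SRG.Tc (ℓ.get k) i j from by
            rw [Finset.sum_apply, Finset.sum_apply]]
          rw [Finset.mul_sum]
          refine Fintype.sum_congr _ _ fun k => ?_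
          rw [SRG.cut2_val]
          show τ/2 * SRG.sg ((ℓ.get k).2.2) * SRG.Tm ((ℓ.get k).1) ((ℓ.get k).2.1) i j
            = τ/2 * (SRG.sg ((ℓ.get k).2.2) * SRG.Tm ((ℓ.get k).1) ((ℓ.get k).2.1) i j)
          ring
          
        rw [h1, hM'def]
        show _ = X i j - (τ/2) * SRG.Bm ℓ i j
        rw [hXdef]
        unfold SRG.XM
        rw [SRG.Jten_val]
      refine SRG.cutDual_le (SRG.cutNorm_pos hN0) _ _ (fun I J => ?_)
      rw [SRG.tensor_cut_sum]
      have h2 : (∑ i, ∑ j, (A ![i, j] - p * Jten n 2 ![i, j]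
          - ∑ k, ((τ/2) * SRG.sg ((ℓ.get k).2.2))
              * cut2 ((ℓ.get k).1) ((ℓ.get k).2.1) ![i, j]) * SRG.Tm I J i j)
          = SRG.ip M' (SRG.Tm I J) := by
        unfold SRG.ip
        exact Finset.sum_congr rfl fun i _ => Finset.sum_congr rfl fun j _ => by
          rw [hbridge i j]
      rw [h2]
      have := hdual I J
      have h6 : 6 * τ = ε * p := by rw [hτdef]; ring
      calc |SRG.ip M' (SRG.Tm I J)| ≤ 6 * τ * cutNormIJ n p Δ I J := this
        _ = ε * p * cutNormIJ n p Δ I J := by rw [h6]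
end

section
/- Let p ∈ (0,1), let H be an r-graph, let 𝔅 = {𝖡(e)}_{e∈E(H)} be an H-dominating base system with standard weights, and let ‖·‖*_𝔅 be the associated seminorm. Let C ⊆ A_{n,r} be a set of diameter at most ε p under ‖·‖*_𝔅 for some ε ∈ (0,1], and assume there exist Q₀ ∈ conv(C) and L ≥ 1 such that t_p(H', Q₀) ≤ L for every proper subgraph H' ⊊ H. Then there is a constant C(H), depending only on H, such that for all collections P = (P^e)_{e∈E(H)} and Q = (Q^e)_{e∈E(H)} with every P^e, Q^e ∈ conv(C): |t_p(H, P) − t_p(H, Q)| ≤ C(H) L ε, where t_p(H, S) = (n^{v(H)} p^{e(H)})^{−1} Σ_{φ : V(H) → [n]} Π_{e∈E(H)} S^e(φ(e)) for a collection S = (S^e)_{e∈E(H)} of tensors in Q_{n,r} (with S^e(φ(e)) taken to be 0 if φ is not injective on e). -/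
open scoped Classical
open Finset

section CountingLemma

variable {n r : ℕ}

private lemma prod_eq_ite_real {α : Type*} (s : Finset α) (v : α → ℝ)
    [Decidable (∀ a ∈ s, v a = 1)]
    (h : ∀ a ∈ s, v a = 0 ∨ v a = 1) :
    ∏ a ∈ s, v a = if ∀ a ∈ s, v a = 1 then 1 else 0 := by
  by_cases hall : ∀ a ∈ s, v a = 1
  · rw [if_pos hall, Finset.prod_eq_one hall]
  · rw [if_neg hall]
    push_neg at hall
    obtain ⟨a, ha, hv⟩ := hall
    exact Finset.prod_eq_zero ha ((h a ha).resolve_right hv)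

lemma testFun_mem01 (Bw : WBase r) (f : Factors n r) (x : Fin r → Fin n) :
    testFun Bw f x = 0 ∨ testFun Bw f x = 1 := by
  unfold testFun
  rw [prod_eq_ite_real _ _ (fun b _ => by split <;> simp)]
  split <;> simp

lemma testFun_nonneg (Bw : WBase r) (f : Factors n r) (x : Fin r → Fin n) :
    0 ≤ testFun Bw f x := by
  rcases testFun_mem01 Bw f x with h | h <;> rw [h] <;> norm_num

lemma testNorm_nonneg (p : ℝ) (Bw : WBase r) (f : Factors n r) :
    0 ≤ testNorm p Bw f :=
  le_trans (Finset.sum_nonneg fun x _ => abs_nonneg _) (le_max_left _ _)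

lemma testNorm_ge_one (p : ℝ) (Bw : WBase r) (f : Factors n r)
    (hne : ∃ x, testFun Bw f x ≠ 0) : (1 : ℝ) ≤ testNorm p Bw f := by
  obtain ⟨x₀, hx₀⟩ := hne
  have h1 : testFun Bw f x₀ = 1 := (testFun_mem01 Bw f x₀).resolve_left hx₀
  refine le_trans ?_ (le_max_left _ _)
  calc (1 : ℝ) = |testFun Bw f x₀| := by rw [h1]; norm_num
    _ ≤ ∑ x : Fin r → Fin n, |testFun Bw f x| :=
        Finset.single_le_sum (f := fun x => |testFun Bw f x|)
          (fun x _ => abs_nonneg _) (Finset.mem_univ x₀)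

lemma dualNorm_nonneg (p : ℝ) (Bw : WBase r) (Z : Tensor n r) :
    0 ≤ dualNorm n p Bw Z := by
  refine Real.iSup_nonneg fun f => ?_
  split
  · exact div_nonneg (abs_nonneg _) (testNorm_nonneg p Bw f)
  · exact le_rfl

lemma le_dualNorm (p : ℝ) (Bw : WBase r) (Z : Tensor n r) (f : Factors n r) :
    (if ∃ x, testFun Bw f x ≠ 0 then
      |∑ x : Fin r → Fin n, Z x * testFun Bw f x| / testNorm p Bw f else 0)
      ≤ dualNorm n p Bw Z := by
  unfold dualNorm
  exact le_ciSup (f := fun f : Factors n r =>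
      if ∃ x, testFun Bw f x ≠ 0 then
        |∑ x : Fin r → Fin n, Z x * testFun Bw f x| / testNorm p Bw f else 0)
    (Set.Finite.bddAbove (Set.finite_range _)) f

lemma pair_le_dualNorm (p : ℝ) (Bw : WBase r) (Z : Tensor n r) (f : Factors n r) :
    |∑ x : Fin r → Fin n, Z x * testFun Bw f x| ≤ dualNorm n p Bw Z * testNorm p Bw f := by
  by_cases hne : ∃ x, testFun Bw f x ≠ 0
  · have h1 := testNorm_ge_one p Bw f hne
    have h2 := le_dualNorm p Bw Z f
    rw [if_pos hne] at h2
    have htn : (0:ℝ) < testNorm p Bw f := lt_of_lt_of_le one_pos h1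
    calc |∑ x : Fin r → Fin n, Z x * testFun Bw f x|
        = |∑ x : Fin r → Fin n, Z x * testFun Bw f x| / testNorm p Bw f * testNorm p Bw f := by
          field_simp
      _ ≤ dualNorm n p Bw Z * testNorm p Bw f :=
          mul_le_mul_of_nonneg_right h2 (le_of_lt htn)
  · push_neg at hne
    have : ∑ x : Fin r → Fin n, Z x * testFun Bw f x = 0 :=
      Finset.sum_eq_zero fun x _ => by rw [hne x, mul_zero]
    rw [this, abs_zero]
    exact mul_nonneg (dualNorm_nonneg p Bw Z) (testNorm_nonneg p Bw f)

lemma dualNorm_combo (p : ℝ) (Bw : WBase r) (Z₁ Z₂ : Tensor n r) {a b : ℝ}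
    (ha : 0 ≤ a) (hb : 0 ≤ b) :
    dualNorm n p Bw (fun x => a * Z₁ x + b * Z₂ x)
      ≤ a * dualNorm n p Bw Z₁ + b * dualNorm n p Bw Z₂ := by
  refine Real.iSup_le (fun f => ?_)
    (add_nonneg (mul_nonneg ha (dualNorm_nonneg p Bw Z₁))
      (mul_nonneg hb (dualNorm_nonneg p Bw Z₂)))
  by_cases hne : ∃ x, testFun Bw f x ≠ 0
  · rw [if_pos hne]
    have htn : (0:ℝ) < testNorm p Bw f := lt_of_lt_of_le one_pos (testNorm_ge_one p Bw f hne)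
    have hsum : ∑ x : Fin r → Fin n, (a * Z₁ x + b * Z₂ x) * testFun Bw f x
        = a * (∑ x : Fin r → Fin n, Z₁ x * testFun Bw f x)
          + b * (∑ x : Fin r → Fin n, Z₂ x * testFun Bw f x) := by
      rw [Finset.mul_sum, Finset.mul_sum, ← Finset.sum_add_distrib]
      exact Finset.sum_congr rfl fun x _ => by ring
    rw [hsum]
    have h1 := le_dualNorm p Bw Z₁ f; rw [if_pos hne] at h1
    have h2 := le_dualNorm p Bw Z₂ f; rw [if_pos hne] at h2
    calc |a * (∑ x : Fin r → Fin n, Z₁ x * testFun Bw f x)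
          + b * (∑ x : Fin r → Fin n, Z₂ x * testFun Bw f x)| / testNorm p Bw f
        ≤ (a * |∑ x : Fin r → Fin n, Z₁ x * testFun Bw f x|
          + b * |∑ x : Fin r → Fin n, Z₂ x * testFun Bw f x|) / testNorm p Bw f := by
          gcongr
          calc _ ≤ |a * (∑ x : Fin r → Fin n, Z₁ x * testFun Bw f x)|
                + |b * (∑ x : Fin r → Fin n, Z₂ x * testFun Bw f x)| := abs_add_le _ _
            _ = _ := by rw [abs_mul, abs_mul, abs_of_nonneg ha, abs_of_nonneg hb]
      _ = a * (|∑ x : Fin r → Fin n, Z₁ x * testFun Bw f x| / testNorm p Bw f)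
          + b * (|∑ x : Fin r → Fin n, Z₂ x * testFun Bw f x| / testNorm p Bw f) := by
          rw [add_div, mul_div_assoc, mul_div_assoc]
      _ ≤ a * dualNorm n p Bw Z₁ + b * dualNorm n p Bw Z₂ :=
          add_le_add (mul_le_mul_of_nonneg_left h1 ha) (mul_le_mul_of_nonneg_left h2 hb)
  · rw [if_neg hne]
    exact add_nonneg (mul_nonneg ha (dualNorm_nonneg p Bw Z₁))
      (mul_nonneg hb (dualNorm_nonneg p Bw Z₂))

end CountingLemma

section CL2

variable {n r : ℕ} {H : RGraph r}

lemma bsDualNorm_nonneg (S : BaseSystem H) (E₀ : Finset (Finset H.V)) (p : ℝ)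
    (Z : Tensor n r) : 0 ≤ bsDualNorm S E₀ p Z :=
  Real.iSup_nonneg fun e => dualNorm_nonneg p (S.wb E₀ e) Z

lemma dualNorm_le_bsDualNorm (S : BaseSystem H) (E₀ : Finset (Finset H.V)) (p : ℝ)
    (Z : Tensor n r) (e : {e // e ∈ H.E}) :
    dualNorm n p (S.wb E₀ e) Z ≤ bsDualNorm S E₀ p Z := by
  unfold bsDualNorm
  exact le_ciSup (f := fun e : {e // e ∈ H.E} => dualNorm n p (S.wb E₀ e) Z)
    (Set.Finite.bddAbove (Set.finite_range _)) e

lemma bsDualNorm_combo (S : BaseSystem H) (E₀ : Finset (Finset H.V)) (p : ℝ)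
    (Z₁ Z₂ : Tensor n r) {a b : ℝ} (ha : 0 ≤ a) (hb : 0 ≤ b) :
    bsDualNorm S E₀ p (fun x => a * Z₁ x + b * Z₂ x)
      ≤ a * bsDualNorm S E₀ p Z₁ + b * bsDualNorm S E₀ p Z₂ := by
  refine Real.iSup_le (fun e => ?_)
    (add_nonneg (mul_nonneg ha (bsDualNorm_nonneg S E₀ p Z₁))
      (mul_nonneg hb (bsDualNorm_nonneg S E₀ p Z₂)))
  calc dualNorm n p (S.wb E₀ e) (fun x => a * Z₁ x + b * Z₂ x)
      ≤ a * dualNorm n p (S.wb E₀ e) Z₁ + b * dualNorm n p (S.wb E₀ e) Z₂ :=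
        dualNorm_combo p _ Z₁ Z₂ ha hb
    _ ≤ a * bsDualNorm S E₀ p Z₁ + b * bsDualNorm S E₀ p Z₂ :=
        add_le_add (mul_le_mul_of_nonneg_left (dualNorm_le_bsDualNorm S E₀ p Z₁ e) ha)
          (mul_le_mul_of_nonneg_left (dualNorm_le_bsDualNorm S E₀ p Z₂ e) hb)

lemma bs_diff_le (S : BaseSystem H) (p ε : ℝ) (hεp : 0 ≤ ε * p) (Cs : Set (Tensor n r))
    (hdiam : ∀ A₁ ∈ Cs, ∀ A₂ ∈ Cs, bsDualNorm S H.E p (fun x => A₁ x - A₂ x) ≤ ε * p) :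
    ∀ R ∈ convexHull ℝ Cs, ∀ R' ∈ convexHull ℝ Cs,
      bsDualNorm S H.E p (fun x => R x - R' x) ≤ ε * p := by
  have key : ∀ W : Tensor n r,
      (∀ A ∈ Cs, bsDualNorm S H.E p (fun x => W x - A x) ≤ ε * p) →
      ∀ R' ∈ convexHull ℝ Cs, bsDualNorm S H.E p (fun x => W x - R' x) ≤ ε * p := by
    intro W hW
    have hconv : Convex ℝ {R' : Tensor n r |
        bsDualNorm S H.E p (fun x => W x - R' x) ≤ ε * p} := by
      intro R₁ h₁ R₂ h₂ a b ha hb hab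
      simp only [Set.mem_setOf_eq] at h₁ h₂ ⊢
      have hfun : (fun x => W x - (a • R₁ + b • R₂) x)
          = fun x => a * (W x - R₁ x) + b * (W x - R₂ x) := by
        funext x
        simp only [Pi.add_apply, Pi.smul_apply, smul_eq_mul]
        linear_combination (-(W x)) * hab
      rw [hfun]
      calc bsDualNorm S H.E p (fun x => a * (W x - R₁ x) + b * (W x - R₂ x))
          ≤ a * bsDualNorm S H.E p (fun x => W x - R₁ x)
            + b * bsDualNorm S H.E p (fun x => W x - R₂ x) :=
            bsDualNorm_combo S H.E p _ _ ha hb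
        _ ≤ a * (ε * p) + b * (ε * p) :=
            add_le_add (mul_le_mul_of_nonneg_left h₁ ha) (mul_le_mul_of_nonneg_left h₂ hb)
        _ = ε * p := by rw [← add_mul, hab, one_mul]
    exact fun R' hR' => convexHull_min hW hconv hR'
  have key2 : ∀ R' : Tensor n r,
      (∀ A ∈ Cs, bsDualNorm S H.E p (fun x => A x - R' x) ≤ ε * p) →
      ∀ R ∈ convexHull ℝ Cs, bsDualNorm S H.E p (fun x => R x - R' x) ≤ ε * p := by
    intro R' hR'
    have hconv : Convex ℝ {R : Tensor n r |
        bsDualNorm S H.E p (fun x => R x - R' x) ≤ ε * p} := by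
      intro R₁ h₁ R₂ h₂ a b ha hb hab
      simp only [Set.mem_setOf_eq] at h₁ h₂ ⊢
      have hfun : (fun x => (a • R₁ + b • R₂) x - R' x)
          = fun x => a * (R₁ x - R' x) + b * (R₂ x - R' x) := by
        funext x
        simp only [Pi.add_apply, Pi.smul_apply, smul_eq_mul]
        linear_combination (R' x) * hab
      rw [hfun]
      calc bsDualNorm S H.E p (fun x => a * (R₁ x - R' x) + b * (R₂ x - R' x))
          ≤ a * bsDualNorm S H.E p (fun x => R₁ x - R' x)
            + b * bsDualNorm S H.E p (fun x => R₂ x - R' x) :=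
            bsDualNorm_combo S H.E p _ _ ha hb
        _ ≤ a * (ε * p) + b * (ε * p) :=
            add_le_add (mul_le_mul_of_nonneg_left h₁ ha) (mul_le_mul_of_nonneg_left h₂ hb)
        _ = ε * p := by rw [← add_mul, hab, one_mul]
    exact fun R hR => convexHull_min hR' hconv hR
  intro R hR R' hR'
  refine key2 R' ?_ R hR
  intro A hA
  exact key A (fun A₂ hA₂ => hdiam A hA A₂ hA₂) R' hR'

end CL2

section CL3

variable {n r : ℕ} {H : RGraph r}

/-- Homomorphism count of the edge set `E₀` for a family of tensors. -/
noncomputable def homF (H : RGraph r) (E₀ : Finset (Finset H.V))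
    (T : Finset H.V → Tensor n r) : ℝ :=
  ∑ φ : H.V → Fin n, ∏ e ∈ E₀, edgeEval (T e) φ e

lemma edgeEval_congr {V : Type} [DecidableEq V] (W : Tensor n r) {φ₁ φ₂ : V → Fin n}
    (e : Finset V) (h : ∀ v ∈ e, φ₁ v = φ₂ v) :
    edgeEval W φ₁ e = edgeEval W φ₂ e := by
  have him : e.image φ₁ = e.image φ₂ := Finset.image_congr fun v hv => h v hv
  unfold edgeEval
  rw [him]

lemma edgeEval_lin {V : Type} [DecidableEq V] (Z W : Tensor n r) (a b : ℝ)
    (φ : V → Fin n) (e : Finset V) :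
    edgeEval (fun y => a * Z y + b * W y) φ e
      = a * edgeEval Z φ e + b * edgeEval W φ e := by
  unfold edgeEval setEval
  split <;> simp

lemma edgeEval_sub {V : Type} [DecidableEq V] (Z W : Tensor n r)
    (φ : V → Fin n) (e : Finset V) :
    edgeEval (fun y => Z y - W y) φ e = edgeEval Z φ e - edgeEval W φ e := by
  unfold edgeEval setEval
  split <;> simp

lemma edgeEval_mem01 {V : Type} [DecidableEq V] {W : Tensor n r} (hW : W ∈ adjSet n r)
    (φ : V → Fin n) (e : Finset V) :
    edgeEval W φ e = 0 ∨ edgeEval W φ e = 1 := by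
  unfold edgeEval setEval
  split
  · exact hW.2.1 _
  · exact Or.inl rfl

lemma prod_erase_update (E₀ : Finset (Finset H.V)) {e : Finset H.V} (he : e ∈ E₀)
    (T : Finset H.V → Tensor n r) (R : Tensor n r) (φ : H.V → Fin n) :
    ∏ e' ∈ E₀, edgeEval ((Function.update T e R) e') φ e'
      = edgeEval R φ e * ∏ e' ∈ E₀.erase e, edgeEval (T e') φ e' := by
  rw [← Finset.mul_prod_erase E₀ _ he, Function.update_self]
  congr 1
  exact Finset.prod_congr rfl fun e'' h'' => by
    rw [Function.update_of_ne (Finset.ne_of_mem_erase h'')]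

lemma homF_update_lin (E₀ : Finset (Finset H.V)) {e : Finset H.V} (he : e ∈ E₀)
    (T : Finset H.V → Tensor n r) (a b : ℝ) (R₁ R₂ : Tensor n r) :
    homF H E₀ (Function.update T e (fun y => a * R₁ y + b * R₂ y))
      = a * homF H E₀ (Function.update T e R₁) + b * homF H E₀ (Function.update T e R₂) := by
  unfold homF
  rw [Finset.mul_sum, Finset.mul_sum, ← Finset.sum_add_distrib]
  refine Finset.sum_congr rfl fun φ _ => ?_
  rw [prod_erase_update E₀ he, prod_erase_update E₀ he, prod_erase_update E₀ he,
    edgeEval_lin]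
  ring

lemma homF_update_diff (E₀ : Finset (Finset H.V)) {e : Finset H.V} (he : e ∈ E₀)
    (T : Finset H.V → Tensor n r) (R R' : Tensor n r) :
    homF H E₀ (Function.update T e R) - homF H E₀ (Function.update T e R')
      = ∑ φ : H.V → Fin n, edgeEval (fun y => R y - R' y) φ e
          * ∏ e' ∈ E₀.erase e, edgeEval (T e') φ e' := by
  unfold homF
  rw [← Finset.sum_sub_distrib]
  refine Finset.sum_congr rfl fun φ _ => ?_
  rw [prod_erase_update E₀ he, prod_erase_update E₀ he, edgeEval_sub]
  ring

lemma max_principle (Cs : Set (Tensor n r))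
    (g : (Finset H.V → Tensor n r) → ℝ) (c : ℝ) (t : Finset (Finset H.V))
    (haff : ∀ e' ∈ t, ∀ (U : Finset H.V → Tensor n r) (a b : ℝ) (R₁ R₂ : Tensor n r),
      g (Function.update U e' (fun y => a * R₁ y + b * R₂ y))
        = a * g (Function.update U e' R₁) + b * g (Function.update U e' R₂))
    (hbase : ∀ U, (∀ e' ∈ t, U e' ∈ Cs) → |g U| ≤ c) :
    ∀ U, (∀ e' ∈ t, U e' ∈ convexHull ℝ Cs) → |g U| ≤ c := by
  suffices hs : ∀ s : Finset (Finset H.V), s ⊆ t →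
      ∀ U, (∀ e' ∈ s, U e' ∈ convexHull ℝ Cs) → (∀ e' ∈ t \ s, U e' ∈ Cs) → |g U| ≤ c by
    intro U hU
    refine hs t subset_rfl U hU fun e' he' => absurd he' (by simp)
  intro s
  induction s using Finset.induction_on with
  | empty =>
    intro _ U _ hCs
    exact hbase U fun e' he' => hCs e' (by simpa using he')
  | @insert a s ha IH =>
    intro hsub U hconv hCs
    have hat : a ∈ t := hsub (Finset.mem_insert_self a s)
    have hst : s ⊆ t := fun y hy => hsub (Finset.mem_insert_of_mem hy)
    have hΩ : Convex ℝ {R : Tensor n r | |g (Function.update U a R)| ≤ c} := by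
      intro R₁ h₁ R₂ h₂ θ₁ θ₂ hθ₁ hθ₂ hθ
      simp only [Set.mem_setOf_eq] at h₁ h₂ ⊢
      have hfun : (θ₁ • R₁ + θ₂ • R₂ : Tensor n r) = fun y => θ₁ * R₁ y + θ₂ * R₂ y := by
        funext y; simp [Pi.add_apply, Pi.smul_apply, smul_eq_mul]
      rw [hfun, haff a hat U θ₁ θ₂ R₁ R₂]
      calc |θ₁ * g (Function.update U a R₁) + θ₂ * g (Function.update U a R₂)|
          ≤ θ₁ * |g (Function.update U a R₁)| + θ₂ * |g (Function.update U a R₂)| := by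
            refine le_trans (abs_add_le _ _) ?_
            rw [abs_mul, abs_mul, abs_of_nonneg hθ₁, abs_of_nonneg hθ₂]
        _ ≤ θ₁ * c + θ₂ * c := add_le_add (mul_le_mul_of_nonneg_left h₁ hθ₁)
            (mul_le_mul_of_nonneg_left h₂ hθ₂)
        _ = c := by rw [← add_mul, hθ, one_mul]
    have hCsΩ : Cs ⊆ {R : Tensor n r | |g (Function.update U a R)| ≤ c} := by
      intro A hA
      simp only [Set.mem_setOf_eq]
      refine IH hst (Function.update U a A) (fun e' he' => ?_) (fun e' he' => ?_)
      · have hne : e' ≠ a := fun h => ha (h ▸ he')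
        rw [Function.update_of_ne hne]
        exact hconv e' (Finset.mem_insert_of_mem he')
      · by_cases hea : e' = a
        · rw [hea, Function.update_self]; exact hA
        · rw [Function.update_of_ne hea]
          refine hCs e' ?_
          rw [Finset.mem_sdiff] at he' ⊢
          exact ⟨he'.1, fun hmem => by
            rcases Finset.mem_insert.mp hmem with h | h
            · exact hea h
            · exact he'.2 h⟩
      
    have hUa : U a ∈ {R : Tensor n r | |g (Function.update U a R)| ≤ c} :=
      convexHull_min hCsΩ hΩ (hconv a (Finset.mem_insert_self a s))
    simpa [Function.update_eq_self] using hUa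

end CL3

section CL4

variable {n r : ℕ} {H : RGraph r}

/-- Identification of `Fin r` with the vertices of the edge `e`. -/
noncomputable def embEquiv (S : BaseSystem H) (e : {e // e ∈ H.E}) :
    Fin r ≃ {v // v ∈ e.1} :=
  Equiv.ofBijective (fun k => ⟨S.emb e k, S.emb_mem e k⟩) (by
    rw [Fintype.bijective_iff_injective_and_card]
    constructor
    · intro k₁ k₂ h
      exact S.emb_inj e (congrArg Subtype.val h)
    · rw [Fintype.card_coe, H.card_edge e.1 e.2, Fintype.card_fin])

/-- Glue a labeling of the edge and a labeling of the remaining vertices. -/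
noncomputable def glue (S : BaseSystem H) (e : {e // e ∈ H.E})
    (x : Fin r → Fin n) (ψ : {v : H.V // v ∉ e.1} → Fin n) : H.V → Fin n := fun v =>
  if h : v ∈ e.1 then x ((embEquiv S e).symm ⟨v, h⟩) else ψ ⟨v, h⟩

lemma glue_emb (S : BaseSystem H) (e : {e // e ∈ H.E})
    (x : Fin r → Fin n) (ψ : {v : H.V // v ∉ e.1} → Fin n) (k : Fin r) :
    glue S e x ψ (S.emb e k) = x k := by
  unfold glue
  rw [dif_pos (S.emb_mem e k)]
  congr 1
  have h1 : (⟨S.emb e k, S.emb_mem e k⟩ : {v // v ∈ e.1}) = embEquiv S e k := rfl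
  rw [h1, Equiv.symm_apply_apply]

/-- The splitting equivalence. -/
noncomputable def glueEquiv (S : BaseSystem H) (e : {e // e ∈ H.E}) :
    ((Fin r → Fin n) × ({v : H.V // v ∉ e.1} → Fin n)) ≃ (H.V → Fin n) where
  toFun q := glue S e q.1 q.2
  invFun φ := (fun k => φ (S.emb e k), fun w => φ w.1)
  left_inv q := by
    obtain ⟨x, ψ⟩ := q
    refine Prod.ext ?_ ?_
    · funext k
      exact glue_emb S e x ψ k
    · funext w
      show glue S e x ψ w.1 = ψ w
      unfold glue
      rw [dif_neg w.2]
  right_inv φ := by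
    funext v
    show glue S e _ _ v = φ v
    unfold glue
    by_cases h : v ∈ e.1
    · rw [dif_pos h]
      show φ (S.emb e ((embEquiv S e).symm ⟨v, h⟩)) = φ v
      have : S.emb e ((embEquiv S e).symm ⟨v, h⟩)
          = (embEquiv S e ((embEquiv S e).symm ⟨v, h⟩)).1 := rfl
      rw [this, Equiv.apply_symm_apply]
    · rw [dif_neg h]

lemma sum_glue (S : BaseSystem H) (e : {e // e ∈ H.E}) (G : (H.V → Fin n) → ℝ) :
    ∑ φ : H.V → Fin n, G φ
      = ∑ ψ : {v : H.V // v ∉ e.1} → Fin n, ∑ x : Fin r → Fin n, G (glue S e x ψ) := by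
  rw [← Equiv.sum_comp (glueEquiv S e) G, Fintype.sum_prod_type]
  rw [Finset.sum_comm]
  rfl

lemma glue_congr_on (S : BaseSystem H) (e : {e // e ∈ H.E}) {b : Finset (Fin r)}
    {x₁ x₂ : Fin r → Fin n} (ψ : {v : H.V // v ∉ e.1} → Fin n)
    (hx : ∀ k ∈ b, x₁ k = x₂ k) {e' : Finset H.V} (hsub : e' ∩ e.1 ⊆ S.vimage e b) :
    ∀ v ∈ e', glue S e x₁ ψ v = glue S e x₂ ψ v := by
  intro v hv
  unfold glue
  by_cases h : v ∈ e.1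
  · rw [dif_pos h, dif_pos h]
    have hvb : v ∈ S.vimage e b := hsub (Finset.mem_inter.mpr ⟨hv, h⟩)
    obtain ⟨k₀, hk₀, hek₀⟩ := Finset.mem_image.mp hvb
    have h1 : (⟨v, h⟩ : {v // v ∈ e.1}) = embEquiv S e k₀ := Subtype.ext hek₀.symm
    rw [h1, Equiv.symm_apply_apply]
    exact hx k₀ hk₀
  · rw [dif_neg h, dif_neg h]

lemma glue_image (S : BaseSystem H) (e : {e // e ∈ H.E})
    (x : Fin r → Fin n) (ψ : {v : H.V // v ∉ e.1} → Fin n) :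
    e.1.image (glue S e x ψ) = Finset.image x Finset.univ := by
  ext j
  simp only [Finset.mem_image]
  constructor
  · rintro ⟨v, hv, rfl⟩
    refine ⟨(embEquiv S e).symm ⟨v, hv⟩, Finset.mem_univ _, ?_⟩
    unfold glue
    rw [dif_pos hv]
  · rintro ⟨k, -, rfl⟩
    exact ⟨S.emb e k, S.emb_mem e k, glue_emb S e x ψ k⟩

lemma edgeEval_glue (S : BaseSystem H) (e : {e // e ∈ H.E}) {Z : Tensor n r}
    (hZsym : ∀ (σ : Equiv.Perm (Fin r)) (x : Fin r → Fin n), Z (x ∘ σ) = Z x)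
    (hZvan : ∀ x, ¬Function.Injective x → Z x = 0)
    (x : Fin r → Fin n) (ψ : {v : H.V // v ∉ e.1} → Fin n) :
    edgeEval Z (glue S e x ψ) e.1 = Z x := by
  unfold edgeEval
  rw [glue_image S e x ψ]
  by_cases hinj : Function.Injective x
  · have hcard : (Finset.image x Finset.univ).card = r := by
      rw [Finset.card_image_of_injective _ hinj, Finset.card_univ, Fintype.card_fin]
    rw [dif_pos hcard]
    unfold setEval
    set I : Finset (Fin n) := Finset.image x Finset.univ with hI
    have hxmem : ∀ k, x k ∈ I := fun k => Finset.mem_image.mpr ⟨k, Finset.mem_univ _, rfl⟩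
    let x' : Fin r ≃ {y // y ∈ I} := Equiv.ofBijective (fun k => ⟨x k, hxmem k⟩) (by
      rw [Fintype.bijective_iff_injective_and_card]
      constructor
      · intro k₁ k₂ h
        exact hinj (congrArg Subtype.val h)
      · rw [Fintype.card_coe, hcard, Fintype.card_fin])
    let σ : Equiv.Perm (Fin r) := x'.trans (I.orderIsoOfFin hcard).toEquiv.symm
    have hσ : ∀ k, ((I.orderIsoOfFin hcard) (σ k) : Fin n) = x k := by
      intro k
      show ((I.orderIsoOfFin hcard) ((I.orderIsoOfFin hcard).toEquiv.symm (x' k)) : Fin n) = x k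
      have : (I.orderIsoOfFin hcard) ((I.orderIsoOfFin hcard).toEquiv.symm (x' k)) = x' k :=
        (I.orderIsoOfFin hcard).toEquiv.apply_symm_apply (x' k)
      rw [this]
      rfl
    calc Z (fun k => ((I.orderIsoOfFin hcard) k : Fin n))
        = Z ((fun k => ((I.orderIsoOfFin hcard) k : Fin n)) ∘ σ) := (hZsym σ _).symm
      _ = Z x := by
          congr 1
          funext k
          exact hσ k
  · rw [dif_neg, (hZvan x hinj)]
    intro hcard
    apply hinj
    have h1 : Set.InjOn x ↑(Finset.univ : Finset (Fin r)) := by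
      rw [← Finset.card_image_iff]
      rw [hcard, Finset.card_univ, Fintype.card_fin]
    rw [Finset.coe_univ] at h1
    exact fun a b hab => h1 (Set.mem_univ a) (Set.mem_univ b) hab

end CL4

section CL5

variable {n r : ℕ} {H : RGraph r}

private lemma ite01_eq_one (c : Prop) [Decidable c] : ((if c then (1:ℝ) else 0) = 1) ↔ c := by
  by_cases h : c <;> simp [h]

/-- Extend a labeling of `b ⊆ Fin r` to `Fin r` by a default value. -/
noncomputable def extB (hn : 0 < n) (b : Finset (Fin r))
    (y : {k : Fin r // k ∈ b} → Fin n) : Fin r → Fin n := fun k =>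
  if h : k ∈ b then y ⟨k, h⟩ else ⟨0, hn⟩

lemma extB_mem (hn : 0 < n) (b : Finset (Fin r)) (y : {k : Fin r // k ∈ b} → Fin n)
    (k : Fin r) (h : k ∈ b) : extB hn b y k = y ⟨k, h⟩ := dif_pos h

lemma extB_restrict (hn : 0 < n) (b : Finset (Fin r)) (x : Fin r → Fin n) :
    ∀ k ∈ b, x k = extB hn b (fun v => x v.1) k := by
  intro k hk
  rw [extB_mem hn b _ k hk]

lemma sum_restrict (hn : 0 < n) (b : Finset (Fin r))
    (g : ({k : Fin r // k ∈ b} → Fin n) → ℝ) :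
    ∑ x : Fin r → Fin n, g (fun v => x v.1)
      = (n : ℝ) ^ (r - b.card) * ∑ y : {k : Fin r // k ∈ b} → Fin n, g y := by
  classical
  have hE := Equiv.piEquivPiSubtypeProd (fun k : Fin r => k ∈ b) (fun _ => Fin n)
  have h1 : ∑ x : Fin r → Fin n, g (fun v => x v.1)
      = ∑ q : ({k : Fin r // k ∈ b} → Fin n) × ({k : Fin r // ¬ k ∈ b} → Fin n), g q.1 := by
    rw [← Equiv.sum_comp (Equiv.piEquivPiSubtypeProd (fun k : Fin r => k ∈ b)
      (fun _ => Fin n)) (fun q => g q.1)]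
    rfl
  rw [h1, Fintype.sum_prod_type]
  have hcard : (Fintype.card ({k : Fin r // ¬ k ∈ b} → Fin n)) = n ^ (r - b.card) := by
    rw [Fintype.card_fun, Fintype.card_fin, Fintype.card_subtype_compl]
    congr 2
    · rw [Fintype.card_fin]
    · exact Fintype.card_coe b
  rw [Finset.mul_sum]
  refine Finset.sum_congr rfl fun y _ => ?_
  have h2 : (∑ y1 : {k : Fin r // ¬ k ∈ b} → Fin n, g (y, y1).1)
      = ∑ _y1 : {k : Fin r // ¬ k ∈ b} → Fin n, g y := rfl
  rw [h2, Finset.sum_const, Finset.card_univ, hcard, nsmul_eq_mul]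
  push_cast
  ring

lemma exp_ineq (S : BaseSystem H) (hS : S.Good) (e0 : {e // e ∈ H.E})
    {E₀ : Finset (Finset H.V)} (hE₀ : E₀ ⊆ H.E) (heE : e0.1 ∈ E₀)
    {b : Finset (Fin r)} (hb : b ∈ S.B e0) :
    E₀.card - 1 ≤ (edeg H.E e0.1 - edegSub H.E (S.vimage e0 b) e0.1)
      + ((E₀.erase e0.1).filter (fun e' => e' ∩ e0.1 ⊆ S.vimage e0 b)).card := by
  classical
  have hecard : e0.1.card = r := H.card_edge e0.1 e0.2
  have hbu : b ≠ Finset.univ := (hS e0).2.1 b hb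
  have hbcard : b.card < r := by
    calc b.card < (Finset.univ : Finset (Fin r)).card :=
        Finset.card_lt_card (Finset.ssubset_univ_iff.mpr hbu)
      _ = r := by rw [Finset.card_univ, Fintype.card_fin]
  have hnotsub : ¬ e0.1 ⊆ S.vimage e0 b := by
    intro hsub
    have h1 : e0.1.card ≤ (S.vimage e0 b).card := Finset.card_le_card hsub
    have h2 : (S.vimage e0 b).card ≤ b.card := Finset.card_image_le
    omega
  set M := H.E.filter (fun e' => e' ≠ e0.1 ∧ (e' ∩ e0.1).Nonempty) with hM
  set N := H.E.filter (fun e' => (e' ∩ e0.1).Nonempty ∧ e' ∩ e0.1 ⊆ S.vimage e0 b) with hN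
  have hNM : N ⊆ M := by
    intro e' he'
    rw [hN, Finset.mem_filter] at he'
    rw [hM, Finset.mem_filter]
    refine ⟨he'.1, fun hee => ?_, he'.2.1⟩
    apply hnotsub
    have : e' ∩ e0.1 = e0.1 := by rw [hee, Finset.inter_self]
    rw [← this]
    exact he'.2.2
  have hMeq : edeg H.E e0.1 = M.card := rfl
  have hNeq : edegSub H.E (S.vimage e0 b) e0.1 = N.card := rfl
  set t := E₀.erase e0.1 with htdef
  have hsplit : (t.filter (fun e' => e' ∩ e0.1 ⊆ S.vimage e0 b)).card
      + (t.filter (fun e' => ¬ (e' ∩ e0.1 ⊆ S.vimage e0 b))).card = t.card :=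
    Finset.card_filter_add_card_filter_not _
  have hsub2 : t.filter (fun e' => ¬ (e' ∩ e0.1 ⊆ S.vimage e0 b)) ⊆ M \ N := by
    intro e' he'
    rw [Finset.mem_filter] at he'
    obtain ⟨het, hns⟩ := he'
    have heH : e' ∈ H.E := hE₀ (Finset.mem_of_mem_erase het)
    have hne : e' ≠ e0.1 := Finset.ne_of_mem_erase het
    have hnonempty : (e' ∩ e0.1).Nonempty := by
      rcases Finset.eq_empty_or_nonempty (e' ∩ e0.1) with h | h
      · exact absurd (h ▸ Finset.empty_subset _) hns
      · exact h
    rw [Finset.mem_sdiff, hM, hN, Finset.mem_filter, Finset.mem_filter]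
    exact ⟨⟨heH, hne, hnonempty⟩, fun hmem => hns hmem.2.2⟩
  have h3 : (t.filter (fun e' => ¬ (e' ∩ e0.1 ⊆ S.vimage e0 b))).card ≤ (M \ N).card :=
    Finset.card_le_card hsub2
  have h4 : (M \ N).card = M.card - N.card := Finset.card_sdiff_of_subset hNM
  have h5 : N.card ≤ M.card := Finset.card_le_card hNM
  have h6 : t.card = E₀.card - 1 := Finset.card_erase_of_mem heE
  have h7 : 1 ≤ E₀.card := Finset.card_pos.mpr ⟨e0.1, heE⟩
  rw [hMeq, hNeq]
  omega

end CL5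

section CL6

variable {n r : ℕ} {H : RGraph r}

lemma swap_bool (S : BaseSystem H) (hS : S.Good) {p : ℝ} (hp0 : 0 < p) (hp1 : p ≤ 1)
    (hn : 0 < n) (e0 : {e // e ∈ H.E}) {E₀ : Finset (Finset H.V)} (hE₀ : E₀ ⊆ H.E)
    (heE : e0.1 ∈ E₀) (U : Finset H.V → Tensor n r)
    (hU : ∀ e' ∈ E₀.erase e0.1, U e' ∈ adjSet n r)
    (Z : Tensor n r) (hZsym : ∀ (σ : Equiv.Perm (Fin r)) x, Z (x ∘ σ) = Z x)
    (hZvan : ∀ x, ¬Function.Injective x → Z x = 0)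
    {δ : ℝ} (hδ : 0 ≤ δ) (hZ : bsDualNorm S H.E p Z ≤ δ)
    {c : ℝ} (hc : 0 ≤ c)
    (hBnd : ∀ F ⊆ E₀.erase e0.1,
      homF H F U ≤ c * ((n:ℝ) ^ Fintype.card H.V * p ^ F.card)) :
    |∑ φ : H.V → Fin n, edgeEval Z φ e0.1 * ∏ e' ∈ E₀.erase e0.1, edgeEval (U e') φ e'|
      ≤ (1 + 2^r) * c * δ * ((n:ℝ) ^ Fintype.card H.V * p ^ (E₀.card - 1)) := by
  classical
  set t := E₀.erase e0.1 with ht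
  set Bw := S.wb H.E e0 with hBwdef
  set A : Finset (Fin r) → Finset (Finset H.V) :=
    fun b => t.filter (fun e' => e' ∩ e0.1 ⊆ S.vimage e0 b) with hA
  have hAt : ∀ b, A b ⊆ t := fun b => Finset.filter_subset _ _
  have hU01 : ∀ e' ∈ t, ∀ φ : H.V → Fin n,
      edgeEval (U e') φ e' = 0 ∨ edgeEval (U e') φ e' = 1 :=
    fun e' he' φ => edgeEval_mem01 (hU e' he') φ e'
  have hcov : ∀ e' ∈ t, ∃ b ∈ S.B e0, e' ∩ e0.1 ⊆ S.vimage e0 b := by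
    intro e' he'
    by_cases hd : e' ∩ e0.1 = ∅
    · exact ⟨∅, (hS e0).1, by rw [hd]; exact Finset.empty_subset _⟩
    · exact (hS e0).2.2.2 e' (hE₀ (Finset.mem_of_mem_erase he')) (Finset.ne_of_mem_erase he')
  set f : ({v : H.V // v ∉ e0.1} → Fin n) → Factors n r := fun ψ b y =>
    decide (∀ e' ∈ A b, edgeEval (U e') (glue S e0 (extB hn b y) ψ) e' = 1) with hf
  have hBB : Bw.B = S.B e0 := rfl
  -- identity: the test tensor computes the product over the other edges
  have hI1 : ∀ (ψ : {v : H.V // v ∉ e0.1} → Fin n) (x : Fin r → Fin n),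
      testFun Bw (f ψ) x = ∏ e' ∈ t, edgeEval (U e') (glue S e0 x ψ) e' := by
    intro ψ x
    set v : Finset H.V → ℝ := fun e' => edgeEval (U e') (glue S e0 x ψ) e' with hv
    have hv01 : ∀ e' ∈ t, v e' = 0 ∨ v e' = 1 := fun e' he' => hU01 e' he' _
    have hfactor : ∀ b ∈ Bw.B, (if f ψ b (fun w => x w.1) then (1:ℝ) else 0)
        = if (∀ e' ∈ A b, v e' = 1) then 1 else 0 := by
      intro b _
      have heq : ∀ e' ∈ A b,
          edgeEval (U e') (glue S e0 (extB hn b (fun w => x w.1)) ψ) e' = v e' := by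
        intro e' he'
        refine (edgeEval_congr _ e' (glue_congr_on S e0 ψ (extB_restrict hn b x)
          (Finset.mem_filter.mp he').2)).symm
      rw [hf]
      simp only [decide_eq_true_eq]
      refine if_congr ?_ rfl rfl
      constructor
      · intro hall e' he'
        rw [← heq e' he']
        exact hall e' he'
      · intro hall e' he'
        rw [heq e' he']
        exact hall e' he'
    calc testFun Bw (f ψ) x
        = ∏ b ∈ Bw.B, (if (∀ e' ∈ A b, v e' = 1) then (1:ℝ) else 0) :=
          Finset.prod_congr rfl hfactor
      _ = if (∀ b ∈ Bw.B, ∀ e' ∈ A b, v e' = 1) then 1 else 0 := by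
          rw [prod_eq_ite_real _ _ (fun b _ => by split <;> simp)]
          refine if_congr (forall₂_congr fun b hb => ite01_eq_one _) rfl rfl
      _ = if (∀ e' ∈ t, v e' = 1) then 1 else 0 := by
          refine if_congr ⟨fun hall e' he' => ?_, fun hall b hb e' he' => hall e' (hAt b he')⟩
            rfl rfl
          obtain ⟨b, hb, hsub⟩ := hcov e' he'
          exact hall b (hBB ▸ hb) e' (Finset.mem_filter.mpr ⟨he', hsub⟩)
      _ = ∏ e' ∈ t, v e' := (prod_eq_ite_real _ _ hv01).symm
  -- split the sum
  have hsplit : ∑ φ : H.V → Fin n, edgeEval Z φ e0.1 * ∏ e' ∈ t, edgeEval (U e') φ e'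
      = ∑ ψ : {v : H.V // v ∉ e0.1} → Fin n,
          ∑ x : Fin r → Fin n, Z x * testFun Bw (f ψ) x := by
    rw [sum_glue S e0 (fun φ => edgeEval Z φ e0.1 * ∏ e' ∈ t, edgeEval (U e') φ e')]
    refine Finset.sum_congr rfl fun ψ _ => Finset.sum_congr rfl fun x _ => ?_
    rw [edgeEval_glue S e0 hZsym hZvan, hI1]
  -- dual norm bound for each ψ
  have hdZ : dualNorm n p Bw Z ≤ δ := le_trans (dualNorm_le_bsDualNorm S H.E p Z e0) hZ
  have hstep1 : |∑ ψ : {v : H.V // v ∉ e0.1} → Fin n,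
        ∑ x : Fin r → Fin n, Z x * testFun Bw (f ψ) x|
      ≤ δ * ∑ ψ : {v : H.V // v ∉ e0.1} → Fin n, testNorm p Bw (f ψ) := by
    rw [Finset.mul_sum]
    refine le_trans (Finset.abs_sum_le_sum_abs _ _) (Finset.sum_le_sum fun ψ _ => ?_)
    refine le_trans (pair_le_dualNorm p Bw Z (f ψ)) ?_
    exact mul_le_mul_of_nonneg_right hdZ (testNorm_nonneg p Bw (f ψ))
  -- bound the test norms
  have hfac_nonneg : ∀ ψ b, (0:ℝ) ≤ facNorm1 (f ψ) b := fun ψ b => Nat.cast_nonneg _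
  have hterm_nonneg : ∀ (ψ : {v : H.V // v ∉ e0.1} → Fin n) b,
      0 ≤ (n:ℝ) ^ (r - b.card) * p ^ (Bw.dstar - Bw.d b) * facNorm1 (f ψ) b := by
    intro ψ b
    refine mul_nonneg (mul_nonneg (by positivity) (by positivity)) (hfac_nonneg ψ b)
  have htn_le : ∀ ψ : {v : H.V // v ∉ e0.1} → Fin n,
      testNorm p Bw (f ψ) ≤ (∑ x : Fin r → Fin n, testFun Bw (f ψ) x)
        + ∑ b ∈ Bw.B, (n:ℝ) ^ (r - b.card) * p ^ (Bw.dstar - Bw.d b) * facNorm1 (f ψ) b := by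
    intro ψ
    have hRHS : 0 ≤ (∑ x : Fin r → Fin n, testFun Bw (f ψ) x)
        + ∑ b ∈ Bw.B, (n:ℝ) ^ (r - b.card) * p ^ (Bw.dstar - Bw.d b) * facNorm1 (f ψ) b :=
      add_nonneg (Finset.sum_nonneg fun x _ => testFun_nonneg Bw (f ψ) x)
        (Finset.sum_nonneg fun b _ => hterm_nonneg ψ b)
    refine max_le ?_ ?_
    · have h1 : ∑ x : Fin r → Fin n, |testFun Bw (f ψ) x|
          = ∑ x : Fin r → Fin n, testFun Bw (f ψ) x :=
        Finset.sum_congr rfl fun x _ => abs_of_nonneg (testFun_nonneg Bw (f ψ) x)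
      rw [h1]
      exact le_add_of_nonneg_right (Finset.sum_nonneg fun b _ => hterm_nonneg ψ b)
    · refine Real.iSup_le (fun b => ?_) hRHS
      by_cases hb : b ∈ Bw.B
      · haveI : Nonempty (b ∈ Bw.B) := ⟨hb⟩
        rw [ciSup_const]
        refine le_add_of_nonneg_of_le
          (Finset.sum_nonneg fun x _ => testFun_nonneg Bw (f ψ) x) ?_
        exact Finset.single_le_sum (fun b' _ => hterm_nonneg ψ b') hb
      · haveI : IsEmpty (b ∈ Bw.B) := ⟨hb⟩
        rw [Real.iSup_of_isEmpty]
        exact hRHS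
  -- the first part sums to the homomorphism count of t
  have hAsum : ∑ ψ : {v : H.V // v ∉ e0.1} → Fin n, ∑ x : Fin r → Fin n, testFun Bw (f ψ) x
      = homF H t U := by
    unfold homF
    rw [sum_glue S e0 (fun φ => ∏ e' ∈ t, edgeEval (U e') φ e')]
    exact Finset.sum_congr rfl fun ψ _ => Finset.sum_congr rfl fun x _ => hI1 ψ x
  -- the b-part sums to the homomorphism count of A b
  have hBsum : ∀ b ∈ Bw.B,
      ∑ ψ : {v : H.V // v ∉ e0.1} → Fin n, (n:ℝ) ^ (r - b.card) * facNorm1 (f ψ) b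
        = homF H (A b) U := by
    intro b _
    unfold homF
    rw [sum_glue S e0 (fun φ => ∏ e' ∈ A b, edgeEval (U e') φ e')]
    refine Finset.sum_congr rfl fun ψ _ => ?_
    symm
    set g : ({k : Fin r // k ∈ b} → Fin n) → ℝ :=
      fun y => ∏ e' ∈ A b, edgeEval (U e') (glue S e0 (extB hn b y) ψ) e' with hg
    have hdep : ∀ x : Fin r → Fin n,
        ∏ e' ∈ A b, edgeEval (U e') (glue S e0 x ψ) e' = g (fun w => x w.1) := by
      intro x
      refine Finset.prod_congr rfl fun e' he' => ?_
      exact edgeEval_congr _ e' (glue_congr_on S e0 ψ (extB_restrict hn b x)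
        (Finset.mem_filter.mp he').2)
    have hfn : ∑ y : {k : Fin r // k ∈ b} → Fin n, g y = facNorm1 (f ψ) b := by
      unfold facNorm1
      rw [← Finset.sum_boole]
      refine Finset.sum_congr rfl fun y _ => ?_
      have hgy : g y = if (∀ e' ∈ A b,
          edgeEval (U e') (glue S e0 (extB hn b y) ψ) e' = 1) then (1:ℝ) else 0 :=
        prod_eq_ite_real _ _ (fun e' he' => hU01 e' (hAt b he') _)
      rw [hgy, hf]
      simp only [decide_eq_true_eq]
    calc ∑ x : Fin r → Fin n, ∏ e' ∈ A b, edgeEval (U e') (glue S e0 x ψ) e'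
        = ∑ x : Fin r → Fin n, g (fun w => x w.1) := Finset.sum_congr rfl fun x _ => hdep x
      _ = (n:ℝ) ^ (r - b.card) * ∑ y : {k : Fin r // k ∈ b} → Fin n, g y :=
          sum_restrict hn b g
      _ = (n:ℝ) ^ (r - b.card) * facNorm1 (f ψ) b := by rw [hfn]
  -- assemble
  set X : ℝ := (n:ℝ) ^ Fintype.card H.V * p ^ (E₀.card - 1) with hX
  have hXnn : 0 ≤ X := mul_nonneg (by positivity) (by positivity)
  have htcard : t.card = E₀.card - 1 := Finset.card_erase_of_mem heE
  have hsum_tn : ∑ ψ : {v : H.V // v ∉ e0.1} → Fin n, testNorm p Bw (f ψ)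
      ≤ (1 + 2^r) * c * X := by
    have hstep2 : ∑ ψ : {v : H.V // v ∉ e0.1} → Fin n, testNorm p Bw (f ψ)
        ≤ homF H t U + ∑ b ∈ Bw.B, p ^ (Bw.dstar - Bw.d b) * homF H (A b) U := by
      refine le_trans (Finset.sum_le_sum fun ψ _ => htn_le ψ) ?_
      rw [Finset.sum_add_distrib, hAsum]
      refine add_le_add le_rfl (le_of_eq ?_)
      rw [Finset.sum_comm]
      refine Finset.sum_congr rfl fun b hb => ?_
      rw [← hBsum b hb, Finset.mul_sum]
      exact Finset.sum_congr rfl fun ψ _ => by ring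
    have hbound_t : homF H t U ≤ c * X := by
      have h1 := hBnd t subset_rfl
      rwa [htcard] at h1
    have hbound_b : ∀ b ∈ Bw.B, p ^ (Bw.dstar - Bw.d b) * homF H (A b) U ≤ c * X := by
      intro b hb
      have h1 := hBnd (A b) (hAt b)
      have hp_nn : (0:ℝ) ≤ p ^ (Bw.dstar - Bw.d b) := by positivity
      calc p ^ (Bw.dstar - Bw.d b) * homF H (A b) U
          ≤ p ^ (Bw.dstar - Bw.d b) * (c * ((n:ℝ) ^ Fintype.card H.V * p ^ (A b).card)) :=
            mul_le_mul_of_nonneg_left h1 hp_nn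
        _ = c * (n:ℝ) ^ Fintype.card H.V * p ^ ((Bw.dstar - Bw.d b) + (A b).card) := by
            rw [pow_add]; ring
        _ ≤ c * (n:ℝ) ^ Fintype.card H.V * p ^ (E₀.card - 1) := by
            refine mul_le_mul_of_nonneg_left ?_ (mul_nonneg hc (by positivity))
            exact pow_le_pow_of_le_one (le_of_lt hp0) hp1 (exp_ineq S hS e0 hE₀ heE (hBB ▸ hb))
        _ = c * X := by rw [hX]; ring
    have hcardB : ((Bw.B.card : ℕ) : ℝ) ≤ 2^r := by
      have h2 : Bw.B.card ≤ Fintype.card (Finset (Fin r)) := Finset.card_le_univ _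
      rw [Fintype.card_finset, Fintype.card_fin] at h2
      calc ((Bw.B.card : ℕ) : ℝ) ≤ ((2^r : ℕ) : ℝ) := by exact_mod_cast h2
        _ = 2^r := by push_cast; ring
    calc ∑ ψ : {v : H.V // v ∉ e0.1} → Fin n, testNorm p Bw (f ψ)
        ≤ homF H t U + ∑ b ∈ Bw.B, p ^ (Bw.dstar - Bw.d b) * homF H (A b) U := hstep2
      _ ≤ c * X + ∑ _b ∈ Bw.B, c * X :=
          add_le_add hbound_t (Finset.sum_le_sum hbound_b)
      _ = (1 + (Bw.B.card : ℝ)) * (c * X) := by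
          rw [Finset.sum_const, nsmul_eq_mul]; ring
      _ ≤ (1 + 2^r) * (c * X) := by
          refine mul_le_mul_of_nonneg_right ?_ (mul_nonneg hc hXnn)
          linarith [hcardB]
      _ = (1 + 2^r) * c * X := by ring
  calc |∑ φ : H.V → Fin n, edgeEval Z φ e0.1 * ∏ e' ∈ t, edgeEval (U e') φ e'|
      = |∑ ψ : {v : H.V // v ∉ e0.1} → Fin n,
          ∑ x : Fin r → Fin n, Z x * testFun Bw (f ψ) x| := by rw [hsplit]
    _ ≤ δ * ∑ ψ : {v : H.V // v ∉ e0.1} → Fin n, testNorm p Bw (f ψ) := hstep1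
    _ ≤ δ * ((1 + 2^r) * c * X) := mul_le_mul_of_nonneg_left hsum_tn hδ
    _ = (1 + 2^r) * c * δ * X := by ring

end CL6

section CL7

variable {n r : ℕ} {H : RGraph r}

lemma hull_props {Cs : Set (Tensor n r)} (hCs : Cs ⊆ adjSet n r) :
    ∀ W ∈ convexHull ℝ Cs, (∀ (σ : Equiv.Perm (Fin r)) (x : Fin r → Fin n), W (x ∘ σ) = W x)
      ∧ ∀ x, ¬Function.Injective x → W x = 0 := by
  have hK : Convex ℝ {W : Tensor n r |
      (∀ (σ : Equiv.Perm (Fin r)) (x : Fin r → Fin n), W (x ∘ σ) = W x)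
        ∧ ∀ x, ¬Function.Injective x → W x = 0} := by
    intro W₁ h₁ W₂ h₂ a b _ _ _
    simp only [Set.mem_setOf_eq] at h₁ h₂ ⊢
    constructor
    · intro σ x
      simp only [Pi.add_apply, Pi.smul_apply, smul_eq_mul]
      rw [h₁.1 σ x, h₂.1 σ x]
    · intro x hx
      simp only [Pi.add_apply, Pi.smul_apply, smul_eq_mul]
      rw [h₁.2 x hx, h₂.2 x hx]
      ring
  intro W hW
  refine convexHull_min ?_ hK hW
  intro A hA
  exact ⟨(hCs hA).1, (hCs hA).2.2⟩

lemma homF_congr (E₀ : Finset (Finset H.V)) {T₁ T₂ : Finset H.V → Tensor n r}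
    (h : ∀ e' ∈ E₀, T₁ e' = T₂ e') : homF (n := n) H E₀ T₁ = homF H E₀ T₂ :=
  Finset.sum_congr rfl fun φ _ => Finset.prod_congr rfl fun e' he' => by rw [h e' he']

lemma swap_conv (S : BaseSystem H) (hS : S.Good) {p : ℝ} (hp0 : 0 < p) (hp1 : p ≤ 1)
    (hn : 0 < n) (e0 : {e // e ∈ H.E}) {E₀ : Finset (Finset H.V)} (hE₀ : E₀ ⊆ H.E)
    (heE : e0.1 ∈ E₀) (Cs : Set (Tensor n r)) (hCs : Cs ⊆ adjSet n r)
    {δ : ℝ} (hδ : 0 ≤ δ)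
    (hdiff : ∀ R ∈ convexHull ℝ Cs, ∀ R' ∈ convexHull ℝ Cs,
      bsDualNorm S H.E p (fun x => R x - R' x) ≤ δ)
    {c : ℝ} (hc : 0 ≤ c)
    (hBndAll : ∀ (U : Finset H.V → Tensor n r),
      (∀ e' ∈ E₀.erase e0.1, U e' ∈ convexHull ℝ Cs) →
      ∀ F ⊆ E₀.erase e0.1, homF H F U ≤ c * ((n:ℝ) ^ Fintype.card H.V * p ^ F.card))
    (U : Finset H.V → Tensor n r) (hU : ∀ e' ∈ E₀.erase e0.1, U e' ∈ convexHull ℝ Cs)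
    {R R' : Tensor n r} (hR : R ∈ convexHull ℝ Cs) (hR' : R' ∈ convexHull ℝ Cs) :
    |homF H E₀ (Function.update U e0.1 R) - homF H E₀ (Function.update U e0.1 R')|
      ≤ (1 + 2^r) * c * δ * ((n:ℝ) ^ Fintype.card H.V * p ^ (E₀.card - 1)) := by
  classical
  refine max_principle Cs
    (fun U => homF H E₀ (Function.update U e0.1 R) - homF H E₀ (Function.update U e0.1 R'))
    _ (E₀.erase e0.1) ?haff ?hbase U hU
  case haff =>
    intro e' he' W a b R₁ R₂
    have hne : e' ≠ e0.1 := Finset.ne_of_mem_erase he'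
    have he'E : e' ∈ E₀ := Finset.mem_of_mem_erase he'
    have h1 : ∀ (Y W₀ : Tensor n r),
        homF (n := n) H E₀ (Function.update (Function.update W e' W₀) e0.1 Y)
          = homF H E₀ (Function.update (Function.update W e0.1 Y) e' W₀) := fun Y W₀ => by
      rw [Function.update_comm hne]
    simp only [h1]
    rw [homF_update_lin E₀ he'E _ a b R₁ R₂, homF_update_lin E₀ he'E _ a b R₁ R₂]
    ring
  case hbase =>
    intro U' hU'
    have hdiffRR : homF H E₀ (Function.update U' e0.1 R)
          - homF H E₀ (Function.update U' e0.1 R')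
        = ∑ φ : H.V → Fin n, edgeEval (fun y => R y - R' y) φ e0.1
            * ∏ e' ∈ E₀.erase e0.1, edgeEval (U' e') φ e' :=
      homF_update_diff E₀ heE U' R R'
    show |homF H E₀ (Function.update U' e0.1 R) - homF H E₀ (Function.update U' e0.1 R')| ≤ _
    rw [hdiffRR]
    have hRprops := hull_props hCs R hR
    have hR'props := hull_props hCs R' hR'
    refine swap_bool S hS hp0 hp1 hn e0 hE₀ heE U'
      (fun e' he' => hCs (hU' e' he')) _ ?_ ?_ hδ (hdiff R hR R' hR') hc
      (hBndAll U' fun e' he' => subset_convexHull ℝ Cs (hU' e' he'))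
    · intro σ x
      show R (x ∘ σ) - R' (x ∘ σ) = R x - R' x
      rw [hRprops.1 σ x, hR'props.1 σ x]
    · intro x hx
      show R x - R' x = 0
      rw [hRprops.2 x hx, hR'props.2 x hx]
      ring

lemma compare (S : BaseSystem H) (hS : S.Good) {p : ℝ} (hp0 : 0 < p) (hp1 : p ≤ 1)
    (hn : 0 < n) {E₀ : Finset (Finset H.V)} (hE₀ : E₀ ⊆ H.E)
    (Cs : Set (Tensor n r)) (hCs : Cs ⊆ adjSet n r)
    {δ : ℝ} (hδ : 0 ≤ δ)
    (hdiff : ∀ R ∈ convexHull ℝ Cs, ∀ R' ∈ convexHull ℝ Cs,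
      bsDualNorm S H.E p (fun x => R x - R' x) ≤ δ)
    {c : ℝ} (hc : 0 ≤ c)
    (hBndAll : ∀ F ⊆ E₀, F ≠ E₀ → ∀ (U : Finset H.V → Tensor n r),
      (∀ e' ∈ F, U e' ∈ convexHull ℝ Cs) →
      homF H F U ≤ c * ((n:ℝ) ^ Fintype.card H.V * p ^ F.card))
    (T T' : Finset H.V → Tensor n r)
    (hT : ∀ e' ∈ E₀, T e' ∈ convexHull ℝ Cs) (hT' : ∀ e' ∈ E₀, T' e' ∈ convexHull ℝ Cs) :
    |homF H E₀ T - homF H E₀ T'| ≤ (E₀.card : ℝ)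
      * ((1 + 2^r) * c * δ * ((n:ℝ) ^ Fintype.card H.V * p ^ (E₀.card - 1))) := by
  classical
  set SB : ℝ := (1 + 2^r) * c * δ * ((n:ℝ) ^ Fintype.card H.V * p ^ (E₀.card - 1)) with hSB
  have hSBnn : 0 ≤ SB := by
    rw [hSB]
    have h2r : (0:ℝ) < 1 + 2^r := by positivity
    refine mul_nonneg (mul_nonneg (mul_nonneg (le_of_lt h2r) hc) hδ) ?_
    positivity
  set mix : Finset (Finset H.V) → (Finset H.V → Tensor n r) :=
    fun s e' => if e' ∈ s then T' e' else T e' with hmix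
  have claim : ∀ s : Finset (Finset H.V), s ⊆ E₀ →
      |homF H E₀ T - homF H E₀ (mix s)| ≤ (s.card : ℝ) * SB := by
    intro s
    induction s using Finset.induction_on with
    | empty =>
      intro _
      have hm : homF (n := n) H E₀ (mix ∅) = homF H E₀ T :=
        homF_congr E₀ fun e' _ => by simp [hmix]
      rw [hm, sub_self, abs_zero, Finset.card_empty]
      simp
    | @insert a s ha IH =>
      intro hsub
      have haE : a ∈ E₀ := hsub (Finset.mem_insert_self a s)
      have hsE : s ⊆ E₀ := fun y hy => hsub (Finset.mem_insert_of_mem hy)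
      have e1 : homF (n := n) H E₀ (mix s) = homF H E₀ (Function.update (mix s) a (T a)) := by
        refine homF_congr E₀ fun e' _ => ?_
        by_cases he : e' = a
        · subst he
          rw [Function.update_self]
          show (if e' ∈ s then T' e' else T e') = T e'
          rw [if_neg ha]
        · rw [Function.update_of_ne he]
      have e2 : homF (n := n) H E₀ (mix (insert a s))
          = homF H E₀ (Function.update (mix s) a (T' a)) := by
        refine homF_congr E₀ fun e' _ => ?_
        by_cases he : e' = a
        · subst he
          rw [Function.update_self]
          show (if e' ∈ insert e' s then T' e' else T e') = T' e'
          rw [if_pos (Finset.mem_insert_self _ _)]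
        · rw [Function.update_of_ne he]
          show (if e' ∈ insert a s then T' e' else T e') = (if e' ∈ s then T' e' else T e')
          simp only [Finset.mem_insert, he, false_or]
      have hmixconv : ∀ e' ∈ E₀.erase a, mix s e' ∈ convexHull ℝ Cs := by
        intro e' he'
        show (if e' ∈ s then T' e' else T e') ∈ convexHull ℝ Cs
        split
        · exact hT' e' (Finset.mem_of_mem_erase he')
        · exact hT e' (Finset.mem_of_mem_erase he')
      have hBnd' : ∀ (U : Finset H.V → Tensor n r),
          (∀ e' ∈ E₀.erase a, U e' ∈ convexHull ℝ Cs) →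
          ∀ F ⊆ E₀.erase a, homF H F U
            ≤ c * ((n:ℝ) ^ Fintype.card H.V * p ^ F.card) := by
        intro U hUc F hF
        have hFE : F ⊆ E₀ := hF.trans (Finset.erase_subset _ _)
        have hFne : F ≠ E₀ := by
          intro hcon
          exact Finset.notMem_erase a E₀ (hF (hcon ▸ haE))
        exact hBndAll F hFE hFne U (fun e' he' => hUc e' (hF he'))
      have hswap := swap_conv S hS hp0 hp1 hn ⟨a, hE₀ haE⟩ hE₀ haE Cs hCs hδ hdiff hc
        hBnd' (mix s) hmixconv (hT a haE) (hT' a haE)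
      calc |homF H E₀ T - homF H E₀ (mix (insert a s))|
          ≤ |homF H E₀ T - homF H E₀ (mix s)|
            + |homF H E₀ (mix s) - homF H E₀ (mix (insert a s))| := abs_sub_le _ _ _
        _ ≤ (s.card : ℝ) * SB + SB := by
            refine add_le_add (IH hsE) ?_
            rw [e1, e2]
            exact hswap
        _ = ((insert a s).card : ℝ) * SB := by
            rw [Finset.card_insert_of_notMem ha]
            push_cast
            ring
  have hfin := claim E₀ subset_rfl
  have hm : homF (n := n) H E₀ (mix E₀) = homF H E₀ T' :=
    homF_congr E₀ fun e' he' => by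
      show (if e' ∈ E₀ then T' e' else T e') = T' e'
      rw [if_pos he']
  rw [hm] at hfin
  exact hfin

end CL7

section CL8

variable {n r : ℕ} {H : RGraph r}

/-- The recursive constant. -/
noncomputable def Dc (r : ℕ) : ℕ → ℝ
  | 0 => 1
  | k+1 => 1 + ((k:ℝ)+1) * (1 + 2^r) * Dc r k

lemma Dc_zero (r : ℕ) : Dc r 0 = 1 := rfl

lemma Dc_succ (r k : ℕ) : Dc r (k+1) = 1 + ((k:ℝ)+1) * (1 + 2^r) * Dc r k := rfl

lemma one_le_Dc (r : ℕ) : ∀ k, 1 ≤ Dc r k := by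
  intro k
  induction k with
  | zero => exact le_refl 1
  | succ k IH =>
    rw [Dc_succ]
    have h1 : (0:ℝ) ≤ ((k:ℝ)+1) * (1 + 2^r) * Dc r k := by
      have h2 : (0:ℝ) ≤ (k:ℝ)+1 := by positivity
      have h3 : (0:ℝ) ≤ 1 + 2^r := by positivity
      have h4 : (0:ℝ) ≤ Dc r k := le_trans zero_le_one IH
      exact mul_nonneg (mul_nonneg h2 h3) h4
    linarith

lemma homF_empty (T : Finset H.V → Tensor n r) :
    homF (n := n) H ∅ T = (n:ℝ) ^ Fintype.card H.V := by
  unfold homF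
  classical
  have h1 : ∀ φ : H.V → Fin n, ∏ e ∈ (∅ : Finset (Finset H.V)), edgeEval (T e) φ e = 1 :=
    fun φ => Finset.prod_empty
  rw [Finset.sum_congr rfl fun φ _ => h1 φ, Finset.sum_const, Finset.card_univ,
    Fintype.card_fun, Fintype.card_fin, nsmul_eq_mul]
  push_cast
  ring

lemma homF_const (E₀ : Finset (Finset H.V)) (Q₀ : Tensor n r) :
    homF (n := n) H E₀ (fun _ => Q₀) = homE H E₀ Q₀ := rfl

lemma master (S : BaseSystem H) (hS : S.Good) {p : ℝ} (hp0 : 0 < p) (hp1 : p ≤ 1)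
    (hn : 0 < n) (Cs : Set (Tensor n r)) (hCs : Cs ⊆ adjSet n r)
    {ε : ℝ} (hε0 : 0 < ε) (hε1 : ε ≤ 1)
    (hdiff : ∀ R ∈ convexHull ℝ Cs, ∀ R' ∈ convexHull ℝ Cs,
      bsDualNorm S H.E p (fun x => R x - R' x) ≤ ε * p)
    {L : ℝ} (hL1 : 1 ≤ L) {Q₀ : Tensor n r} (hQ₀ : Q₀ ∈ convexHull ℝ Cs)
    (hQ₀bnd : ∀ E' ⊆ H.E, E' ≠ H.E →
      homE H E' Q₀ ≤ L * ((n:ℝ) ^ Fintype.card H.V * p ^ E'.card)) :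
    ∀ k : ℕ, ∀ E₀ ⊆ H.E, E₀.card ≤ k →
      (∀ T T' : Finset H.V → Tensor n r, (∀ e' ∈ E₀, T e' ∈ convexHull ℝ Cs) →
        (∀ e' ∈ E₀, T' e' ∈ convexHull ℝ Cs) →
        |homF H E₀ T - homF H E₀ T'|
          ≤ Dc r k * L * ε * ((n:ℝ) ^ Fintype.card H.V * p ^ E₀.card))
      ∧ (E₀ ≠ H.E → ∀ T : Finset H.V → Tensor n r,
        (∀ e' ∈ E₀, T e' ∈ convexHull ℝ Cs) →
        homF H E₀ T ≤ Dc r k * L * ((n:ℝ) ^ Fintype.card H.V * p ^ E₀.card)) := by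
  have hL0 : (0:ℝ) < L := lt_of_lt_of_le one_pos hL1
  have hnR : (0:ℝ) < (n:ℝ) := by exact_mod_cast hn
  have hpowV : (0:ℝ) < (n:ℝ) ^ Fintype.card H.V := by positivity
  intro k
  induction k with
  | zero =>
    intro E₀ hE₀ hcard
    have hE0 : E₀ = ∅ := Finset.card_eq_zero.mp (Nat.le_zero.mp hcard)
    subst hE0
    constructor
    · intro T T' _ _
      rw [homF_empty, homF_empty, sub_self, abs_zero, Dc_zero]
      have : (0:ℝ) ≤ 1 * L * ε * ((n:ℝ) ^ Fintype.card H.V * p ^ (∅ : Finset (Finset H.V)).card) := by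
        positivity
      linarith
    · intro _ T _
      rw [homF_empty, Dc_zero, Finset.card_empty, pow_zero, mul_one, one_mul]
      exact le_mul_of_one_le_left (le_of_lt hpowV) hL1
  | succ k IH =>
    intro E₀ hE₀ hcard
    have hεp : (0:ℝ) ≤ ε * p := le_of_lt (mul_pos hε0 hp0)
    have hcnn : (0:ℝ) ≤ Dc r k * L :=
      mul_nonneg (le_trans zero_le_one (one_le_Dc r k)) (le_of_lt hL0)
    have hBndAll : ∀ F ⊆ E₀, F ≠ E₀ → ∀ U : Finset H.V → Tensor n r,
        (∀ e' ∈ F, U e' ∈ convexHull ℝ Cs) →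
        homF H F U ≤ (Dc r k * L) * ((n:ℝ) ^ Fintype.card H.V * p ^ F.card) := by
      intro F hFE hFne U hU
      have hFlt : F.card < E₀.card :=
        Finset.card_lt_card (Finset.ssubset_iff_subset_ne.mpr ⟨hFE, hFne⟩)
      have hFcard : F.card ≤ k := by omega
      have hFH : F ⊆ H.E := hFE.trans hE₀
      have hFneH : F ≠ H.E := by
        intro hcon
        apply hFne
        refine Finset.Subset.antisymm hFE ?_
        rw [← hcon] at hE₀
        exact hE₀
      exact (IH F hFH hFcard).2 hFneH U hU
    -- central comparison with the exact constant
    set Cc : ℝ := ((k:ℝ)+1) * (1 + 2^r) * Dc r k with hCc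
    have hCcnn : 0 ≤ Cc := by
      rw [hCc]
      have h4 : (0:ℝ) ≤ Dc r k := le_trans zero_le_one (one_le_Dc r k)
      positivity
    have hcmp0 : ∀ T T' : Finset H.V → Tensor n r, (∀ e' ∈ E₀, T e' ∈ convexHull ℝ Cs) →
        (∀ e' ∈ E₀, T' e' ∈ convexHull ℝ Cs) →
        |homF H E₀ T - homF H E₀ T'|
          ≤ Cc * L * ε * ((n:ℝ) ^ Fintype.card H.V * p ^ E₀.card) := by
      intro T T' hT hT'
      have h := compare S hS hp0 hp1 hn hE₀ Cs hCs hεp hdiff hcnn hBndAll T T' hT hT'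
      refine le_trans h ?_
      rcases Nat.eq_zero_or_pos E₀.card with h0 | h1
      · rw [h0]
        push_cast
        rw [zero_mul]
        have h4 : (0:ℝ) ≤ Dc r k := le_trans zero_le_one (one_le_Dc r k)
        positivity
      · have hmm : E₀.card - 1 + 1 = E₀.card := Nat.succ_pred_eq_of_pos h1
        have heq : (E₀.card : ℝ) * ((1 + 2^r) * (Dc r k * L) * (ε * p)
              * ((n:ℝ) ^ Fintype.card H.V * p ^ (E₀.card - 1)))
            = ((E₀.card : ℝ) * (1 + 2^r) * Dc r k) * L * ε
              * ((n:ℝ) ^ Fintype.card H.V * (p ^ (E₀.card - 1) * p)) := by ring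
        rw [heq, ← pow_succ, hmm]
        have hcoeff : (E₀.card : ℝ) * (1 + 2^r) * Dc r k ≤ Cc := by
          rw [hCc]
          have hm : (E₀.card : ℝ) ≤ (k:ℝ) + 1 := by exact_mod_cast hcard
          have h3 : (0:ℝ) ≤ (1 + 2^r) * Dc r k :=
            mul_nonneg (by positivity) (le_trans zero_le_one (one_le_Dc r k))
          calc (E₀.card : ℝ) * (1 + 2^r) * Dc r k
              = (E₀.card : ℝ) * ((1 + 2^r) * Dc r k) := by ring
            _ ≤ ((k:ℝ)+1) * ((1 + 2^r) * Dc r k) := mul_le_mul_of_nonneg_right hm h3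
            _ = ((k:ℝ)+1) * (1 + 2^r) * Dc r k := by ring
        have hrest : (0:ℝ) ≤ L * ε * ((n:ℝ) ^ Fintype.card H.V * p ^ E₀.card) := by
          positivity
        calc ((E₀.card : ℝ) * (1 + 2^r) * Dc r k) * L * ε
              * ((n:ℝ) ^ Fintype.card H.V * p ^ E₀.card)
            = ((E₀.card : ℝ) * (1 + 2^r) * Dc r k)
              * (L * ε * ((n:ℝ) ^ Fintype.card H.V * p ^ E₀.card)) := by ring
          _ ≤ Cc * (L * ε * ((n:ℝ) ^ Fintype.card H.V * p ^ E₀.card)) :=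
              mul_le_mul_of_nonneg_right hcoeff hrest
          _ = Cc * L * ε * ((n:ℝ) ^ Fintype.card H.V * p ^ E₀.card) := by ring
    have hDc1 : Dc r (k+1) = 1 + Cc := by rw [Dc_succ, hCc]
    constructor
    · intro T T' hT hT'
      refine le_trans (hcmp0 T T' hT hT') ?_
      have hrest : (0:ℝ) ≤ L * ε * ((n:ℝ) ^ Fintype.card H.V * p ^ E₀.card) := by positivity
      have hCle : Cc ≤ Dc r (k+1) := by rw [hDc1]; linarith
      calc Cc * L * ε * ((n:ℝ) ^ Fintype.card H.V * p ^ E₀.card)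
          = Cc * (L * ε * ((n:ℝ) ^ Fintype.card H.V * p ^ E₀.card)) := by ring
        _ ≤ Dc r (k+1) * (L * ε * ((n:ℝ) ^ Fintype.card H.V * p ^ E₀.card)) :=
            mul_le_mul_of_nonneg_right hCle hrest
        _ = Dc r (k+1) * L * ε * ((n:ℝ) ^ Fintype.card H.V * p ^ E₀.card) := by ring
    · intro hEne T hT
      have hQ₀T : ∀ e' ∈ E₀, (fun _ : Finset H.V => Q₀) e' ∈ convexHull ℝ Cs :=
        fun _ _ => hQ₀
      have h1 := hcmp0 T (fun _ => Q₀) hT hQ₀T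
      have h2 : homF H E₀ (fun _ => Q₀) ≤ L * ((n:ℝ) ^ Fintype.card H.V * p ^ E₀.card) := by
        rw [homF_const]
        exact hQ₀bnd E₀ hE₀ hEne
      have h3 : homF H E₀ T - homF H E₀ (fun _ => Q₀)
          ≤ |homF H E₀ T - homF H E₀ (fun _ => Q₀)| := le_abs_self _
      set X : ℝ := (n:ℝ) ^ Fintype.card H.V * p ^ E₀.card with hXdef
      have hXnn : (0:ℝ) ≤ X := by rw [hXdef]; positivity
      have h4 : Cc * L * ε * X ≤ Cc * L * X := by
        have : Cc * L * ε * X = (Cc * L * X) * ε := by ring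
        rw [this]
        have hCLX : 0 ≤ Cc * L * X := mul_nonneg (mul_nonneg hCcnn (le_of_lt hL0)) hXnn
        calc (Cc * L * X) * ε ≤ (Cc * L * X) * 1 := mul_le_mul_of_nonneg_left hε1 hCLX
          _ = Cc * L * X := by ring
      have h5 : homF H E₀ T ≤ L * X + Cc * L * X := by
        have := h1
        linarith
      calc homF H E₀ T ≤ L * X + Cc * L * X := h5
        _ = (1 + Cc) * L * X := by ring
        _ = Dc r (k+1) * L * X := by rw [hDc1]
        _ = Dc r (k+1) * L * ((n:ℝ) ^ Fintype.card H.V * p ^ E₀.card) := by rw [hXdef]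

end CL8

lemma homColl_eq {n r : ℕ} {H : RGraph r} (P : {e // e ∈ H.E} → Tensor n r) :
    homColl H P = homF H H.E (fun e' => if h : e' ∈ H.E then P ⟨e', h⟩ else 0) := by
  unfold homColl homF
  refine Finset.sum_congr rfl fun φ _ => ?_
  calc ∏ e : {e // e ∈ H.E}, edgeEval (P e) φ e.1
      = ∏ e ∈ H.E.attach,
          edgeEval ((fun e' => if h : e' ∈ H.E then P ⟨e', h⟩ else 0) e.1) φ e.1 := by
        rw [Finset.univ_eq_attach]
        refine Finset.prod_congr rfl fun e _ => ?_
        congr 1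
        show P e = if h : e.1 ∈ H.E then P ⟨e.1, h⟩ else 0
        rw [dif_pos e.2]
      _ = ∏ e' ∈ H.E, edgeEval ((fun e' => if h : e' ∈ H.E then P ⟨e', h⟩ else 0) e') φ e' :=
        Finset.prod_attach H.E (fun e' =>
          edgeEval ((fun e'' => if h : e'' ∈ H.E then P ⟨e'', h⟩ else 0) e') φ e')

theorem statement2 (r : ℕ) (hr : 2 ≤ r) (H : RGraph r) :
    ∃ C : ℝ, 0 < C ∧
      ∀ n : ℕ, 1 ≤ n → ∀ p : ℝ, 0 < p → p < 1 →
      ∀ S : BaseSystem H, S.Good → ∀ ε : ℝ, 0 < ε → ε ≤ 1 →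
      ∀ Cs : Set (Tensor n r), Cs ⊆ adjSet n r →
      (∀ A₁ ∈ Cs, ∀ A₂ ∈ Cs, bsDualNorm S H.E p (fun x => A₁ x - A₂ x) ≤ ε * p) →
      ∀ L : ℝ, 1 ≤ L → ∀ Q₀ ∈ convexHull ℝ Cs,
      (∀ E' ⊆ H.E, E' ≠ H.E →
        homE H E' Q₀ / ((n : ℝ) ^ Fintype.card H.V * p ^ E'.card) ≤ L) →
      ∀ P Q : {e // e ∈ H.E} → Tensor n r,
      (∀ e, P e ∈ convexHull ℝ Cs) → (∀ e, Q e ∈ convexHull ℝ Cs) →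
      |tpColl H p P - tpColl H p Q| ≤ C * L * ε := by
  classical
  refine ⟨Dc r H.E.card, lt_of_lt_of_le one_pos (one_le_Dc r H.E.card), ?_⟩
  intro n hn p hp0 hp1 S hS ε hε0 hε1 Cs hCs hdiam L hL1 Q₀ hQ₀ hQ₀bnd P Q hP hQ
  have hn0 : 0 < n := hn
  have hnR : (0:ℝ) < (n:ℝ) := by exact_mod_cast hn0
  have hpowV : (0:ℝ) < (n:ℝ) ^ Fintype.card H.V := by positivity
  have hpm : (0:ℝ) < p ^ H.E.card := by positivity
  have hD : (0:ℝ) < (n:ℝ) ^ Fintype.card H.V * p ^ H.E.card := mul_pos hpowV hpm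
  have hεp : (0:ℝ) ≤ ε * p := le_of_lt (mul_pos hε0 hp0)
  have hdiff := bs_diff_le S p ε hεp Cs hdiam
  have hQ₀bnd' : ∀ E' ⊆ H.E, E' ≠ H.E →
      homE H E' Q₀ ≤ L * ((n:ℝ) ^ Fintype.card H.V * p ^ E'.card) := by
    intro E' hE' hne
    have hpos : (0:ℝ) < (n:ℝ) ^ Fintype.card H.V * p ^ E'.card :=
      mul_pos hpowV (by positivity)
    exact (div_le_iff₀ hpos).mp (hQ₀bnd E' hE' hne)
  set extP : Finset H.V → Tensor n r :=
    fun e' => if h : e' ∈ H.E then P ⟨e', h⟩ else 0 with hextP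
  set extQ : Finset H.V → Tensor n r :=
    fun e' => if h : e' ∈ H.E then Q ⟨e', h⟩ else 0 with hextQ
  have hPmem : ∀ e' ∈ H.E, extP e' ∈ convexHull ℝ Cs := by
    intro e' he'
    show (if h : e' ∈ H.E then P ⟨e', h⟩ else 0) ∈ convexHull ℝ Cs
    rw [dif_pos he']
    exact hP _
  have hQmem : ∀ e' ∈ H.E, extQ e' ∈ convexHull ℝ Cs := by
    intro e' he'
    show (if h : e' ∈ H.E then Q ⟨e', h⟩ else 0) ∈ convexHull ℝ Cs
    rw [dif_pos he']
    exact hQ _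
  have hmaster := (master S hS hp0 (le_of_lt hp1) hn0 Cs hCs hε0 hε1 hdiff hL1 hQ₀
    hQ₀bnd' H.E.card H.E subset_rfl le_rfl).1 extP extQ hPmem hQmem
  have hcollP : homColl H P = homF H H.E extP := homColl_eq P
  have hcollQ : homColl H Q = homF H H.E extQ := homColl_eq Q
  unfold tpColl
  rw [div_sub_div_same, abs_div, abs_of_pos hD, div_le_iff₀ hD, hcollP, hcollQ]
  exact hmaster
end
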